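/- arXiv:2202.08389 — 19 statements merged into one kernel-verified Lean document; each statement's English description precedes it below -/
import Mathlib

section
/- Assume ∑_{i=1}^k ℓ_i ≥ ∑_{j=k+1}^n ℓ_j. Then Δ(A) = ⋃_{i=1}^k Δ_i, i.e. the convex hull of {0, a_1, …, a_n} is the union over i ∈ {1,…,k} of the convex hulls of {0} ∪ {a_μ : μ ≠ i}. (Lemma 2.2.) -/
lemma aux_extract {n d : ℕ} (aR : Fin n → Fin d → ℝ) {x : Fin d → ℝ}
    (hx : x ∈ convexHull ℝ ({0} ∪ Set.range aR)) :
    ∃ c : Fin n → ℝ, (∀ μ, 0 ≤ c μ) ∧ (∑ μ, c μ) ≤ 1 ∧ x = ∑ μ, c μ • aR μ := by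
  classical
  have key : convexHull ℝ ({0} ∪ Set.range aR) ⊆
      {x | ∃ c : Fin n → ℝ, (∀ μ, 0 ≤ c μ) ∧ (∑ μ, c μ) ≤ 1 ∧ x = ∑ μ, c μ • aR μ} := by
    apply convexHull_min
    · rintro y (hy | ⟨μ₀, rfl⟩)
      · refine ⟨0, fun μ => le_refl 0, by simp, ?_⟩
        simp at hy; simp [hy]
      · refine ⟨fun μ => if μ = μ₀ then 1 else 0, fun μ => by by_cases h : μ = μ₀ <;> simp [h], by simp, ?_⟩
        simp [ite_smul]
    · rintro x ⟨cx, hx0, hx1, rfl⟩ y ⟨cy, hy0, hy1, rfl⟩ s t hs ht hst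
      refine ⟨fun μ => s * cx μ + t * cy μ,
        fun μ => add_nonneg (mul_nonneg hs (hx0 μ)) (mul_nonneg ht (hy0 μ)), ?_, ?_⟩
      · have h1 : ∑ μ, (s * cx μ + t * cy μ) = s * (∑ μ, cx μ) + t * (∑ μ, cy μ) := by
          rw [Finset.sum_add_distrib, ← Finset.mul_sum, ← Finset.mul_sum]
        rw [h1]
        nlinarith
      · rw [Finset.smul_sum, Finset.smul_sum, ← Finset.sum_add_distrib]
        refine Finset.sum_congr rfl fun μ _ => ?_
        simp [add_smul, smul_smul]
  exact key hx

lemma aux_mem {n d : ℕ} (aR : Fin n → Fin d → ℝ) (S : Set (Fin n)) (c : Fin n → ℝ)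
    (hc0 : ∀ μ, 0 ≤ c μ) (hc1 : (∑ μ, c μ) ≤ 1) (hcS : ∀ μ, μ ∉ S → c μ = 0) :
    (∑ μ, c μ • aR μ) ∈ convexHull ℝ ({0} ∪ aR '' S) := by
  classical
  set w : Option (Fin n) → ℝ := fun o => o.elim (1 - ∑ μ, c μ) c with hw
  set z : Option (Fin n) → (Fin d → ℝ) :=
    fun o => o.elim 0 (fun μ => if μ ∈ S then aR μ else 0) with hz
  have hw0 : ∀ o ∈ Finset.univ, 0 ≤ w o := by
    rintro (_ | μ) _
    · simpa [hw] using hc1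
    · exact hc0 μ
  have hwsum : ∑ o, w o = 1 := by
    rw [Fintype.sum_option]
    simp [hw]
  have hzmem : ∀ o ∈ Finset.univ, z o ∈ ({0} ∪ aR '' S : Set (Fin d → ℝ)) := by
    rintro (_ | μ) _
    · exact Or.inl rfl
    · by_cases h : μ ∈ S
      · exact Or.inr ⟨μ, h, by simp [hz, h]⟩
      · exact Or.inl (by simp [hz, h])
  have hmem := Finset.centerMass_mem_convexHull Finset.univ hw0
    (by rw [hwsum]; norm_num) hzmem
  rw [Finset.centerMass_eq_of_sum_1 _ _ hwsum] at hmem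
  have heq : (∑ o, w o • z o) = ∑ μ, c μ • aR μ := by
    rw [Fintype.sum_option]
    have h0 : (w none • z none : Fin d → ℝ) = 0 := by simp [hw, hz]
    rw [h0, zero_add]
    refine Finset.sum_congr rfl fun μ _ => ?_
    by_cases h : μ ∈ S
    · simp [hw, hz, h]
    · simp [hw, hz, h, hcS μ h]
  rwa [heq] at hmem

/-- Lemma 2.2: if ∑_{i≤k} ℓ_i ≥ ∑_{j>k} ℓ_j then Δ(A) = ⋃_{i=1}^k Δ_i. -/
theorem stmt_0 (d n k : ℕ) (hd : 1 ≤ d) (hn : 2 ≤ n) (hk1 : 1 ≤ k) (hkn : k ≤ n)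
    (a : Fin n → Fin d → ℤ)
    (aR : Fin n → Fin d → ℝ) (haR : ∀ μ i, aR μ i = (a μ i : ℝ))
    (hdim : Module.finrank ℝ (Submodule.span ℝ (Set.range aR)) = n - 1)
    (hindep : ∀ μ₀ : Fin n,
      LinearIndependent ℝ (fun ν : {ν : Fin n // ν ≠ μ₀} => aR ν.1))
    (ℓ : Fin n → ℤ) (hℓpos : ∀ μ, 0 < ℓ μ)
    (ℓs : Fin n → ℤ) (hℓs : ∀ μ : Fin n, ℓs μ = if (μ : ℕ) < k then ℓ μ else -ℓ μ)
    (hlat : ∀ l : Fin n → ℤ, (∑ μ, l μ • a μ) = 0 ↔ ∃ z : ℤ, l = z • ℓs)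
    (hge : ∑ μ ∈ Finset.univ.filter (fun μ : Fin n => (μ : ℕ) < k), ℓ μ ≥
           ∑ μ ∈ Finset.univ.filter (fun μ : Fin n => ¬ (μ : ℕ) < k), ℓ μ) :
    convexHull ℝ ({0} ∪ Set.range aR) =
      ⋃ i : {i : Fin n // (i : ℕ) < k},
        convexHull ℝ ({0} ∪ aR '' {ν : Fin n | ν ≠ i.1}) := by
  classical
  -- the linear relation over ℝ
  have hrel : (∑ μ, ℓs μ • a μ) = 0 := (hlat ℓs).2 ⟨1, (one_smul _ _).symm⟩
  have hrelR : (∑ μ, (ℓs μ : ℝ) • aR μ) = 0 := by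
    funext i
    have h := congrFun hrel i
    simp only [Finset.sum_apply, Pi.smul_apply, Pi.zero_apply, smul_eq_mul] at h ⊢
    simp only [haR]
    exact_mod_cast congrArg (fun z : ℤ => (z : ℝ)) h
  have hsumℓs : (0:ℤ) ≤ ∑ μ, ℓs μ := by
    have hsplit : ∑ μ, ℓs μ =
        (∑ μ ∈ Finset.univ.filter (fun μ : Fin n => (μ : ℕ) < k), ℓ μ) -
        (∑ μ ∈ Finset.univ.filter (fun μ : Fin n => ¬ (μ : ℕ) < k), ℓ μ) := by
      rw [← Finset.sum_filter_add_sum_filter_not Finset.univ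
        (fun μ : Fin n => (μ : ℕ) < k) ℓs]
      have e1 : ∑ μ ∈ Finset.univ.filter (fun μ : Fin n => (μ : ℕ) < k), ℓs μ =
          ∑ μ ∈ Finset.univ.filter (fun μ : Fin n => (μ : ℕ) < k), ℓ μ :=
        Finset.sum_congr rfl fun μ hμ => by
          rw [hℓs]; simp [(Finset.mem_filter.1 hμ).2]
      have e2 : ∑ μ ∈ Finset.univ.filter (fun μ : Fin n => ¬ (μ : ℕ) < k), ℓs μ =
          -∑ μ ∈ Finset.univ.filter (fun μ : Fin n => ¬ (μ : ℕ) < k), ℓ μ := by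
        rw [← Finset.sum_neg_distrib]
        exact Finset.sum_congr rfl fun μ hμ => by
          rw [hℓs]; simp [(Finset.mem_filter.1 hμ).2]
      rw [e1, e2]; ring
    rw [hsplit]
    omega
  apply Set.Subset.antisymm
  · intro x hx
    obtain ⟨c, hc0, hc1, rfl⟩ := aux_extract aR hx
    have hne : (Finset.univ.filter (fun μ : Fin n => (μ : ℕ) < k)).Nonempty :=
      ⟨⟨0, by omega⟩, by simp; omega⟩
    obtain ⟨i, hiI, hmin⟩ :=
      Finset.exists_min_image _ (fun μ : Fin n => c μ / (ℓ μ : ℝ)) hne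
    have hik : (i : ℕ) < k := by simpa using hiI
    have hℓR : ∀ μ, (0:ℝ) < (ℓ μ : ℝ) := fun μ => by exact_mod_cast hℓpos μ
    set t : ℝ := c i / (ℓ i : ℝ) with ht
    have ht0 : 0 ≤ t := div_nonneg (hc0 i) (hℓR i).le
    set c' : Fin n → ℝ := fun μ => c μ - t * (ℓs μ : ℝ) with hc'
    have hc'0 : ∀ μ, 0 ≤ c' μ := by
      intro μ
      by_cases h : (μ : ℕ) < k
      · have hmμ := hmin μ (by simp [h])
        have hh : ℓs μ = ℓ μ := by rw [hℓs]; simp [h]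
        simp only [hc', hh]
        rw [div_le_div_iff₀ (hℓR i) (hℓR μ)] at hmμ
        rw [sub_nonneg, ht, div_mul_eq_mul_div, div_le_iff₀ (hℓR i)]
        linarith
      · have hh : ℓs μ = -ℓ μ := by rw [hℓs]; simp [h]
        simp only [hc', hh]
        push_cast
        nlinarith [hc0 μ, mul_nonneg ht0 (hℓR μ).le]
    have hc'i : c' i = 0 := by
      have hh : ℓs i = ℓ i := by rw [hℓs]; simp [hik]
      simp only [hc', hh, ht]
      rw [div_mul_cancel₀ _ (hℓR i).ne', sub_self]
    have hc'1 : (∑ μ, c' μ) ≤ 1 := by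
      have h1 : ∑ μ, c' μ = (∑ μ, c μ) - t * ∑ μ, (ℓs μ : ℝ) := by
        simp only [hc']
        rw [Finset.sum_sub_distrib, Finset.mul_sum]
      have h2 : (0:ℝ) ≤ ∑ μ, (ℓs μ : ℝ) := by
        have : ((∑ μ, ℓs μ : ℤ) : ℝ) = ∑ μ, (ℓs μ : ℝ) := by push_cast; rfl
        rw [← this]
        exact_mod_cast hsumℓs
      rw [h1]
      nlinarith [mul_nonneg ht0 h2]
    have hxeq : (∑ μ, c μ • aR μ) = ∑ μ, c' μ • aR μ := by
      have hstep : ∑ μ, c' μ • aR μ =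
          (∑ μ, c μ • aR μ) - t • ∑ μ, (ℓs μ : ℝ) • aR μ := by
        rw [Finset.smul_sum, ← Finset.sum_sub_distrib]
        refine Finset.sum_congr rfl fun μ _ => ?_
        simp [hc', sub_smul, smul_smul]
      rw [hstep, hrelR, smul_zero, sub_zero]
    rw [hxeq]
    refine Set.mem_iUnion.2 ⟨⟨i, hik⟩, ?_⟩
    refine aux_mem aR _ c' hc'0 hc'1 fun μ hμ => ?_
    have : μ = i := by simpa using hμ
    rw [this]; exact hc'i
  · refine Set.iUnion_subset fun i => convexHull_mono ?_
    exact Set.union_subset_union subset_rfl (Set.image_subset_range aR _)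
end

section
/- Assume ∑_{i=1}^k ℓ_i ≥ ∑_{j=k+1}^n ℓ_j. Then for every nonempty subset I ⊆ {1,…,k} one has ⋂_{i∈I} Δ_i = Δ_I, i.e. the intersection of the convex hulls of {0} ∪ {a_μ : μ ≠ i} over i ∈ I equals the convex hull of {0} ∪ {a_μ : μ ∉ I}. (Lemma 2.5.) -/
open Finset

/-- Membership in the convex hull of `{0} ∪ aR '' S` is equivalent to having a
nonnegative coefficient representation supported on `S` with total weight ≤ 1. -/
lemma hull_char {d n : ℕ} (aR : Fin n → Fin d → ℝ) (S : Set (Fin n)) (x : Fin d → ℝ) :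
    x ∈ convexHull ℝ ({0} ∪ aR '' S) ↔
      ∃ c : Fin n → ℝ, (∀ μ, 0 ≤ c μ) ∧ (∀ μ, μ ∉ S → c μ = 0) ∧
        (∑ μ, c μ) ≤ 1 ∧ x = ∑ μ, c μ • aR μ := by
  classical
  constructor
  · intro hx
    have hsub : convexHull ℝ ({0} ∪ aR '' S) ⊆
        {y : Fin d → ℝ | ∃ c : Fin n → ℝ, (∀ μ, 0 ≤ c μ) ∧ (∀ μ, μ ∉ S → c μ = 0) ∧
          (∑ μ, c μ) ≤ 1 ∧ y = ∑ μ, c μ • aR μ} := by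
      apply convexHull_min
      · rintro y (hy | ⟨μ, hμ, rfl⟩)
        · refine ⟨0, fun _ => le_rfl, fun _ _ => rfl, by simp, ?_⟩
          simp only [Set.mem_singleton_iff] at hy
          simp [hy]
        · refine ⟨fun ν => if ν = μ then 1 else 0, ?_, ?_, ?_, ?_⟩
          · intro ν; dsimp only; split <;> norm_num
          · intro ν hν
            dsimp only; rw [if_neg]; rintro rfl; exact hν hμ
          · simp
          · dsimp only
            simp [ite_smul]
      · rintro y ⟨c, hc0, hcz, hcs, rfl⟩ z ⟨e, he0, hez, hes, rfl⟩ p q hp hq hpq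
        refine ⟨fun μ => p * c μ + q * e μ, ?_, ?_, ?_, ?_⟩
        · intro μ; dsimp only
          have := mul_nonneg hp (hc0 μ); have := mul_nonneg hq (he0 μ); linarith
        · intro μ hμ; dsimp only; rw [hcz μ hμ, hez μ hμ]; ring
        · dsimp only
          rw [Finset.sum_add_distrib, ← Finset.mul_sum, ← Finset.mul_sum]
          nlinarith [Finset.sum_nonneg fun μ (_ : μ ∈ Finset.univ) => hc0 μ,
            Finset.sum_nonneg fun μ (_ : μ ∈ Finset.univ) => he0 μ]
        · rw [Finset.smul_sum, Finset.smul_sum, ← Finset.sum_add_distrib]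
          exact Finset.sum_congr rfl fun μ _ => by
            rw [add_smul, mul_smul, mul_smul]
    exact hsub hx
  · rintro ⟨c, hc0, hcz, hcs, rfl⟩
    set F : Finset (Fin n) := Finset.univ.filter (fun μ => μ ∈ S) with hF
    have hxF : (∑ μ, c μ • aR μ) = ∑ μ ∈ F, c μ • aR μ := by
      symm
      apply Finset.sum_filter_of_ne
      intro μ _ hne
      by_contra hμ
      exact hne (by rw [hcz μ hμ, zero_smul])
    have hFs : ∑ μ ∈ F, c μ ≤ 1 := by
      refine le_trans ?_ hcs
      exact Finset.sum_le_sum_of_subset_of_nonneg (Finset.filter_subset _ _)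
        fun μ _ _ => hc0 μ
    have hFs0 : (0:ℝ) ≤ ∑ μ ∈ F, c μ := Finset.sum_nonneg fun μ _ => hc0 μ
    rw [hxF]
    have hconv : Convex ℝ (convexHull ℝ ({0} ∪ aR '' S)) := convex_convexHull ℝ _
    have h0mem : (0 : Fin d → ℝ) ∈ convexHull ℝ ({0} ∪ aR '' S) :=
      subset_convexHull ℝ _ (Or.inl rfl)
    have key : ((1 - ∑ μ ∈ F, c μ) • (0 : Fin d → ℝ) + ∑ μ ∈ F, c μ • aR μ)
        ∈ convexHull ℝ ({0} ∪ aR '' S) := by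
      have := hconv.sum_mem (t := Finset.insertNone F)
        (w := fun o => o.elim (1 - ∑ μ ∈ F, c μ) c)
        (z := fun o => o.elim 0 aR) ?_ ?_ ?_
      · simpa [Finset.sum_insertNone] using this
      · rintro (_ | μ) ho
        · simpa using hFs
        · exact hc0 μ
      · rw [Finset.sum_insertNone]; simp
      · rintro (_ | μ) ho
        · exact h0mem
        · refine subset_convexHull ℝ _ (Or.inr ?_)
          refine Set.mem_image_of_mem aR ?_
          have : μ ∈ F := by simpa [Finset.mem_insertNone] using ho
          simpa [hF] using this
    simpa using key

/-- Lemma 2.5: if ∑_{i≤k} ℓ_i ≥ ∑_{j>k} ℓ_j then ⋂_{i∈I} Δ_i = Δ_I for nonempty I ⊆ {1,…,k}. -/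
theorem stmt_1 (d n k : ℕ) (hd : 1 ≤ d) (hn : 2 ≤ n) (hk1 : 1 ≤ k) (hkn : k ≤ n)
    (a : Fin n → Fin d → ℤ)
    (aR : Fin n → Fin d → ℝ) (haR : ∀ μ i, aR μ i = (a μ i : ℝ))
    (hdim : Module.finrank ℝ (Submodule.span ℝ (Set.range aR)) = n - 1)
    (hindep : ∀ μ₀ : Fin n,
      LinearIndependent ℝ (fun ν : {ν : Fin n // ν ≠ μ₀} => aR ν.1))
    (ℓ : Fin n → ℤ) (hℓpos : ∀ μ, 0 < ℓ μ)
    (ℓs : Fin n → ℤ) (hℓs : ∀ μ : Fin n, ℓs μ = if (μ : ℕ) < k then ℓ μ else -ℓ μ)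
    (hlat : ∀ l : Fin n → ℤ, (∑ μ, l μ • a μ) = 0 ↔ ∃ z : ℤ, l = z • ℓs)
    (hge : ∑ μ ∈ Finset.univ.filter (fun μ : Fin n => (μ : ℕ) < k), ℓ μ ≥
           ∑ μ ∈ Finset.univ.filter (fun μ : Fin n => ¬ (μ : ℕ) < k), ℓ μ)
    (I : Set (Fin n)) (hIne : I.Nonempty) (hIk : ∀ i ∈ I, (i : ℕ) < k) :
    (⋂ i ∈ I, convexHull ℝ ({0} ∪ aR '' {ν : Fin n | ν ≠ i})) =
      convexHull ℝ ({0} ∪ aR '' {ν : Fin n | ν ∉ I}) := by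
  classical
  -- the integer relation, transported to ℝ
  have hrelZ : (∑ μ, ℓs μ • a μ) = 0 := (hlat ℓs).mpr ⟨1, (one_smul _ _).symm⟩
  have hrel : (∑ μ, ((ℓs μ : ℝ)) • aR μ) = 0 := by
    funext i
    have h := congrFun hrelZ i
    simp only [Finset.sum_apply, Pi.smul_apply, smul_eq_mul, Pi.zero_apply] at h ⊢
    have : ∑ μ, (ℓs μ : ℝ) * aR μ i = ((∑ μ, ℓs μ * a μ i : ℤ) : ℝ) := by
      push_cast
      exact Finset.sum_congr rfl fun μ _ => by rw [haR]
    rw [this, h, Int.cast_zero]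
  have hℓsne : ∀ μ, (ℓs μ : ℝ) ≠ 0 := by
    intro μ
    have : ℓs μ ≠ 0 := by
      rw [hℓs]; split
      · exact (hℓpos μ).ne'
      · exact neg_ne_zero.mpr (hℓpos μ).ne'
    exact_mod_cast this
  -- uniqueness of relations: every real relation is a multiple of ℓs
  have huniq : ∀ r : Fin n → ℝ, (∑ μ, r μ • aR μ) = 0 → ∀ μ₀ μ : Fin n,
      r μ = r μ₀ / (ℓs μ₀ : ℝ) * (ℓs μ : ℝ) := by
    intro r hr μ₀ μ
    set s : ℝ := r μ₀ / (ℓs μ₀ : ℝ) with hs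
    set q : Fin n → ℝ := fun ν => r ν - s * (ℓs ν : ℝ) with hq
    have hq0 : q μ₀ = 0 := by
      simp only [hq, hs]
      rw [div_mul_cancel₀ _ (hℓsne μ₀)]
      ring
    have hqsum : (∑ ν, q ν • aR ν) = 0 := by
      have : (∑ ν, q ν • aR ν)
          = (∑ ν, r ν • aR ν) - s • ∑ ν, ((ℓs ν : ℝ)) • aR ν := by
        rw [Finset.smul_sum, ← Finset.sum_sub_distrib]
        exact Finset.sum_congr rfl fun ν _ => by rw [sub_smul, smul_smul]
      rw [this, hr, hrel, smul_zero, sub_zero]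
    have hqall : ∀ ν, q ν = 0 := by
      have hfil : (∑ ν ∈ Finset.univ.filter (fun ν => ν ≠ μ₀), q ν • aR ν) = 0 := by
        rw [Finset.sum_filter_of_ne (fun ν _ hne => ?_), hqsum]
        intro h
        exact hne (by rw [h, hq0, zero_smul])
      have hsub : (∑ ν : {ν : Fin n // ν ≠ μ₀}, q ν.1 • aR ν.1) = 0 := by
        rw [← Finset.sum_subtype (Finset.univ.filter (fun ν => ν ≠ μ₀))
          (fun ν => by simp) (fun ν => q ν • aR ν)]
        exact hfil
      have := Fintype.linearIndependent_iff.mp (hindep μ₀) (fun ν => q ν.1) hsub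
      intro ν
      by_cases hν : ν = μ₀
      · rw [hν]; exact hq0
      · exact this ⟨ν, hν⟩
    have := hqall μ
    simp only [hq, sub_eq_zero] at this
    rw [this]
  -- prove the two inclusions
  apply Set.eq_of_subset_of_subset
  · intro x hx
    rw [Set.mem_iInter₂] at hx
    obtain ⟨i₀, hi₀⟩ := hIne
    obtain ⟨c, hc0, hcz, hcs, hcx⟩ := (hull_char aR _ x).mp (hx i₀ hi₀)
    -- choose i* in I minimizing t i = -(c i)/ℓ i
    set t : Fin n → ℝ := fun i => -(c i) / (ℓ i : ℝ) with ht
    set J : Finset (Fin n) := Finset.univ.filter (fun i => i ∈ I) with hJ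
    have hJne : J.Nonempty := ⟨i₀, by simp [hJ, hi₀]⟩
    obtain ⟨istar, histar, hmin⟩ := Finset.exists_min_image J t hJne
    have histarI : istar ∈ I := by simpa [hJ] using histar
    obtain ⟨e, he0, hez, hes, hex⟩ := (hull_char aR _ x).mp (hx istar histarI)
    have heistar : e istar = 0 := hez istar (by simp)
    -- e - c is a relation
    have hecrel : (∑ μ, (e μ - c μ) • aR μ) = 0 := by
      have : (∑ μ, (e μ - c μ) • aR μ)
          = (∑ μ, e μ • aR μ) - (∑ μ, c μ • aR μ) := by
        rw [← Finset.sum_sub_distrib]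
        exact Finset.sum_congr rfl fun μ _ => (sub_smul _ _ _)
      rw [this, ← hex, ← hcx, sub_self]
    have hec := huniq (fun μ => e μ - c μ) hecrel istar
    have hℓreal : ∀ i ∈ I, ((ℓs i : ℝ)) = (ℓ i : ℝ) := by
      intro i hi
      rw [hℓs, if_pos (hIk i hi)]
    have hℓposR : ∀ i ∈ I, (0:ℝ) < (ℓ i : ℝ) := by
      intro i hi; exact_mod_cast hℓpos i
    -- e i = 0 for all i ∈ I
    have heI : ∀ i ∈ I, e i = 0 := by
      intro i hi
      have h1 : e i - c i = t istar * (ℓ i : ℝ) := by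
        have := hec i
        rw [heistar, zero_sub, hℓreal istar histarI, hℓreal i hi] at this
        rw [this, ht]
      have h2 : t istar ≤ t i := hmin i (by simp [hJ, hi])
      have h3 : t i * (ℓ i : ℝ) = -(c i) := by
        rw [ht]
        exact div_mul_cancel₀ _ (hℓposR i hi).ne'
      have h4 : e i ≤ 0 := by
        have := mul_le_mul_of_nonneg_right h2 (hℓposR i hi).le
        rw [h3] at this
        linarith [h1, this]
      exact le_antisymm h4 (he0 i)
    refine (hull_char aR _ x).mpr ⟨e, he0, ?_, hes, hex⟩
    intro μ hμ
    have hμI : μ ∈ I := by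
      by_contra hc
      exact hμ hc
    exact heI μ hμI
  · intro x hx
    rw [Set.mem_iInter₂]
    intro i hi
    refine convexHull_mono ?_ hx
    apply Set.union_subset_union_right
    apply Set.image_mono
    intro ν hν
    simp only [Set.mem_setOf_eq] at hν ⊢
    rintro rfl
    exact hν hi
end

section
/- For every i ∈ {1,…,k}, the subgroup of ℤ^d generated by {a_μ : μ ∈ {1,…,n}, μ ≠ i} has index exactly ℓ_i in the subgroup ℤA of ℤ^d generated by a_1, …, a_n. (Equation (2.11), the content of Lemma 2.10 on the normalized volume of Δ_i.) -/
/-- Lemma 2.10 / Equation (2.11): the subgroup of ℤ^d generated by the a_μ with μ ≠ i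
has index ℓ_i in ℤA, for each i ∈ {1,…,k}. -/
theorem stmt_2 (d n k : ℕ) (hd : 1 ≤ d) (hn : 2 ≤ n) (hk1 : 1 ≤ k) (hkn : k ≤ n)
    (a : Fin n → Fin d → ℤ)
    (aR : Fin n → Fin d → ℝ) (haR : ∀ μ i, aR μ i = (a μ i : ℝ))
    (hdim : Module.finrank ℝ (Submodule.span ℝ (Set.range aR)) = n - 1)
    (hindep : ∀ μ₀ : Fin n,
      LinearIndependent ℝ (fun ν : {ν : Fin n // ν ≠ μ₀} => aR ν.1))
    (ℓ : Fin n → ℤ) (hℓpos : ∀ μ, 0 < ℓ μ)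
    (ℓs : Fin n → ℤ) (hℓs : ∀ μ : Fin n, ℓs μ = if (μ : ℕ) < k then ℓ μ else -ℓ μ)
    (hlat : ∀ l : Fin n → ℤ, (∑ μ, l μ • a μ) = 0 ↔ ∃ z : ℤ, l = z • ℓs)
    (i : Fin n) (hik : (i : ℕ) < k) :
    ((AddSubgroup.closure (a '' {ν : Fin n | ν ≠ i})).relIndex
        (AddSubgroup.closure (Set.range a)) : ℤ) = ℓ i := by
  set B : AddSubgroup (Fin d → ℤ) := AddSubgroup.closure (a '' {ν : Fin n | ν ≠ i}) with hB
  set A : AddSubgroup (Fin d → ℤ) := AddSubgroup.closure (Set.range a) with hA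
  have hℓsi : ℓs i = ℓ i := by rw [hℓs]; simp [hik]
  -- key: z • a i ∈ B ↔ ℓ i ∣ z
  have key : ∀ z : ℤ, z • a i ∈ B ↔ ℓ i ∣ z := by
    intro z
    constructor
    · intro hz
      -- rewrite B membership via span
      have hspan : z • a i ∈ Submodule.span ℤ (a '' {ν : Fin n | ν ≠ i}) := by
        rwa [← Submodule.mem_toAddSubgroup, Submodule.span_int_eq_addSubgroupClosure]
      rw [Set.image_eq_range] at hspan
      rw [Submodule.mem_span_range_iff_exists_fun] at hspan
      obtain ⟨c, hc⟩ := hspan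
      set l : Fin n → ℤ := fun μ => if h : μ = i then z else -c ⟨μ, h⟩ with hl
      have hrel : (∑ μ, l μ • a μ) = 0 := by
        rw [Fintype.sum_eq_add_sum_compl i]
        have h1 : l i = z := by simp [hl]
        have h2 : ∑ μ ∈ ({i}ᶜ : Finset (Fin n)), l μ • a μ = -(z • a i) := by
          calc ∑ μ ∈ ({i}ᶜ : Finset (Fin n)), l μ • a μ
              = ∑ x : ↑{ν : Fin n | ν ≠ i}, l x.1 • a x.1 :=
                Finset.sum_subtype _ (fun x => by simp) _
            _ = ∑ x : ↑{ν : Fin n | ν ≠ i}, -(c x • a x.1) := by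
                refine Finset.sum_congr rfl fun x _ => ?_
                have hx : (x : Fin n) ≠ i := x.2
                simp only [hl, dif_neg hx, neg_smul, Subtype.coe_eta]
            _ = -(z • a i) := by rw [← hc, Finset.sum_neg_distrib]
        rw [h1, h2, add_neg_cancel]
      obtain ⟨z', hz'⟩ := (hlat l).mp hrel
      have : z = z' * ℓ i := by
        have := congrFun hz' i
        simpa [hl, hℓsi, mul_comm] using this
      exact ⟨z', by rw [this, mul_comm]⟩
    · rintro ⟨c, rfl⟩
      have hrel : (∑ μ, ℓs μ • a μ) = 0 := (hlat ℓs).mpr ⟨1, by simp⟩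
      have hmem : (ℓ i) • a i ∈ B := by
        have : (ℓ i) • a i = -(∑ μ ∈ {i}ᶜ, ℓs μ • a μ) := by
          rw [Fintype.sum_eq_add_sum_compl i, hℓsi] at hrel
          linear_combination (norm := module) hrel
        rw [this]
        refine neg_mem (AddSubgroup.sum_mem _ ?_)
        intro μ hμ
        refine zsmul_mem (AddSubgroup.subset_closure ?_) _
        exact ⟨μ, by simpa using hμ, rfl⟩
      have : (ℓ i * c) • a i = c • ((ℓ i) • a i) := by
        rw [smul_smul, mul_comm]
      rw [this]
      exact zsmul_mem hmem c
  -- quotient map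
  set q : (Fin d → ℤ) →+ (Fin d → ℤ) ⧸ B := QuotientAddGroup.mk' B with hq
  have hkerq : q.ker = B := QuotientAddGroup.ker_mk' B
  have hrel : B.relIndex A = Nat.card (A.map q) := by
    have h := AddSubgroup.relIndex_ker (K := A) (f := q)
    rwa [hkerq] at h
  set x : (Fin d → ℤ) ⧸ B := q (a i) with hx
  have hmap : A.map q = AddSubgroup.zmultiples x := by
    apply le_antisymm
    · rw [hA, AddSubgroup.map_le_iff_le_comap, AddSubgroup.closure_le]
      rintro _ ⟨μ, rfl⟩
      by_cases hμ : μ = i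
      · subst hμ
        exact AddSubgroup.mem_zmultiples x
      · have : a μ ∈ B := AddSubgroup.subset_closure ⟨μ, hμ, rfl⟩
        have hq0 : q (a μ) = 0 := by
          rwa [← AddMonoidHom.mem_ker, hkerq]
        simp only [SetLike.mem_coe, AddSubgroup.mem_comap, hq0]
        exact zero_mem _
    · intro y hy
      obtain ⟨z, rfl⟩ := AddSubgroup.mem_zmultiples_iff.mp hy
      refine AddSubgroup.mem_map.mpr ⟨z • a i, ?_, map_zsmul q z (a i)⟩
      exact zsmul_mem (AddSubgroup.subset_closure (Set.mem_range_self i)) z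
  have hcard : Nat.card (AddSubgroup.zmultiples x) = addOrderOf x := Nat.card_zmultiples x
  have hzx : ∀ z : ℤ, z • x = 0 ↔ ℓ i ∣ z := by
    intro z
    rw [hx, ← map_zsmul, ← AddMonoidHom.mem_ker, hkerq]
    exact key z
  have hord : addOrderOf x = (ℓ i).toNat := by
    have hpos : 0 < (ℓ i).toNat := by
      have := hℓpos i; omega
    rw [addOrderOf_eq_iff hpos]
    constructor
    · have : ((ℓ i).toNat : ℤ) • x = 0 := (hzx _).mpr ⟨1, by simp [Int.toNat_of_nonneg (hℓpos i).le]⟩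
      rwa [natCast_zsmul] at this
    · intro m hm hm0 hcon
      have : (m : ℤ) • x = 0 := by rwa [natCast_zsmul]
      have := (hzx _).mp this
      have := Int.le_of_dvd (by exact_mod_cast hm0) this
      omega
  rw [hrel, hmap, hcard, hord, Int.toNat_of_nonneg (hℓpos i).le]
end

section
/- Let i ∈ {1,…,k} and j ∈ {k+1,…,n}, and let h : ℝ^d → ℝ be a linear functional such that h(a_μ) = 0 for every μ ∈ {1,…,n} with μ ∉ {i, j}, and such that h does not vanish identically on the ℝ-span V of a_1,…,a_n. Then h(a_i)·h(a_j) > 0; in particular a_i and a_j lie strictly on the same side of the hyperplane ker h. (The key assertion of Lemma 2.12: the hyperplanes H_{ij} with i ≤ k < j support the facets of Δ(A) through the origin.) -/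
/-- Lemma 2.12 (first assertion): for i ≤ k < j, a linear functional vanishing on all
a_μ with μ ∉ {i,j} but not identically on V takes values of the same strict sign at
a_i and a_j. -/
theorem stmt_3 (d n k : ℕ) (hd : 1 ≤ d) (hn : 2 ≤ n) (hk1 : 1 ≤ k) (hkn : k ≤ n)
    (a : Fin n → Fin d → ℤ)
    (aR : Fin n → Fin d → ℝ) (haR : ∀ μ i, aR μ i = (a μ i : ℝ))
    (hdim : Module.finrank ℝ (Submodule.span ℝ (Set.range aR)) = n - 1)
    (hindep : ∀ μ₀ : Fin n,
      LinearIndependent ℝ (fun ν : {ν : Fin n // ν ≠ μ₀} => aR ν.1))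
    (ℓ : Fin n → ℤ) (hℓpos : ∀ μ, 0 < ℓ μ)
    (ℓs : Fin n → ℤ) (hℓs : ∀ μ : Fin n, ℓs μ = if (μ : ℕ) < k then ℓ μ else -ℓ μ)
    (hlat : ∀ l : Fin n → ℤ, (∑ μ, l μ • a μ) = 0 ↔ ∃ z : ℤ, l = z • ℓs)
    (i j : Fin n) (hik : (i : ℕ) < k) (hjk : k ≤ (j : ℕ))
    (h : (Fin d → ℝ) →ₗ[ℝ] ℝ)
    (hvanish : ∀ μ : Fin n, μ ≠ i → μ ≠ j → h (aR μ) = 0)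
    (hnontriv : ∃ x ∈ Submodule.span ℝ (Set.range aR), h x ≠ 0) :
    0 < h (aR i) * h (aR j) := by
  have hij : i ≠ j := by
    intro e; rw [e] at hik; omega
  -- integer relation
  have hrel : (∑ μ, ℓs μ • a μ) = 0 := (hlat ℓs).2 ⟨1, by simp⟩
  -- real relation
  have hrelR : (∑ μ, (ℓs μ : ℝ) • aR μ) = 0 := by
    funext x
    have := congrFun hrel x
    simp only [Finset.sum_apply, Pi.smul_apply, Pi.zero_apply, smul_eq_mul] at this ⊢
    have : ((∑ μ, ℓs μ * a μ x : ℤ) : ℝ) = 0 := by rw [this]; simp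
    push_cast at this
    simpa [haR] using this
  -- apply h
  have hsum : (∑ μ, (ℓs μ : ℝ) * h (aR μ)) = 0 := by
    have := congrArg h hrelR
    simpa [map_sum, map_smul] using this
  have hkey : (ℓs i : ℝ) * h (aR i) + (ℓs j : ℝ) * h (aR j) = 0 := by
    rw [← hsum]
    rw [← Finset.sum_subset (Finset.subset_univ ({i, j} : Finset (Fin n)))]
    · rw [Finset.sum_pair hij]
    · intro μ _ hμ
      simp only [Finset.mem_insert, Finset.mem_singleton, not_or] at hμ
      rw [hvanish μ hμ.1 hμ.2, mul_zero]
  have hsi : ℓs i = ℓ i := by rw [hℓs]; simp [hik]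
  have hsj : ℓs j = -ℓ j := by rw [hℓs]; simp [Nat.not_lt.2 hjk]
  rw [hsi, hsj] at hkey
  push_cast at hkey
  have hli : (0:ℝ) < ℓ i := by exact_mod_cast hℓpos i
  have hlj : (0:ℝ) < ℓ j := by exact_mod_cast hℓpos j
  -- h (aR j) ≠ 0
  have hj0 : h (aR j) ≠ 0 := by
    intro h0
    have hi0 : h (aR i) = 0 := by
      rw [h0] at hkey
      have : (ℓ i : ℝ) * h (aR i) = 0 := by linarith
      rcases mul_eq_zero.1 this with h' | h'
      · linarith
      · exact h'
    have hall : ∀ μ, h (aR μ) = 0 := by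
      intro μ
      by_cases hμi : μ = i
      · rw [hμi]; exact hi0
      by_cases hμj : μ = j
      · rw [hμj]; exact h0
      exact hvanish μ hμi hμj
    obtain ⟨x, hx, hxne⟩ := hnontriv
    apply hxne
    refine Submodule.span_induction (p := fun x _ => h x = 0) ?_ ?_ ?_ ?_ hx
    · rintro _ ⟨μ, rfl⟩; exact hall μ
    · simp
    · intro y z _ _ hy hz; simp [hy, hz]
    · intro c y _ hy; simp [hy]
  have h1 : (ℓ i : ℝ) * (h (aR i) * h (aR j)) = (ℓ j : ℝ) * (h (aR j) * h (aR j)) := by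
    linear_combination h (aR j) * hkey
  have h2 : 0 < (ℓ j : ℝ) * (h (aR j) * h (aR j)) := mul_pos hlj (mul_self_pos.2 hj0)
  nlinarith [h1, h2, hli]
end

section
/- Let μ, ν be distinct indices that either both lie in {1,…,k} or both lie in {k+1,…,n}, and let h : ℝ^d → ℝ be a linear functional such that h(a_σ) = 0 for every σ ∈ {1,…,n} with σ ∉ {μ, ν}, and such that h does not vanish identically on the ℝ-span V of a_1,…,a_n. Then h(a_μ)·h(a_ν) < 0; in particular a_μ and a_ν lie strictly on opposite sides of the hyperplane ker h, so ker h contains no facet of Δ(A). (The second assertion in the proof of Lemma 2.12.) -/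
/-- Lemma 2.12 (second assertion): for distinct μ, ν both in {1,…,k} or both in
{k+1,…,n}, a linear functional vanishing on all a_σ with σ ∉ {μ,ν}, but not
identically on V, takes values of strictly opposite signs at a_μ and a_ν. -/
theorem stmt_4 (d n k : ℕ) (hd : 1 ≤ d) (hn : 2 ≤ n) (hk1 : 1 ≤ k) (hkn : k ≤ n)
    (a : Fin n → Fin d → ℤ)
    (aR : Fin n → Fin d → ℝ) (haR : ∀ μ i, aR μ i = (a μ i : ℝ))
    (hdim : Module.finrank ℝ (Submodule.span ℝ (Set.range aR)) = n - 1)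
    (hindep : ∀ μ₀ : Fin n,
      LinearIndependent ℝ (fun ν : {ν : Fin n // ν ≠ μ₀} => aR ν.1))
    (ℓ : Fin n → ℤ) (hℓpos : ∀ μ, 0 < ℓ μ)
    (ℓs : Fin n → ℤ) (hℓs : ∀ μ : Fin n, ℓs μ = if (μ : ℕ) < k then ℓ μ else -ℓ μ)
    (hlat : ∀ l : Fin n → ℤ, (∑ μ, l μ • a μ) = 0 ↔ ∃ z : ℤ, l = z • ℓs)
    (μ ν : Fin n) (hμν : μ ≠ ν)
    (hboth : ((μ : ℕ) < k ∧ (ν : ℕ) < k) ∨ (k ≤ (μ : ℕ) ∧ k ≤ (ν : ℕ)))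
    (h : (Fin d → ℝ) →ₗ[ℝ] ℝ)
    (hvanish : ∀ σ : Fin n, σ ≠ μ → σ ≠ ν → h (aR σ) = 0)
    (hnontriv : ∃ x ∈ Submodule.span ℝ (Set.range aR), h x ≠ 0) :
    h (aR μ) * h (aR ν) < 0 := by
  -- the lattice relation, over ℤ
  have hrel : (∑ σ, ℓs σ • a σ) = 0 := (hlat ℓs).mpr ⟨1, by simp⟩
  -- over ℝ
  have hrelR : ∑ σ, (ℓs σ : ℝ) • aR σ = 0 := by
    funext i
    have h0 := congrFun hrel i
    simp only [Finset.sum_apply, Pi.smul_apply, Pi.zero_apply, smul_eq_mul] at h0 ⊢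
    simp only [haR]
    push_cast
    exact_mod_cast h0
  have hsum : ∑ σ, (ℓs σ : ℝ) * h (aR σ) = 0 := by
    have := congrArg h hrelR
    simpa [map_sum, map_smul, smul_eq_mul] using this
  have hpair : (ℓs μ : ℝ) * h (aR μ) + (ℓs ν : ℝ) * h (aR ν) = 0 := by
    have e1 : ∑ σ : Fin n, (ℓs σ : ℝ) * h (aR σ)
        = ∑ σ ∈ ({μ, ν} : Finset (Fin n)), (ℓs σ : ℝ) * h (aR σ) := by
      refine (Finset.sum_subset (Finset.subset_univ _) ?_).symm
      intro σ _ hσ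
      simp only [Finset.mem_insert, Finset.mem_singleton, not_or] at hσ
      rw [hvanish σ hσ.1 hσ.2, mul_zero]
    rw [e1, Finset.sum_pair hμν] at hsum
    exact hsum
  have hℓsμ : (ℓs μ : ℝ) ≠ 0 := by
    have := hℓpos μ
    rw [hℓs μ]
    split <;> · simp only [ne_eq, Int.cast_eq_zero, Int.cast_neg, neg_eq_zero]; omega
  have hℓsν : (ℓs ν : ℝ) ≠ 0 := by
    have := hℓpos ν
    rw [hℓs ν]
    split <;> · simp only [ne_eq, Int.cast_eq_zero, Int.cast_neg, neg_eq_zero]; omega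
  -- h (aR ν) ≠ 0, else h vanishes on all generators, contradicting hnontriv
  have hνne : h (aR ν) ≠ 0 := by
    intro h0
    have hμ0 : h (aR μ) = 0 := by
      rw [h0, mul_zero, add_zero, mul_eq_zero] at hpair
      tauto
    obtain ⟨x, hx, hxne⟩ := hnontriv
    apply hxne
    have hall : ∀ σ, h (aR σ) = 0 := fun σ => by
      by_cases h1 : σ = μ
      · rw [h1]; exact hμ0
      by_cases h2 : σ = ν
      · rw [h2]; exact h0
      exact hvanish σ h1 h2
    have hle : Submodule.span ℝ (Set.range aR) ≤ LinearMap.ker h := by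
      rw [Submodule.span_le]
      rintro _ ⟨σ, rfl⟩
      exact hall σ
    exact hle hx
  -- reduce to positive coefficients
  have hrel' : (ℓ μ : ℝ) * h (aR μ) + (ℓ ν : ℝ) * h (aR ν) = 0 := by
    rcases hboth with ⟨h1, h2⟩ | ⟨h1, h2⟩
    · rw [hℓs μ, hℓs ν, if_pos h1, if_pos h2] at hpair
      exact hpair
    · rw [hℓs μ, hℓs ν, if_neg (by omega), if_neg (by omega)] at hpair
      push_cast at hpair
      linarith
  have hpμ : (0 : ℝ) < (ℓ μ : ℝ) := by exact_mod_cast hℓpos μ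
  have hpν : (0 : ℝ) < (ℓ ν : ℝ) := by exact_mod_cast hℓpos ν
  have hsq : 0 < h (aR ν) ^ 2 := by positivity
  have key : (ℓ μ : ℝ) * (h (aR μ) * h (aR ν)) = -((ℓ ν : ℝ) * h (aR ν) ^ 2) := by
    linear_combination h (aR ν) * hrel'
  nlinarith [mul_pos hpν hsq]
end

section
/- Suppose β is nonresonant and let v ∈ ℂ^n satisfy ∑_{μ=1}^n v_μ a_μ = β (the a_μ regarded as vectors in ℂ^d). If v_i is an integer for some i ∈ {1,…,k}, then v_j is not an integer for any j ∈ {k+1,…,n}. (Lemma 2.13.) -/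
/-- Lemma 2.13: if β is nonresonant and ∑ v_μ a_μ = β with v_i ∈ ℤ for some i ≤ k,
then v_j ∉ ℤ for all j > k. -/
theorem stmt_5 (d n k : ℕ) (hd : 1 ≤ d) (hn : 2 ≤ n) (hk1 : 1 ≤ k) (hkn : k ≤ n)
    (a : Fin n → Fin d → ℤ)
    (aR : Fin n → Fin d → ℝ) (haR : ∀ μ i, aR μ i = (a μ i : ℝ))
    (hdim : Module.finrank ℝ (Submodule.span ℝ (Set.range aR)) = n - 1)
    (hindep : ∀ μ₀ : Fin n,
      LinearIndependent ℝ (fun ν : {ν : Fin n // ν ≠ μ₀} => aR ν.1))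
    (ℓ : Fin n → ℤ) (hℓpos : ∀ μ, 0 < ℓ μ)
    (ℓs : Fin n → ℤ) (hℓs : ∀ μ : Fin n, ℓs μ = if (μ : ℕ) < k then ℓ μ else -ℓ μ)
    (hlat : ∀ l : Fin n → ℤ, (∑ μ, l μ • a μ) = 0 ↔ ∃ z : ℤ, l = z • ℓs)
    (aC : Fin n → Fin d → ℂ) (haC : ∀ μ i, aC μ i = (a μ i : ℂ))
    (β : Fin d → ℂ) (hβ : β ∈ Submodule.span ℂ (Set.range aC))
    (hnr : ∀ i j : Fin n, (i : ℕ) < k → k ≤ (j : ℕ) → ∀ c : Fin n → ℤ,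
      β + ∑ μ, (c μ : ℂ) • aC μ ∉
        Submodule.span ℂ (aC '' {μ : Fin n | μ ≠ i ∧ μ ≠ j}))
    (v : Fin n → ℂ) (hv : (∑ μ, v μ • aC μ) = β)
    (i : Fin n) (hik : (i : ℕ) < k) (hvi : ∃ m : ℤ, v i = (m : ℂ))
    (j : Fin n) (hjk : k ≤ (j : ℕ)) :
    ¬ ∃ m : ℤ, v j = (m : ℂ) := by
  rintro ⟨mj, hmj⟩
  obtain ⟨mi, hmi⟩ := hvi
  have hij : i ≠ j := by
    intro h; rw [h] at hik; omega
  set c : Fin n → ℤ := fun μ => if μ = i then -mi else if μ = j then -mj else 0 with hc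
  apply hnr i j hik hjk c
  have key : β + ∑ μ, (c μ : ℂ) • aC μ = ∑ μ, (v μ + (c μ : ℂ)) • aC μ := by
    rw [← hv, ← Finset.sum_add_distrib]
    simp [add_smul]
  rw [key]
  apply Submodule.sum_mem
  intro μ _
  by_cases hμi : μ = i
  · subst hμi
    simp [hc, hmi]
  by_cases hμj : μ = j
  · subst hμj
    simp [hc, hμi, hmj]
  · exact Submodule.smul_mem _ _ (Submodule.subset_span ⟨μ, ⟨hμi, hμj⟩, rfl⟩)
end

section
/- For each v ∈ E_β there exists a unique integer z₀ such that v + z₀·ℓ ∈ E'_β (where ℓ ∈ ℤ^n is regarded as a vector in ℂ^n and added coordinatewise). (Lemma 3.1.) -/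
/-- Lemma 3.1: for each v ∈ E_β there is a unique z₀ ∈ ℤ with v + z₀ℓ ∈ E'_β. -/
theorem stmt_6 (d n k : ℕ) (hd : 1 ≤ d) (hn : 2 ≤ n) (hk1 : 1 ≤ k) (hkn : k ≤ n)
    (a : Fin n → Fin d → ℤ)
    (aR : Fin n → Fin d → ℝ) (haR : ∀ μ i, aR μ i = (a μ i : ℝ))
    (hdim : Module.finrank ℝ (Submodule.span ℝ (Set.range aR)) = n - 1)
    (hindep : ∀ μ₀ : Fin n,
      LinearIndependent ℝ (fun ν : {ν : Fin n // ν ≠ μ₀} => aR ν.1))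
    (ℓ : Fin n → ℤ) (hℓpos : ∀ μ, 0 < ℓ μ)
    (ℓs : Fin n → ℤ) (hℓs : ∀ μ : Fin n, ℓs μ = if (μ : ℕ) < k then ℓ μ else -ℓ μ)
    (hlat : ∀ l : Fin n → ℤ, (∑ μ, l μ • a μ) = 0 ↔ ∃ z : ℤ, l = z • ℓs)
    (aC : Fin n → Fin d → ℂ) (haC : ∀ μ i, aC μ i = (a μ i : ℂ))
    (E E' : (Fin d → ℂ) → Set (Fin n → ℂ))
    (hE : ∀ (γ : Fin d → ℂ) (v : Fin n → ℂ), v ∈ E γ ↔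
      (∑ μ, v μ • aC μ) = γ ∧
        ∃ i : Fin n, (i : ℕ) < k ∧ ∃ b : ℕ, (b : ℤ) < ℓ i ∧ v i = (b : ℂ))
    (hE' : ∀ (γ : Fin d → ℂ) (v : Fin n → ℂ), v ∈ E' γ ↔
      v ∈ E γ ∧ ∀ i : Fin n, (i : ℕ) < k → ∀ m : ℤ, m < 0 → v i ≠ (m : ℂ))
    (β : Fin d → ℂ) (hβ : β ∈ Submodule.span ℂ (Set.range aC))
    (v : Fin n → ℂ) (hv : v ∈ E β) :
    ∃! z₀ : ℤ, (fun μ => v μ + ((z₀ * ℓs μ : ℤ) : ℂ)) ∈ E' β := by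
  classical
  obtain ⟨hvsum, i₀, hi₀k, b₀, hb₀, hvi₀⟩ := (hE β v).mp hv
  have hℓne : ∀ i : Fin n, ℓ i ≠ 0 := fun i => (hℓpos i).ne'
  set c : Fin n → ℤ := fun i =>
    if h : ∃ m : ℤ, v i = (m : ℂ) then h.choose else 0 with hc
  have hcspec : ∀ i, (∃ m : ℤ, v i = (m : ℂ)) → v i = ((c i : ℤ) : ℂ) := by
    intro i h
    simp only [hc, dif_pos h]
    exact h.choose_spec
  set T : Finset (Fin n) :=
    Finset.univ.filter (fun i => (i : ℕ) < k ∧ ∃ m : ℤ, v i = (m : ℂ)) with hTdef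
  have hmemT : ∀ i, i ∈ T ↔ (i : ℕ) < k ∧ ∃ m : ℤ, v i = (m : ℂ) := by
    intro i; simp [hTdef]
  have hi₀T : i₀ ∈ T := (hmemT i₀).mpr ⟨hi₀k, (b₀ : ℤ), by exact_mod_cast hvi₀⟩
  have hTne : T.Nonempty := ⟨i₀, hi₀T⟩
  set q : Fin n → ℤ := fun i => c i / ℓ i with hq
  set z₀ : ℤ := -(T.inf' hTne q) with hz₀
  obtain ⟨iS, hiST, hiS⟩ := T.exists_mem_eq_inf' hTne q
  -- the relation sum vanishes
  have hsum0 : (∑ μ, ℓs μ • a μ) = 0 := (hlat ℓs).mpr ⟨1, by simp⟩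
  have hsum0C : (∑ μ, (ℓs μ : ℂ) • aC μ) = 0 := by
    funext i
    have h1 := congrFun hsum0 i
    rw [Finset.sum_apply] at h1
    have h2 : (∑ μ, ℓs μ * a μ i) = 0 := by
      simpa [Pi.smul_apply, smul_eq_mul] using h1
    have h3 : ((∑ μ, ℓs μ * a μ i : ℤ) : ℂ) = ∑ μ, (ℓs μ : ℂ) * aC μ i := by
      push_cast
      exact Finset.sum_congr rfl fun μ _ => by rw [haC]
    rw [Finset.sum_apply]
    simp only [Pi.smul_apply, smul_eq_mul, Pi.zero_apply]
    rw [← h3, h2]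
    simp
  have hwsum : ∀ z : ℤ, (∑ μ, (v μ + ((z * ℓs μ : ℤ) : ℂ)) • aC μ) = β := by
    intro z
    have hsplit : (∑ μ, (v μ + ((z * ℓs μ : ℤ) : ℂ)) • aC μ)
        = (∑ μ, v μ • aC μ) + (z : ℂ) • (∑ μ, (ℓs μ : ℂ) • aC μ) := by
      rw [Finset.smul_sum, ← Finset.sum_add_distrib]
      refine Finset.sum_congr rfl fun μ _ => ?_
      rw [smul_smul, ← add_smul]
      push_cast
      ring_nf
    rw [hsplit, hsum0C, smul_zero, add_zero, hvsum]
  -- value of shifted vector on integer coordinates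
  have hwval : ∀ i ∈ T, ∀ z : ℤ, v i + ((z * ℓs i : ℤ) : ℂ) = ((c i + z * ℓ i : ℤ) : ℂ) := by
    intro i hi z
    obtain ⟨hik, hex⟩ := (hmemT i).mp hi
    rw [hcspec i hex, hℓs i, if_pos hik]
    push_cast
    ring
  -- extraction of integrality
  have hextract : ∀ (i : Fin n), (i : ℕ) < k → ∀ (z m : ℤ),
      v i + ((z * ℓs i : ℤ) : ℂ) = (m : ℂ) → i ∈ T ∧ c i = m - z * ℓ i := by
    intro i hik z m heq
    rw [hℓs i, if_pos hik] at heq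
    have hvi : v i = ((m - z * ℓ i : ℤ) : ℂ) := by
      push_cast at heq ⊢
      linear_combination heq
    have hiT : i ∈ T := (hmemT i).mpr ⟨hik, m - z * ℓ i, hvi⟩
    have hci : ((c i : ℤ) : ℂ) = ((m - z * ℓ i : ℤ) : ℂ) := by
      rw [← hcspec i ⟨m - z * ℓ i, hvi⟩, hvi]
    exact ⟨hiT, by exact_mod_cast hci⟩
  -- arithmetic facts
  have hval : ∀ i : Fin n, c i + (-(q i)) * ℓ i = c i % ℓ i := by
    intro i
    rw [Int.emod_def]
    simp only [hq]
    ring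
  have hlow : ∀ i : Fin n, ∀ z : ℤ, -(q i) ≤ z → 0 ≤ c i + z * ℓ i := by
    intro i z hz
    have h1 : 0 ≤ c i % ℓ i := Int.emod_nonneg _ (hℓne i)
    have h2 := hval i
    have h3 : (-(q i)) * ℓ i ≤ z * ℓ i :=
      mul_le_mul_of_nonneg_right hz (hℓpos i).le
    linarith
  have hlow' : ∀ i : Fin n, ∀ z : ℤ, 0 ≤ c i + z * ℓ i → -(q i) ≤ z := by
    intro i z hz
    by_contra h
    push_neg at h
    have h4 : z + 1 ≤ -(q i) := h
    have h3 : (z + 1) * ℓ i ≤ (-(q i)) * ℓ i :=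
      mul_le_mul_of_nonneg_right h4 (hℓpos i).le
    have h1 : c i % ℓ i < ℓ i := Int.emod_lt_of_pos _ (hℓpos i)
    have h2 := hval i
    nlinarith
  refine ⟨z₀, ?_, ?_⟩
  · -- existence
    show (fun μ => v μ + ((z₀ * ℓs μ : ℤ) : ℂ)) ∈ E' β
    rw [hE']
    constructor
    · rw [hE]
      refine ⟨hwsum z₀, iS, ((hmemT iS).mp hiST).1, (c iS % ℓ iS).toNat, ?_, ?_⟩
      · have h1 : 0 ≤ c iS % ℓ iS := Int.emod_nonneg _ (hℓne iS)
        have h2 : c iS % ℓ iS < ℓ iS := Int.emod_lt_of_pos _ (hℓpos iS)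
        omega
      · have h1 : 0 ≤ c iS % ℓ iS := Int.emod_nonneg _ (hℓne iS)
        rw [hwval iS hiST z₀]
        have hz : z₀ = -(q iS) := by rw [hz₀, hiS]
        rw [hz]
        rw [hval iS]
        norm_cast
        omega
    · intro i hik m hm heq
      obtain ⟨hiT, hci⟩ := hextract i hik z₀ m heq
      have hle : -(q i) ≤ z₀ := by
        rw [hz₀]
        exact neg_le_neg (Finset.inf'_le q hiT)
      have h0 : 0 ≤ c i + z₀ * ℓ i := hlow i z₀ hle
      omega
  · -- uniqueness
    intro z hz
    rw [hE'] at hz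
    obtain ⟨hzE, hzneg⟩ := hz
    rw [hE] at hzE
    obtain ⟨_, j, hjk, b, hbℓ, hwj⟩ := hzE
    -- upper bound: z ≤ z₀
    obtain ⟨hjT, hcj⟩ := hextract j hjk z b (by exact_mod_cast hwj)
    have hdivj : q j = -z := by
      have hb0 : (0 : ℤ) ≤ (b : ℤ) := Int.natCast_nonneg b
      have hrw : c j = (b : ℤ) + (-z) * ℓ j := by rw [hcj]; ring
      simp only [hq]
      rw [hrw, Int.add_mul_ediv_right _ _ (hℓne j),
        Int.ediv_eq_zero_of_lt hb0 hbℓ]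
      ring
    have hub : z ≤ z₀ := by
      have := Finset.inf'_le q hjT
      rw [hdivj] at this
      omega
    -- lower bound from nonnegativity at iS
    have hiSk : (iS : ℕ) < k := ((hmemT iS).mp hiST).1
    have hge : 0 ≤ c iS + z * ℓ iS := by
      by_contra h
      push_neg at h
      have heq : v iS + ((z * ℓs iS : ℤ) : ℂ) = ((c iS + z * ℓ iS : ℤ) : ℂ) :=
        hwval iS hiST z
      exact hzneg iS hiSk (c iS + z * ℓ iS) h heq
    have hlb : -(q iS) ≤ z := hlow' iS z hge
    have : z₀ ≤ z := by rw [hz₀, hiS]; omega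
    omega
end

section
/- If v, w ∈ E'_β and v − w ∈ ℤ^n (i.e. every coordinate of v − w is an integer), then v = w. (Rigidity of E'_β, a consequence of Lemma 3.1 used in the proof of Equation (1.4).) -/
/-- Rigidity of E'_β: two elements of E'_β differing by an integer vector are equal. -/
theorem stmt_7 (d n k : ℕ) (hd : 1 ≤ d) (hn : 2 ≤ n) (hk1 : 1 ≤ k) (hkn : k ≤ n)
    (a : Fin n → Fin d → ℤ)
    (aR : Fin n → Fin d → ℝ) (haR : ∀ μ i, aR μ i = (a μ i : ℝ))
    (hdim : Module.finrank ℝ (Submodule.span ℝ (Set.range aR)) = n - 1)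
    (hindep : ∀ μ₀ : Fin n,
      LinearIndependent ℝ (fun ν : {ν : Fin n // ν ≠ μ₀} => aR ν.1))
    (ℓ : Fin n → ℤ) (hℓpos : ∀ μ, 0 < ℓ μ)
    (ℓs : Fin n → ℤ) (hℓs : ∀ μ : Fin n, ℓs μ = if (μ : ℕ) < k then ℓ μ else -ℓ μ)
    (hlat : ∀ l : Fin n → ℤ, (∑ μ, l μ • a μ) = 0 ↔ ∃ z : ℤ, l = z • ℓs)
    (aC : Fin n → Fin d → ℂ) (haC : ∀ μ i, aC μ i = (a μ i : ℂ))
    (E E' : (Fin d → ℂ) → Set (Fin n → ℂ))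
    (hE : ∀ (γ : Fin d → ℂ) (v : Fin n → ℂ), v ∈ E γ ↔
      (∑ μ, v μ • aC μ) = γ ∧
        ∃ i : Fin n, (i : ℕ) < k ∧ ∃ b : ℕ, (b : ℤ) < ℓ i ∧ v i = (b : ℂ))
    (hE' : ∀ (γ : Fin d → ℂ) (v : Fin n → ℂ), v ∈ E' γ ↔
      v ∈ E γ ∧ ∀ i : Fin n, (i : ℕ) < k → ∀ m : ℤ, m < 0 → v i ≠ (m : ℂ))
    (β : Fin d → ℂ) (hβ : β ∈ Submodule.span ℂ (Set.range aC))
    (v w : Fin n → ℂ) (hv : v ∈ E' β) (hw : w ∈ E' β)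
    (hint : ∀ μ : Fin n, ∃ m : ℤ, v μ - w μ = (m : ℂ)) :
    v = w := by
  choose m hm using hint
  obtain ⟨hvE, hv'⟩ := (hE' β v).mp hv
  obtain ⟨hwE, hw'⟩ := (hE' β w).mp hw
  obtain ⟨hvsum, iv, hivk, bv, hbv, hvbv⟩ := (hE β v).mp hvE
  obtain ⟨hwsum, iw, hiwk, bw, hbw, hwbw⟩ := (hE β w).mp hwE
  have key : ∀ i, (∑ μ, (m μ : ℂ) * aC μ i) = 0 := by
    intro i
    have h1 := congrFun hvsum i
    have h2 := congrFun hwsum i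
    simp only [Finset.sum_apply, Pi.smul_apply, smul_eq_mul] at h1 h2
    calc ∑ μ, (m μ : ℂ) * aC μ i = ∑ μ, (v μ - w μ) * aC μ i := by
          exact Finset.sum_congr rfl fun μ _ => by rw [← hm μ]
      _ = (∑ μ, v μ * aC μ i) - ∑ μ, w μ * aC μ i := by
          rw [← Finset.sum_sub_distrib]; exact Finset.sum_congr rfl fun μ _ => by ring
      _ = 0 := by rw [h1, h2, sub_self]
  have hrel : (∑ μ, m μ • a μ) = 0 := by
    funext i
    have hk := key i
    have hc : ((∑ μ, m μ * a μ i : ℤ) : ℂ) = 0 := by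
      push_cast
      rw [← hk]
      exact Finset.sum_congr rfl fun μ _ => by rw [haC]
    have h0 : (∑ μ, m μ * a μ i) = 0 := by exact_mod_cast hc
    simpa [Finset.sum_apply, Pi.smul_apply, smul_eq_mul] using h0
  obtain ⟨z, hz⟩ := (hlat m).mp hrel
  have hmz : ∀ μ, m μ = z * ℓs μ := fun μ => by rw [hz]; simp [mul_comm]
  rcases lt_trichotomy z 0 with hzlt | hzeq | hzgt
  · -- z < 0 : use w's witness, v iw is a negative integer
    exfalso
    have hmi : m iw = z * ℓ iw := by rw [hmz iw, hℓs iw, if_pos hiwk]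
    have hvval : v iw = ((bw + z * ℓ iw : ℤ) : ℂ) := by
      have := hm iw
      rw [hwbw, hmi] at this
      push_cast at this ⊢
      linear_combination this
    have hneg : (bw : ℤ) + z * ℓ iw < 0 := by
      have h1 : z * ℓ iw ≤ -ℓ iw := by
        have : z ≤ -1 := by omega
        nlinarith [hℓpos iw]
      omega
    exact hv' iw hiwk _ hneg hvval
  · -- z = 0 : m = 0, so v = w
    funext μ
    have hmμ : m μ = 0 := by rw [hmz μ, hzeq, zero_mul]
    have := hm μ
    rw [hmμ] at this
    push_cast at this
    exact sub_eq_zero.mp this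
  · -- z > 0 : use v's witness, w iv is a negative integer
    exfalso
    have hmi : m iv = z * ℓ iv := by rw [hmz iv, hℓs iv, if_pos hivk]
    have hwval : w iv = ((bv - z * ℓ iv : ℤ) : ℂ) := by
      have := hm iv
      rw [hvbv, hmi] at this
      push_cast at this ⊢
      linear_combination -this
    have hneg : (bv : ℤ) - z * ℓ iv < 0 := by
      have h1 : ℓ iv ≤ z * ℓ iv := by nlinarith [hℓpos iv]
      omega
    exact hw' iv hivk _ hneg hwval
end

section
/- Every v ∈ E'_β has minimal negative support: there is no integer z such that nsupp(v + z·ℓ) is a proper subset of nsupp(v). (Lemma 3.2.) -/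
/-- Lemma 3.2: every v ∈ E'_β has minimal negative support. -/
theorem stmt_8 (d n k : ℕ) (hd : 1 ≤ d) (hn : 2 ≤ n) (hk1 : 1 ≤ k) (hkn : k ≤ n)
    (a : Fin n → Fin d → ℤ)
    (aR : Fin n → Fin d → ℝ) (haR : ∀ μ i, aR μ i = (a μ i : ℝ))
    (hdim : Module.finrank ℝ (Submodule.span ℝ (Set.range aR)) = n - 1)
    (hindep : ∀ μ₀ : Fin n,
      LinearIndependent ℝ (fun ν : {ν : Fin n // ν ≠ μ₀} => aR ν.1))
    (ℓ : Fin n → ℤ) (hℓpos : ∀ μ, 0 < ℓ μ)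
    (ℓs : Fin n → ℤ) (hℓs : ∀ μ : Fin n, ℓs μ = if (μ : ℕ) < k then ℓ μ else -ℓ μ)
    (hlat : ∀ l : Fin n → ℤ, (∑ μ, l μ • a μ) = 0 ↔ ∃ z : ℤ, l = z • ℓs)
    (aC : Fin n → Fin d → ℂ) (haC : ∀ μ i, aC μ i = (a μ i : ℂ))
    (E E' : (Fin d → ℂ) → Set (Fin n → ℂ))
    (hE : ∀ (γ : Fin d → ℂ) (v : Fin n → ℂ), v ∈ E γ ↔
      (∑ μ, v μ • aC μ) = γ ∧
        ∃ i : Fin n, (i : ℕ) < k ∧ ∃ b : ℕ, (b : ℤ) < ℓ i ∧ v i = (b : ℂ))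
    (hE' : ∀ (γ : Fin d → ℂ) (v : Fin n → ℂ), v ∈ E' γ ↔
      v ∈ E γ ∧ ∀ i : Fin n, (i : ℕ) < k → ∀ m : ℤ, m < 0 → v i ≠ (m : ℂ))
    (β : Fin d → ℂ) (hβ : β ∈ Submodule.span ℂ (Set.range aC))
    (v : Fin n → ℂ) (hv : v ∈ E' β) :
    ∀ z : ℤ,
      ¬ ({μ : Fin n | ∃ m : ℤ, m < 0 ∧ v μ + ((z * ℓs μ : ℤ) : ℂ) = (m : ℂ)} ⊂
          {μ : Fin n | ∃ m : ℤ, m < 0 ∧ v μ = (m : ℂ)}) := by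
  intro z hss
  rw [hE'] at hv
  obtain ⟨hvE, hv'⟩ := hv
  rw [hE] at hvE
  obtain ⟨hsum, i, hik, b, hb, hvi⟩ := hvE
  rcases lt_trichotomy z 0 with hz | hz | hz
  · have hnew : i ∈ {μ : Fin n | ∃ m : ℤ, m < 0 ∧ v μ + ((z * ℓs μ : ℤ) : ℂ) = (m : ℂ)} := by
      refine ⟨b + z * ℓs i, ?_, ?_⟩
      · rw [hℓs i, if_pos hik]
        have h1 : z * ℓ i ≤ -ℓ i := by nlinarith [hℓpos i]
        linarith
      · rw [hvi]; push_cast; ring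
    obtain ⟨m, hm, hvm⟩ := hss.1 hnew
    exact hv' i hik m hm hvm
  · subst hz
    apply hss.2
    intro μ hμ
    obtain ⟨m, hm, hvm⟩ := hμ
    exact ⟨m, hm, by simpa using hvm⟩
  · apply hss.2
    intro μ hμ
    obtain ⟨m, hm, hvm⟩ := hμ
    have hμk : ¬ (μ : ℕ) < k := fun h => hv' μ h m hm hvm
    refine ⟨m + z * ℓs μ, ?_, ?_⟩
    · rw [hℓs μ, if_neg hμk]
      have := hℓpos μ
      nlinarith
    · rw [hvm]; push_cast; ring
end

section
/- For every β ∈ V_ℂ the set E'_β is nonempty. (Asserted in Section 3 as a consequence of Lemma 3.1.) -/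
/-- Section 3: E'_β is nonempty for every β ∈ V_ℂ. -/
theorem stmt_9 (d n k : ℕ) (hd : 1 ≤ d) (hn : 2 ≤ n) (hk1 : 1 ≤ k) (hkn : k ≤ n)
    (a : Fin n → Fin d → ℤ)
    (aR : Fin n → Fin d → ℝ) (haR : ∀ μ i, aR μ i = (a μ i : ℝ))
    (hdim : Module.finrank ℝ (Submodule.span ℝ (Set.range aR)) = n - 1)
    (hindep : ∀ μ₀ : Fin n,
      LinearIndependent ℝ (fun ν : {ν : Fin n // ν ≠ μ₀} => aR ν.1))
    (ℓ : Fin n → ℤ) (hℓpos : ∀ μ, 0 < ℓ μ)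
    (ℓs : Fin n → ℤ) (hℓs : ∀ μ : Fin n, ℓs μ = if (μ : ℕ) < k then ℓ μ else -ℓ μ)
    (hlat : ∀ l : Fin n → ℤ, (∑ μ, l μ • a μ) = 0 ↔ ∃ z : ℤ, l = z • ℓs)
    (aC : Fin n → Fin d → ℂ) (haC : ∀ μ i, aC μ i = (a μ i : ℂ))
    (E E' : (Fin d → ℂ) → Set (Fin n → ℂ))
    (hE : ∀ (γ : Fin d → ℂ) (v : Fin n → ℂ), v ∈ E γ ↔
      (∑ μ, v μ • aC μ) = γ ∧
        ∃ i : Fin n, (i : ℕ) < k ∧ ∃ b : ℕ, (b : ℤ) < ℓ i ∧ v i = (b : ℂ))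
    (hE' : ∀ (γ : Fin d → ℂ) (v : Fin n → ℂ), v ∈ E' γ ↔
      v ∈ E γ ∧ ∀ i : Fin n, (i : ℕ) < k → ∀ m : ℤ, m < 0 → v i ≠ (m : ℂ))
    (β : Fin d → ℂ) (hβ : β ∈ Submodule.span ℂ (Set.range aC))
    : (E' β).Nonempty := by
  classical
  obtain ⟨c, hc⟩ := (Submodule.mem_span_range_iff_exists_fun ℂ).mp hβ
  -- the relation over ℂ
  have hrel : (∑ μ, ℓs μ • a μ) = 0 := (hlat ℓs).mpr ⟨1, by simp⟩
  have hrelC : ∀ i : Fin d, (∑ μ, (ℓs μ : ℂ) * aC μ i) = 0 := by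
    intro i
    have h := congrFun hrel i
    simp only [Finset.sum_apply, Pi.smul_apply, smul_eq_mul, Pi.zero_apply] at h
    have h2 : ((∑ μ, ℓs μ * a μ i : ℤ) : ℂ) = 0 := by rw [h]; simp
    push_cast at h2
    simpa [haC] using h2
  -- choose maximizer of -(c i).re / ℓ i over i < k
  have h0n : 0 < n := lt_of_lt_of_le hk1 hkn
  set s : Finset (Fin n) := Finset.univ.filter (fun i => (i : ℕ) < k) with hs
  have hsne : s.Nonempty := ⟨⟨0, h0n⟩, by simp only [hs, Finset.mem_filter]; exact ⟨Finset.mem_univ _, hk1⟩⟩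
  obtain ⟨i0, hi0s, hi0max⟩ := s.exists_max_image (fun i => -(c i).re / (ℓ i : ℝ)) hsne
  have hi0k : (i0 : ℕ) < k := by simpa [hs] using hi0s
  have hl0C : ((ℓ i0 : ℂ)) ≠ 0 := by exact_mod_cast (hℓpos i0).ne'
  have hl0R : ((ℓ i0 : ℝ)) ≠ 0 := by exact_mod_cast (hℓpos i0).ne'
  set t : ℂ := -(c i0) / (ℓ i0 : ℂ) with ht
  set v : Fin n → ℂ := fun μ => c μ + t * (ℓs μ : ℂ) with hv
  have hvi0 : v i0 = 0 := by
    simp only [hv, ht, hℓs i0, if_pos hi0k]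
    field_simp
    ring
  have htre : t.re * (ℓ i0 : ℝ) = -(c i0).re := by
    have h1 : t * (ℓ i0 : ℂ) = -(c i0) := div_mul_cancel₀ _ hl0C
    have := congrArg Complex.re h1
    simpa [Complex.mul_re] using this
  have hsum : (∑ μ, v μ • aC μ) = β := by
    funext i
    have h1 := congrFun hc i
    simp only [Finset.sum_apply, Pi.smul_apply, smul_eq_mul] at h1 ⊢
    have h3 : ∑ μ, (c μ + t * (ℓs μ : ℂ)) * aC μ i
        = (∑ μ, c μ * aC μ i) + t * ∑ μ, (ℓs μ : ℂ) * aC μ i := by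
      rw [Finset.mul_sum, ← Finset.sum_add_distrib]
      exact Finset.sum_congr rfl fun μ _ => by ring
    rw [hv] at *
    rw [h3, hrelC i, h1, mul_zero, add_zero]
  refine ⟨v, (hE' β v).mpr ⟨(hE β v).mpr ⟨hsum, i0, hi0k, 0, by exact_mod_cast hℓpos i0,
    by simpa using hvi0⟩, ?_⟩⟩
  intro i hik m hm hvim
  have hlipos : (0 : ℝ) < (ℓ i : ℝ) := by exact_mod_cast hℓpos i
  have hvi : c i + t * (ℓ i : ℂ) = (m : ℂ) := by
    have := hvim
    rw [hv] at this
    simpa [hℓs i, if_pos hik] using this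
  have hre : (c i).re + t.re * (ℓ i : ℝ) = (m : ℝ) := by
    have := congrArg Complex.re hvi
    simpa [Complex.add_re, Complex.mul_re] using this
  have hmax : -(c i).re / (ℓ i : ℝ) ≤ -(c i0).re / (ℓ i0 : ℝ) := by
    have hi : i ∈ s := by simp [hs, hik]
    exact hi0max i hi
  have htre' : t.re = -(c i0).re / (ℓ i0 : ℝ) := by
    field_simp [hl0R] at htre ⊢
    linarith [htre]
  have hge : -(c i).re ≤ t.re * (ℓ i : ℝ) := by
    rw [htre']
    exact (div_le_iff₀ hlipos).mp hmax
  have hm0 : ((m : ℝ)) < 0 := by exact_mod_cast hm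
  linarith
end

section
/- The set E'_β is finite, and ∑_{v ∈ E'_β} m_v = ∑_{i=1}^k ℓ_i, where for v ∈ E'_β the multiplicity m_v is the number of indices i ∈ {1,…,k} such that v_i is a nonnegative integer. (Equation (1.4).) -/
section Aux

private lemma aux_nonneg (c l s : ℤ) (hl : 0 < l) : 0 ≤ c + s * l ↔ -(c / l) ≤ s := by
  have h := Int.mul_ediv_add_emod c l
  have h0 : 0 ≤ c % l := Int.emod_nonneg c (by omega)
  have h1 : c % l < l := Int.emod_lt_of_pos c hl
  set q := c / l with hq
  constructor
  · intro hs
    by_contra hc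
    push_neg at hc
    have : s ≤ -q - 1 := by omega
    nlinarith [mul_le_mul_of_nonneg_right this (le_of_lt hl)]
  · intro hs
    nlinarith [mul_le_mul_of_nonneg_right hs (le_of_lt hl)]

private lemma aux_window (c l s : ℤ) (hl : 0 < l) :
    (0 ≤ c + s * l ∧ c + s * l < l) ↔ s = -(c / l) := by
  have h := Int.mul_ediv_add_emod c l
  have h0 : 0 ≤ c % l := Int.emod_nonneg c (by omega)
  have h1 : c % l < l := Int.emod_lt_of_pos c hl
  set q := c / l with hq
  constructor
  · rintro ⟨ha, hb⟩
    have hge : -q ≤ s := (aux_nonneg c l s hl).1 ha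
    by_contra hc
    have : -q + 1 ≤ s := by omega
    nlinarith [mul_le_mul_of_nonneg_right this (le_of_lt hl)]
  · intro hs
    subst hs
    constructor <;> nlinarith

private lemma core_lemma (n k : ℕ) (ℓ : Fin n → ℤ) (hℓ : ∀ μ, 0 < ℓ μ)
    (w : Fin n → ℂ) (i : Fin n) (hik : (i:ℕ) < k) (r : ℤ) (hr0 : 0 ≤ r) (hr1 : r < ℓ i)
    (hwi : w i = (r : ℂ)) :
    ∃! s : ℤ, 0 ≤ s ∧
      (∃ j : Fin n, (j:ℕ) < k ∧ ∃ b : ℕ, (b:ℤ) < ℓ j ∧ w j + (s:ℂ) * ((ℓ j : ℤ) : ℂ) = (b:ℂ)) ∧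
      (∀ j : Fin n, (j:ℕ) < k → ∀ m : ℤ, m < 0 → w j + (s:ℂ) * ((ℓ j : ℤ) : ℂ) ≠ (m:ℂ)) := by
  classical
  set J : Finset (Fin n) := Finset.univ.filter (fun j => (j:ℕ) < k ∧ ∃ c : ℤ, w j = (c:ℂ)) with hJ
  have hiJ : i ∈ J := by
    simp only [hJ, Finset.mem_filter, Finset.mem_univ, true_and]
    exact ⟨hik, r, hwi⟩
  have hJne : J.Nonempty := ⟨i, hiJ⟩
  set cf : Fin n → ℤ := fun j => if h : ∃ c : ℤ, w j = (c:ℂ) then h.choose else 0 with hcf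
  have hcfw : ∀ j ∈ J, w j = ((cf j : ℤ) : ℂ) := by
    intro j hj
    simp only [hJ, Finset.mem_filter] at hj
    obtain ⟨-, hc⟩ := hj
    simp only [hcf]
    rw [dif_pos hc.2]
    exact hc.2.choose_spec
  have hcast : ∀ x y : ℤ, ((x:ℤ):ℂ) = ((y:ℤ):ℂ) → x = y := fun x y h => by exact_mod_cast h
  have hcfi : cf i = r := by
    have := hcfw i hiJ
    rw [hwi] at this
    exact (hcast r (cf i) this).symm
  set sf : Fin n → ℤ := fun j => -(cf j / ℓ j) with hsf
  set s0 : ℤ := J.sup' hJne sf with hs0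
  have hval : ∀ j ∈ J, ∀ s : ℤ, w j + (s:ℂ) * ((ℓ j : ℤ) : ℂ) = (((cf j + s * ℓ j : ℤ)) : ℂ) := by
    intro j hj s
    rw [hcfw j hj]
    push_cast
    ring
  have hnotJ : ∀ j : Fin n, (j:ℕ) < k → j ∉ J →
      ∀ s m : ℤ, w j + (s:ℂ) * ((ℓ j : ℤ) : ℂ) ≠ (m:ℂ) := by
    intro j hjk hj s m heq
    apply hj
    simp only [hJ, Finset.mem_filter, Finset.mem_univ, true_and]
    refine ⟨hjk, m - s * ℓ j, ?_⟩
    push_cast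
    linear_combination heq
  have hsfi : sf i = 0 := by
    simp only [hsf, hcfi]
    rw [Int.ediv_eq_zero_of_lt hr0 hr1]
    simp
  have hs0nonneg : 0 ≤ s0 := by
    rw [← hsfi]; exact Finset.le_sup' sf hiJ
  refine ⟨s0, ⟨hs0nonneg, ?_, ?_⟩, ?_⟩
  · obtain ⟨j, hj, hjeq⟩ := Finset.exists_mem_eq_sup' hJne sf
    have hjk : (j:ℕ) < k := by
      simp only [hJ, Finset.mem_filter] at hj; exact hj.2.1
    have hwin : 0 ≤ cf j + s0 * ℓ j ∧ cf j + s0 * ℓ j < ℓ j :=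
      (aux_window (cf j) (ℓ j) s0 (hℓ j)).2 (by rw [hs0, hjeq])
    refine ⟨j, hjk, (cf j + s0 * ℓ j).toNat, by omega, ?_⟩
    rw [hval j hj s0]
    congr 1
    omega
  · intro j hjk m hm heq
    by_cases hj : j ∈ J
    · rw [hval j hj s0] at heq
      have h2 : cf j + s0 * ℓ j = m := hcast _ _ heq
      have hge : -(cf j / ℓ j) ≤ s0 := Finset.le_sup' sf hj
      have : 0 ≤ cf j + s0 * ℓ j := (aux_nonneg (cf j) (ℓ j) s0 (hℓ j)).2 hge
      omega
    · exact hnotJ j hjk hj s0 m heq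
  · rintro s ⟨hs, ⟨j, hjk, b, hb, hjeq⟩, hB⟩
    have hjJ : j ∈ J := by
      simp only [hJ, Finset.mem_filter, Finset.mem_univ, true_and]
      refine ⟨hjk, (b:ℤ) - s * ℓ j, ?_⟩
      push_cast
      linear_combination hjeq
    rw [hval j hjJ s] at hjeq
    have hint : cf j + s * ℓ j = (b:ℤ) := hcast _ _ (by exact_mod_cast hjeq)
    have hwin : s = sf j := by
      apply (aux_window (cf j) (ℓ j) s (hℓ j)).1
      constructor <;> omega
    have hge : ∀ j' ∈ J, sf j' ≤ s := by
      intro j' hj'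
      have hj'k : (j':ℕ) < k := by
        simp only [hJ, Finset.mem_filter] at hj'; exact hj'.2.1
      by_contra hc
      push_neg at hc
      have hneg : cf j' + s * ℓ j' < 0 := by
        by_contra hc2
        push_neg at hc2
        exact absurd ((aux_nonneg (cf j') (ℓ j') s (hℓ j')).1 hc2)
          (by simp only [hsf] at hc ⊢; omega)
      exact hB j' hj'k (cf j' + s * ℓ j') hneg (hval j' hj' s)
    have hle : s0 ≤ s := Finset.sup'_le hJne sf hge
    have : s ≤ s0 := by rw [hwin]; exact Finset.le_sup' sf hjJ
    omega

private lemma ker_line (n d : ℕ) (hn : 2 ≤ n) (aR : Fin n → Fin d → ℝ)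
    (hdim : Module.finrank ℝ (Submodule.span ℝ (Set.range aR)) = n - 1)
    (u : Fin n → ℝ) (hu : (∑ μ, u μ • aR μ) = 0) (hune : u ≠ 0)
    (x : Fin n → ℝ) (hx : (∑ μ, x μ • aR μ) = 0) : ∃ s : ℝ, x = s • u := by
  classical
  set f := (Fintype.linearCombination ℝ) aR with hf
  have happ : ∀ y : Fin n → ℝ, f y = ∑ μ, y μ • aR μ := fun y =>
    Fintype.linearCombination_apply ℝ aR y
  have hrange : LinearMap.range f = Submodule.span ℝ (Set.range aR) :=
    Fintype.range_linearCombination ℝ aR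
  have hrn := LinearMap.finrank_range_add_finrank_ker f
  rw [hrange, hdim] at hrn
  have hpi : Module.finrank ℝ (Fin n → ℝ) = n := by
    simp [Module.finrank_pi]
  rw [hpi] at hrn
  have hker1 : Module.finrank ℝ (LinearMap.ker f) = 1 := by omega
  have huker : u ∈ LinearMap.ker f := by
    rw [LinearMap.mem_ker, happ, hu]
  have hle : Submodule.span ℝ {u} ≤ LinearMap.ker f := by
    rw [Submodule.span_le, Set.singleton_subset_iff]; exact huker
  have heq : Submodule.span ℝ {u} = LinearMap.ker f :=
    Submodule.eq_of_le_of_finrank_eq hle (by rw [finrank_span_singleton hune, hker1])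
  have hxker : x ∈ LinearMap.ker f := by rw [LinearMap.mem_ker, happ, hx]
  rw [← heq] at hxker
  obtain ⟨s, hs⟩ := Submodule.mem_span_singleton.1 hxker
  exact ⟨s, hs.symm⟩

end Aux

/-- Equation (1.4): E'_β is finite and ∑_{v ∈ E'_β} m_v = ∑_{i=1}^k ℓ_i. -/
theorem stmt_10 (d n k : ℕ) (hd : 1 ≤ d) (hn : 2 ≤ n) (hk1 : 1 ≤ k) (hkn : k ≤ n)
    (a : Fin n → Fin d → ℤ)
    (aR : Fin n → Fin d → ℝ) (haR : ∀ μ i, aR μ i = (a μ i : ℝ))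
    (hdim : Module.finrank ℝ (Submodule.span ℝ (Set.range aR)) = n - 1)
    (hindep : ∀ μ₀ : Fin n,
      LinearIndependent ℝ (fun ν : {ν : Fin n // ν ≠ μ₀} => aR ν.1))
    (ℓ : Fin n → ℤ) (hℓpos : ∀ μ, 0 < ℓ μ)
    (ℓs : Fin n → ℤ) (hℓs : ∀ μ : Fin n, ℓs μ = if (μ : ℕ) < k then ℓ μ else -ℓ μ)
    (hlat : ∀ l : Fin n → ℤ, (∑ μ, l μ • a μ) = 0 ↔ ∃ z : ℤ, l = z • ℓs)
    (aC : Fin n → Fin d → ℂ) (haC : ∀ μ i, aC μ i = (a μ i : ℂ))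
    (E E' : (Fin d → ℂ) → Set (Fin n → ℂ))
    (hE : ∀ (γ : Fin d → ℂ) (v : Fin n → ℂ), v ∈ E γ ↔
      (∑ μ, v μ • aC μ) = γ ∧
        ∃ i : Fin n, (i : ℕ) < k ∧ ∃ b : ℕ, (b : ℤ) < ℓ i ∧ v i = (b : ℂ))
    (hE' : ∀ (γ : Fin d → ℂ) (v : Fin n → ℂ), v ∈ E' γ ↔
      v ∈ E γ ∧ ∀ i : Fin n, (i : ℕ) < k → ∀ m : ℤ, m < 0 → v i ≠ (m : ℂ))
    (β : Fin d → ℂ) (hβ : β ∈ Submodule.span ℂ (Set.range aC))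
    : (E' β).Finite ∧
      (∑ᶠ v ∈ E' β,
          (({i : Fin n | (i : ℕ) < k ∧ ∃ b : ℕ, v i = (b : ℂ)} : Set (Fin n)).ncard : ℤ)) =
        ∑ μ ∈ Finset.univ.filter (fun μ : Fin n => (μ : ℕ) < k), ℓ μ := by
  classical
  -- basic notation
  set L : Fin n → ℂ := fun μ => ((ℓs μ : ℤ) : ℂ) with hL
  have hℓsne : ∀ μ, ℓs μ ≠ 0 := by
    intro μ
    rw [hℓs μ]
    have := hℓpos μ
    split <;> omega
  have hLne : ∀ μ, L μ ≠ 0 := by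
    intro μ
    simp only [hL, ne_eq, Int.cast_eq_zero]
    exact hℓsne μ
  have hLk : ∀ j : Fin n, (j:ℕ) < k → L j = ((ℓ j : ℤ) : ℂ) := by
    intro j hj
    simp only [hL, hℓs j, if_pos hj]
  -- the integer relation and its complex version
  have hrel : (∑ μ, ℓs μ • a μ) = 0 := (hlat ℓs).2 ⟨1, (one_smul ℤ ℓs).symm⟩
  have hrelZ : ∀ i : Fin d, (∑ μ, ℓs μ * a μ i) = 0 := by
    intro i
    have := congrFun hrel i
    simpa using this
  have hrelC : (∑ μ, L μ • aC μ) = 0 := by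
    funext i
    simp only [Finset.sum_apply, Pi.smul_apply, smul_eq_mul, Pi.zero_apply, hL, haC]
    calc (∑ μ, ((ℓs μ : ℤ):ℂ) * ((a μ i : ℤ):ℂ))
        = (((∑ μ, ℓs μ * a μ i : ℤ)) : ℂ) := by push_cast; rfl
      _ = 0 := by rw [hrelZ i]; simp
  -- kernel over ℝ
  set uR : Fin n → ℝ := fun μ => ((ℓs μ : ℤ) : ℝ) with huR
  have huRker : (∑ μ, uR μ • aR μ) = 0 := by
    funext i
    simp only [Finset.sum_apply, Pi.smul_apply, smul_eq_mul, Pi.zero_apply, huR, haR]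
    calc (∑ μ, ((ℓs μ : ℤ):ℝ) * ((a μ i : ℤ):ℝ))
        = (((∑ μ, ℓs μ * a μ i : ℤ)) : ℝ) := by push_cast; rfl
      _ = 0 := by rw [hrelZ i]; simp
  have huRne : uR ≠ 0 := by
    intro h
    have := congrFun h ⟨0, by omega⟩
    simp only [huR, Pi.zero_apply, Int.cast_eq_zero] at this
    exact hℓsne _ this
  have hkerR : ∀ x : Fin n → ℝ, (∑ μ, x μ • aR μ) = 0 → ∃ s : ℝ, x = s • uR := by
    intro x hx
    exact ker_line n d hn aR hdim uR huRker huRne x hx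
  -- kernel over ℂ
  have hkerC : ∀ x : Fin n → ℂ, (∑ μ, x μ • aC μ) = 0 → ∃ t : ℂ, x = fun μ => t * L μ := by
    intro x hx
    have hxi : ∀ i : Fin d, (∑ μ, x μ * ((a μ i : ℤ) : ℂ)) = 0 := by
      intro i
      have := congrFun hx i
      simpa [Finset.sum_apply, Pi.smul_apply, smul_eq_mul, haC] using this
    have hre : (∑ μ, (fun μ => (x μ).re) μ • aR μ) = 0 := by
      funext i
      have := congrArg Complex.re (hxi i)
      simp only [Complex.re_sum, Complex.zero_re] at this
      simp only [Finset.sum_apply, Pi.smul_apply, smul_eq_mul, Pi.zero_apply, haR]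
      convert this using 2 with μ
      simp [Complex.mul_re]
    have him : (∑ μ, (fun μ => (x μ).im) μ • aR μ) = 0 := by
      funext i
      have := congrArg Complex.im (hxi i)
      simp only [Complex.im_sum, Complex.zero_im] at this
      simp only [Finset.sum_apply, Pi.smul_apply, smul_eq_mul, Pi.zero_apply, haR]
      convert this using 2 with μ
      simp [Complex.mul_im]
    obtain ⟨s, hs⟩ := hkerR _ hre
    obtain ⟨t, ht⟩ := hkerR _ him
    refine ⟨(s : ℂ) + (t : ℂ) * Complex.I, ?_⟩
    funext μ
    have hsμ := congrFun hs μ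
    have htμ := congrFun ht μ
    simp only [Pi.smul_apply, smul_eq_mul, huR] at hsμ htμ
    apply Complex.ext
    · simp only [hL, Complex.add_re, Complex.mul_re, Complex.add_im, Complex.mul_im,
        Complex.I_re, Complex.I_im, Complex.ofReal_re, Complex.ofReal_im, Complex.intCast_re,
        Complex.intCast_im, hsμ]
      push_cast
      ring
    · simp only [hL, Complex.add_re, Complex.mul_re, Complex.add_im, Complex.mul_im,
        Complex.I_re, Complex.I_im, Complex.ofReal_re, Complex.ofReal_im, Complex.intCast_re,
        Complex.intCast_im, htμ]
      push_cast
      ring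
  -- base solution and the line
  obtain ⟨v0, hv0⟩ := (Submodule.mem_span_range_iff_exists_fun ℂ).1 hβ
  set P : ℂ → (Fin n → ℂ) := fun t μ => v0 μ + t * L μ with hP
  have hPsum : ∀ t : ℂ, (∑ μ, P t μ • aC μ) = β := by
    intro t
    have : ∀ μ, P t μ • aC μ = v0 μ • aC μ + t • (L μ • aC μ) := by
      intro μ
      simp only [hP, add_smul, smul_smul]
    rw [Finset.sum_congr rfl (fun μ _ => this μ), Finset.sum_add_distrib, hv0,
      ← Finset.smul_sum, hrelC, smul_zero, add_zero]
  have hline : ∀ v : Fin n → ℂ, (∑ μ, v μ • aC μ) = β → ∃ t, v = P t := by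
    intro v hv
    have hsub : (∑ μ, (fun μ => v μ - v0 μ) μ • aC μ) = 0 := by
      simp only [sub_smul, Finset.sum_sub_distrib, hv, hv0, sub_self]
    obtain ⟨t, ht⟩ := hkerC _ hsub
    refine ⟨t, funext fun μ => ?_⟩
    have := congrFun ht μ
    simp only [hP] at this ⊢
    linear_combination this
  -- injectivity of the parametrization in each coordinate
  have hPcoord : ∀ t t' : ℂ, ∀ i : Fin n, P t i = P t' i → t = t' := by
    intro t t' i h
    simp only [hP, add_right_inj] at h
    exact mul_right_cancel₀ (hLne i) h
  -- finiteness
  set M : ℕ := Finset.univ.sup (fun j : Fin n => (ℓ j).toNat) with hM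
  have hfinE : (E β).Finite := by
    have hsub : E β ⊆ (fun p : Fin n × ℕ => P (((p.2 : ℂ) - v0 p.1) / L p.1)) ''
        {p : Fin n × ℕ | p.2 < M} := by
      intro v hv
      obtain ⟨hvsum, i, hik, b, hb, hvi⟩ := (hE β v).1 hv
      obtain ⟨t, ht⟩ := hline v hvsum
      have hbM : b < M := by
        have h2 : (ℓ i).toNat ≤ M := by
          rw [hM]
          exact Finset.le_sup (f := fun j : Fin n => (ℓ j).toNat) (Finset.mem_univ i)
        omega
      have hti : t = ((b:ℂ) - v0 i) / L i := by
        rw [eq_div_iff (hLne i)]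
        have h3 := congrFun ht i
        rw [hvi] at h3
        simp only [hP] at h3
        linear_combination -h3
      refine ⟨(i, b), hbM, ?_⟩
      show P (((b:ℂ) - v0 i) / L i) = v
      rw [← hti, ht]
    exact (((Set.finite_univ (α := Fin n)).prod (Set.finite_Iio M)).subset
      (fun p hp => ⟨trivial, hp⟩)).image _ |>.subset hsub
  have hfin : (E' β).Finite := hfinE.subset (fun v hv => ((hE' β v).1 hv).1)
  have ecast : ∀ μ : Fin n, (((ℓ μ).toNat : ℕ) : ℂ) = ((ℓ μ : ℤ) : ℂ) := fun μ => by
    exact_mod_cast congrArg (fun z : ℤ => (z : ℂ)) (Int.toNat_of_nonneg (hℓpos μ).le)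
  -- the key existence-and-uniqueness statement
  have key : ∀ i : Fin n, (i:ℕ) < k → ∀ r : ℕ, (r:ℤ) < ℓ i →
      ∃! v : Fin n → ℂ, v ∈ E' β ∧ ∃ b : ℕ, v i = (b:ℂ) ∧ b % (ℓ i).toNat = r := by
    intro i hik r hr
    set t0 : ℂ := (((r:ℕ):ℂ) - v0 i) / L i with ht0
    set w : Fin n → ℂ := P t0 with hw
    have hwi : w i = (((r:ℕ):ℤ):ℂ) := by
      simp only [hw, hP, ht0]
      rw [div_mul_cancel₀ _ (hLne i)]
      push_cast
      ring
    have hshift : ∀ (s : ℤ) (j : Fin n), P (t0 + (s:ℂ)) j = w j + (s:ℂ) * L j := by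
      intro s j
      simp only [hw, hP]
      ring
    obtain ⟨s, ⟨hs0, hA, hB⟩, hsuniq⟩ :=
      core_lemma n k ℓ hℓpos w i hik ((r:ℕ):ℤ) (Int.natCast_nonneg r) hr hwi
    set v : Fin n → ℂ := P (t0 + (s:ℂ)) with hv
    have hvj : ∀ j, v j = w j + (s:ℂ) * L j := fun j => hshift s j
    have hvE' : v ∈ E' β := by
      rw [hE']
      constructor
      · rw [hE]
        refine ⟨hPsum _, ?_⟩
        obtain ⟨j, hjk, b, hbj, hjeq⟩ := hA
        exact ⟨j, hjk, b, hbj, by rw [hvj j, hLk j hjk]; exact hjeq⟩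
      · intro j hjk m hm
        rw [hvj j, hLk j hjk]
        exact hB j hjk m hm
    have hvb : ∃ b : ℕ, v i = (b:ℂ) ∧ b % (ℓ i).toNat = r := by
      refine ⟨r + s.toNat * (ℓ i).toNat, ?_, ?_⟩
      · rw [hvj i, hwi, hLk i hik]
        have e0 : ((r + s.toNat * (ℓ i).toNat : ℕ) : ℂ)
            = ((r:ℕ):ℂ) + ((s.toNat:ℕ):ℂ) * (((ℓ i).toNat:ℕ):ℂ) := by push_cast; ring
        have e1 : ((s.toNat:ℕ):ℂ) = ((s:ℤ):ℂ) := by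
          exact_mod_cast congrArg (fun z : ℤ => (z : ℂ)) (Int.toNat_of_nonneg hs0)
        rw [e0, e1, ecast i]
        push_cast
        ring
      · rw [Nat.add_mul_mod_self_right]
        exact Nat.mod_eq_of_lt (by have := hℓpos i; omega)
    refine ⟨v, ⟨hvE', hvb⟩, ?_⟩
    rintro v' ⟨hv'E', b', hb'i, hb'r⟩
    have hℓtpos : 0 < (ℓ i).toNat := by have := hℓpos i; omega
    set q : ℕ := b' / (ℓ i).toNat with hqdef
    have hb'dec : b' = q * (ℓ i).toNat + r := by
      rw [hqdef, ← hb'r]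
      exact (Nat.div_add_mod' b' (ℓ i).toNat).symm
    have hv'sum : (∑ μ, v' μ • aC μ) = β := ((hE β v').1 ((hE' β v').1 hv'E').1).1
    obtain ⟨t', ht'⟩ := hline v' hv'sum
    have hℓtz : (((ℓ i).toNat : ℕ) : ℤ) = ℓ i := Int.toNat_of_nonneg (le_of_lt (hℓpos i))
    have ht'eq : t' = t0 + (((q:ℕ):ℤ):ℂ) := by
      apply hPcoord t' (t0 + (((q:ℕ):ℤ):ℂ)) i
      have h1 : P t' i = (b':ℂ) := by
        have := congrFun ht' i
        rw [hb'i] at this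
        exact this.symm
      have h2 : P (t0 + (((q:ℕ):ℤ):ℂ)) i = (b':ℂ) := by
        rw [hshift ((q:ℕ):ℤ) i, hwi, hLk i hik, hb'dec]
        have e0 : ((q * (ℓ i).toNat + r : ℕ) : ℂ)
            = ((q:ℕ):ℂ) * (((ℓ i).toNat:ℕ):ℂ) + ((r:ℕ):ℂ) := by push_cast; ring
        rw [e0, ecast i]
        push_cast
        ring
      rw [h1, h2]
    have hv'j : ∀ j, v' j = w j + (((q:ℕ):ℤ):ℂ) * L j := by
      intro j
      rw [ht', ht'eq]
      exact hshift ((q:ℕ):ℤ) j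
    have hq' : ((q:ℕ):ℤ) = s := by
      apply hsuniq
      refine ⟨Int.natCast_nonneg q, ?_, ?_⟩
      · obtain ⟨-, j, hjk, b'', hb'', hj''⟩ := (hE β v').1 ((hE' β v').1 hv'E').1
        exact ⟨j, hjk, b'', hb'', by rw [← hLk j hjk, ← hv'j j]; exact hj''⟩
      · intro j hjk m hm
        rw [← hLk j hjk, ← hv'j j]
        exact ((hE' β v').1 hv'E').2 j hjk m hm
    rw [ht', ht'eq, hq', hv]
  -- the counting
  refine ⟨hfin, ?_⟩
  set K : Finset (Fin n) := Finset.univ.filter (fun μ : Fin n => (μ:ℕ) < k) with hK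
  set A : Finset (Fin n → ℂ) := hfin.toFinset with hA
  have hfs : (∑ᶠ v ∈ E' β,
        (({i : Fin n | (i : ℕ) < k ∧ ∃ b : ℕ, v i = (b : ℂ)} : Set (Fin n)).ncard : ℤ))
      = ∑ v ∈ A,
        (((Finset.univ.filter (fun i : Fin n => (i:ℕ) < k ∧ ∃ b : ℕ, v i = (b:ℂ))).card : ℕ) : ℤ) := by
    rw [← hfin.coe_toFinset, finsum_mem_coe_finset]
    refine Finset.sum_congr rfl (fun v _ => ?_)
    congr 1
    rw [Set.ncard_eq_toFinset_card _ (Set.toFinite _)]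
    congr 1
    ext i
    simp [Set.Finite.mem_toFinset]
  rw [hfs]
  set bfun : (Fin n → ℂ) → Fin n → ℕ :=
    fun v i => if h : ∃ b : ℕ, v i = (b:ℂ) then h.choose else 0 with hbfun
  have hbspec : ∀ (v : Fin n → ℂ) (i : Fin n), (∃ b : ℕ, v i = (b:ℂ)) →
      v i = ((bfun v i : ℕ) : ℂ) := by
    intro v i h
    simp only [hbfun]
    rw [dif_pos h]
    exact h.choose_spec
  have hnatinj : ∀ x y : ℕ, ((x:ℕ):ℂ) = ((y:ℕ):ℂ) → x = y := fun x y h => by exact_mod_cast h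
  have hcount : ∑ v ∈ A,
      (Finset.univ.filter (fun i : Fin n => (i:ℕ) < k ∧ ∃ b : ℕ, v i = (b:ℂ))).card
      = ∑ μ ∈ K, (ℓ μ).toNat := by
    have h1 : ∑ v ∈ A,
        (Finset.univ.filter (fun i : Fin n => (i:ℕ) < k ∧ ∃ b : ℕ, v i = (b:ℂ))).card
        = (A.sigma (fun v => Finset.univ.filter
            (fun i : Fin n => (i:ℕ) < k ∧ ∃ b : ℕ, v i = (b:ℂ)))).card :=
      (Finset.card_sigma _ _).symm
    have h2 : ∑ μ ∈ K, (ℓ μ).toNat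
        = (K.sigma (fun μ => Finset.range (ℓ μ).toNat)).card := by
      rw [Finset.card_sigma]
      exact Finset.sum_congr rfl (fun μ _ => (Finset.card_range _).symm)
    rw [h1, h2]
    apply Finset.card_bij
      (fun x _ => (⟨x.2, bfun x.1 x.2 % (ℓ x.2).toNat⟩ : Σ _ : Fin n, ℕ))
    · rintro ⟨v, i⟩ hx
      simp only [Finset.mem_sigma, Finset.mem_filter, Finset.mem_univ, true_and] at hx
      obtain ⟨hvA, hik, hex⟩ := hx
      simp only [Finset.mem_sigma, Finset.mem_range, hK, Finset.mem_filter, Finset.mem_univ,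
        true_and]
      have hpos : 0 < (ℓ i).toNat := Int.lt_toNat.2 (by exact_mod_cast hℓpos i)
      exact ⟨hik, Nat.mod_lt _ hpos⟩
    · rintro ⟨v, i⟩ hx ⟨v', i'⟩ hx' heq
      simp only [Finset.mem_sigma, Finset.mem_filter, Finset.mem_univ, true_and] at hx hx'
      dsimp only at heq
      rw [Sigma.ext_iff] at heq
      obtain ⟨hii, hrr'⟩ := heq
      dsimp only at hii hrr'
      subst hii
      have hrr : bfun v i % (ℓ i).toNat = bfun v' i % (ℓ i).toNat := eq_of_heq hrr'
      set r : ℕ := bfun v i % (ℓ i).toNat with hr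
      have hik : (i:ℕ) < k := hx.2.1
      have hpos : 0 < (ℓ i).toNat := Int.lt_toNat.2 (by exact_mod_cast hℓpos i)
      have h3 : r < (ℓ i).toNat := by rw [hr]; exact Nat.mod_lt _ hpos
      have hrlt : ((r:ℕ):ℤ) < ℓ i := Int.lt_toNat.1 h3
      obtain ⟨vu, -, huniq⟩ := key i hik r hrlt
      have hvmem : v ∈ E' β := (Set.Finite.mem_toFinset hfin).1 hx.1
      have hv'mem : v' ∈ E' β := (Set.Finite.mem_toFinset hfin).1 hx'.1
      have e1 : v = vu := huniq v ⟨hvmem, bfun v i, hbspec v i hx.2.2, rfl⟩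
      have e2 : v' = vu := huniq v' ⟨hv'mem, bfun v' i, hbspec v' i hx'.2.2, by rw [← hrr]⟩
      have hvv : v = v' := e1.trans e2.symm
      subst hvv
      rfl
    · rintro ⟨i, r⟩ hir
      simp only [Finset.mem_sigma, Finset.mem_range, hK, Finset.mem_filter, Finset.mem_univ,
        true_and] at hir
      obtain ⟨hik, hrlt⟩ := hir
      have hrz : ((r:ℕ):ℤ) < ℓ i := Int.lt_toNat.1 hrlt
      obtain ⟨v, ⟨hvE', b, hbi, hbr⟩, -⟩ := key i hik r hrz
      refine ⟨⟨v, i⟩, ?_, ?_⟩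
      · simp only [Finset.mem_sigma, Finset.mem_filter, Finset.mem_univ, true_and]
        exact ⟨(Set.Finite.mem_toFinset hfin).2 hvE', hik, b, hbi⟩
      · have hbb : bfun v i = b := hnatinj _ _ ((hbspec v i ⟨b, hbi⟩).symm.trans hbi)
        show (⟨i, bfun v i % (ℓ i).toNat⟩ : Σ _ : Fin n, ℕ) = ⟨i, r⟩
        rw [hbb, hbr]
  calc ∑ v ∈ A,
      (((Finset.univ.filter (fun i : Fin n => (i:ℕ) < k ∧ ∃ b : ℕ, v i = (b:ℂ))).card : ℕ) : ℤ)
      = ((∑ v ∈ A, (Finset.univ.filter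
          (fun i : Fin n => (i:ℕ) < k ∧ ∃ b : ℕ, v i = (b:ℂ))).card : ℕ) : ℤ) := by
        push_cast
        rfl
    _ = ((∑ μ ∈ K, (ℓ μ).toNat : ℕ) : ℤ) := by rw [hcount]
    _ = ∑ μ ∈ K, ℓ μ := by
        push_cast
        exact Finset.sum_congr rfl (fun μ _ => Int.toNat_of_nonneg (hℓpos μ).le)
end

section
/- Let v ∈ ℂ and r ∈ ℕ, and for l ∈ ℤ define g_l : (0,∞) → ℂ by g_l(t) = t^{v+l} · ∑_{s=0}^{r} M_{l,s}(v) · r(r−1)⋯(r−s+1) · (log t)^{r−s}, where t^{v+l} = exp((v+l)·log t) for real t > 0 and r(r−1)⋯(r−s+1) is the falling factorial. Then g_0(t) = t^v (log t)^r for all t > 0, and for every l ∈ ℤ such that either v is not a negative integer or v + l < 0, the function g_l is differentiable at every t > 0 with derivative g_l'(t) = g_{l−1}(t). (The content of Lemma 4.4: the explicit formula (4.5) gives the family of functions obtained from t^v log^r t by iterated differentiation and integration.) -/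
/-- The coefficients M_{l,s}(c) of Section 4. -/
noncomputable def Mls (c : ℂ) (l : ℤ) (s : ℕ) : ℂ :=
  if l = 0 then (if s = 0 then 1 else 0)
  else if 0 < l then
    ((-1 : ℂ) ^ s / ∏ t ∈ Finset.range l.toNat, (c + t + 1)) *
      ∑ f ∈ Finset.Nat.antidiagonalTuple l.toNat s,
        ∏ t : Fin l.toNat, (c + (t : ℕ) + 1) ^ (-(f t : ℤ))
  else
    if s ≤ (-l).toNat then
      ∑ S ∈ Finset.powersetCard ((-l).toNat - s) (Finset.range (-l).toNat),
        ∏ t ∈ S, (c - t)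
    else 0

open Finset

noncomputable def Hh (n : ℕ) (x : Fin n → ℂ) (s : ℕ) : ℂ :=
  ∑ f ∈ Finset.Nat.antidiagonalTuple n s, ∏ t, x t ^ f t

lemma Hh_last (n : ℕ) (x : Fin (n+1) → ℂ) (s : ℕ) :
    Hh (n+1) x (s+1) = Hh n (x ∘ Fin.castSucc) (s+1) + x (Fin.last n) * Hh (n+1) x s := by
  rw [Hh, ← Finset.sum_filter_add_sum_filter_not (Finset.Nat.antidiagonalTuple (n+1) (s+1))
    (fun f => f (Fin.last n) = 0)]
  congr 1
  · rw [Hh]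
    refine Finset.sum_nbij' (i := fun f => f ∘ Fin.castSucc) (j := fun g => Fin.snoc g 0)
      ?_ ?_ ?_ ?_ ?_
    · intro f hf
      simp only [Finset.mem_filter, Finset.Nat.mem_antidiagonalTuple] at hf ⊢
      obtain ⟨h1, h2⟩ := hf
      rw [Fin.sum_univ_castSucc, h2, add_zero] at h1
      exact h1
    · intro g hg
      simp only [Finset.Nat.mem_antidiagonalTuple] at hg
      simp only [Finset.mem_filter, Finset.Nat.mem_antidiagonalTuple, Fin.snoc_last,
        and_true]
      rw [Fin.sum_univ_castSucc]
      simp [Fin.snoc_castSucc, hg]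
    · intro f hf
      simp only [Finset.mem_filter] at hf
      funext i
      refine Fin.lastCases ?_ (fun j => ?_) i
      · simp [Fin.snoc_last, hf.2.symm]
      · simp [Fin.snoc_castSucc]
    · intro g hg
      funext i
      simp [Fin.snoc_castSucc]
    · intro f hf
      simp only [Finset.mem_filter] at hf
      rw [Fin.prod_univ_castSucc, hf.2]
      simp
  · rw [Hh, Finset.mul_sum]
    refine Finset.sum_nbij'
      (i := fun f => Function.update f (Fin.last n) (f (Fin.last n) - 1))
      (j := fun g => Function.update g (Fin.last n) (g (Fin.last n) + 1)) ?_ ?_ ?_ ?_ ?_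
    · intro f hf
      simp only [Finset.mem_filter, Finset.Nat.mem_antidiagonalTuple] at hf ⊢
      obtain ⟨h1, h2⟩ := hf
      rw [Fin.sum_univ_castSucc] at h1 ⊢
      rw [Function.update_self]
      have : ∀ i : Fin n, Function.update f (Fin.last n) (f (Fin.last n) - 1) i.castSucc
          = f i.castSucc := fun i => Function.update_of_ne (Fin.castSucc_lt_last i).ne _ _
      simp_rw [this]
      omega
    · intro g hg
      simp only [Finset.Nat.mem_antidiagonalTuple] at hg
      simp only [Finset.mem_filter, Finset.Nat.mem_antidiagonalTuple]
      rw [Fin.sum_univ_castSucc] at hg ⊢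
      rw [Function.update_self]
      have : ∀ i : Fin n, Function.update g (Fin.last n) (g (Fin.last n) + 1) i.castSucc
          = g i.castSucc := fun i => Function.update_of_ne (Fin.castSucc_lt_last i).ne _ _
      simp_rw [this]
      omega
    · intro f hf
      simp only [Finset.mem_filter] at hf
      funext i
      beta_reduce
      rcases eq_or_ne i (Fin.last n) with rfl | h
      · rw [Function.update_self, Function.update_self]
        omega
      · rw [Function.update_of_ne h, Function.update_of_ne h]
    · intro g hg
      funext i
      beta_reduce
      rcases eq_or_ne i (Fin.last n) with rfl | h
      · rw [Function.update_self, Function.update_self]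
        omega
      · rw [Function.update_of_ne h, Function.update_of_ne h]
    · intro f hf
      simp only [Finset.mem_filter, Finset.Nat.mem_antidiagonalTuple] at hf
      obtain ⟨h1, h2⟩ := hf
      rw [Fin.prod_univ_castSucc, Fin.prod_univ_castSucc]
      have hupd : ∀ i : Fin n, Function.update f (Fin.last n) (f (Fin.last n) - 1) i.castSucc
          = f i.castSucc := fun i => Function.update_of_ne (Fin.castSucc_lt_last i).ne _ _
      simp_rw [hupd, Function.update_self]
      have : x (Fin.last n) ^ f (Fin.last n)
          = x (Fin.last n) * x (Fin.last n) ^ (f (Fin.last n) - 1) := by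
        conv_lhs => rw [show f (Fin.last n) = (f (Fin.last n) - 1) + 1 by omega]
        rw [pow_succ]
        ring
      rw [this]
      ring

noncomputable def Ee (c : ℂ) (n k : ℕ) : ℂ :=
  ∑ S ∈ Finset.powersetCard k (Finset.range n), ∏ t ∈ S, (c - t)

lemma Mls_pos' (c : ℂ) (n : ℕ) (s : ℕ) :
    Mls c ((n : ℤ)) s =
      (-1 : ℂ) ^ s / (∏ t ∈ Finset.range n, (c + t + 1)) *
        Hh n (fun t => (c + (t : ℕ) + 1)⁻¹) s := by
  cases n with
  | zero =>
    cases s with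
    | zero => simp [Mls, Hh]
    | succ s => simp [Mls, Hh]
  | succ n =>
    have h0 : ((n : ℤ) + 1) ≠ 0 := by positivity
    rw [Mls]
    rw [if_neg (by exact_mod_cast h0), if_pos (by positivity)]
    have ht : ((n + 1 : ℕ) : ℤ).toNat = n + 1 := rfl
    rw [ht, Hh]
    congr 1
    refine Finset.sum_congr rfl fun f _ => Finset.prod_congr rfl fun t _ => ?_
    rw [zpow_neg, zpow_natCast, inv_pow]

lemma Mls_neg' (c : ℂ) (n : ℕ) (s : ℕ) :
    Mls c (-(n : ℤ)) s = if s ≤ n then Ee c n (n - s) else 0 := by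
  cases n with
  | zero =>
    cases s with
    | zero => simp [Mls, Ee]
    | succ s => simp [Mls, Ee]
  | succ n =>
    have h0 : (-(((n : ℤ)) + 1)) ≠ 0 := by omega
    rw [Mls]
    rw [if_neg (by push_cast; omega), if_neg (by push_cast; omega)]
    have ht : (-(-((n + 1 : ℕ) : ℤ))).toNat = n + 1 := by simp
    rw [ht]
    rfl

lemma Ee_zero (c : ℂ) (n : ℕ) : Ee c n 0 = 1 := by
  simp [Ee]

lemma Ee_big (c : ℂ) (n k : ℕ) (h : n < k) : Ee c n k = 0 := by
  rw [Ee, Finset.powersetCard_eq_empty.mpr (by simpa using h), Finset.sum_empty]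

lemma Ee_succ (c : ℂ) (n k : ℕ) :
    Ee c (n + 1) (k + 1) = Ee c n (k + 1) + (c - n) * Ee c n k := by
  have hn : (n : ℕ) ∉ Finset.range n := by simp
  rw [Ee, Finset.range_add_one, Finset.powersetCard_succ_insert hn,
    Finset.sum_union, Finset.sum_image]
  · rw [Ee, Ee, Finset.mul_sum]
    congr 1
    refine Finset.sum_congr rfl fun S hS => ?_
    rw [Finset.mem_powersetCard] at hS
    rw [Finset.prod_insert (fun hmem => hn (hS.1 hmem))]
  · intro S hS T hT hST
    rw [Finset.mem_coe, Finset.mem_powersetCard] at hS hT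
    have hnS : n ∉ S := fun hmem => hn (hS.1 hmem)
    have hnT : n ∉ T := fun hmem => hn (hT.1 hmem)
    rw [← Finset.erase_insert hnS, ← Finset.erase_insert hnT, hST]
  · rw [Finset.disjoint_left]
    intro S hS hS'
    rw [Finset.mem_powersetCard] at hS
    rw [Finset.mem_image] at hS'
    obtain ⟨T, hT, rfl⟩ := hS'
    exact hn (hS.1 (Finset.mem_insert_self _ _))


lemma Hh_zero (n : ℕ) (x : Fin n → ℂ) : Hh n x 0 = 1 := by
  simp [Hh, Finset.Nat.antidiagonalTuple_zero_right]

lemma Mls_rec (c : ℂ) (l : ℤ) (s : ℕ)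
    (hc : ∀ j : ℤ, 1 ≤ j → j ≤ l → c + (j : ℂ) ≠ 0) :
    Mls c (l - 1) s = (c + (l : ℂ)) * Mls c l s +
      (if s = 0 then 0 else Mls c l (s - 1)) := by
  rcases lt_or_ge 0 l with hl | hl
  · -- positive case
    obtain ⟨n, rfl⟩ : ∃ n : ℕ, l = (n : ℤ) + 1 :=
      ⟨(l - 1).toNat, by omega⟩
    have hfac : ∀ t : ℕ, t < n + 1 → c + t + 1 ≠ 0 := by
      intro t ht
      have := hc ((t : ℤ) + 1) (by omega) (by omega)
      push_cast at this
      rwa [← add_assoc] at this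
    have hA : (∏ t ∈ Finset.range n, (c + t + 1)) ≠ 0 :=
      Finset.prod_ne_zero_iff.mpr fun t ht => hfac t (by simp at ht; omega)
    have hlast : c + n + 1 ≠ 0 := hfac n (by omega)
    have e1 : ((n : ℤ) + 1 - 1) = ((n : ℕ) : ℤ) := by omega
    have e2 : ((n : ℤ) + 1) = (((n + 1 : ℕ)) : ℤ) := by push_cast; ring
    rw [e1, e2, Mls_pos', Mls_pos']
    have eprod : (∏ t ∈ Finset.range (n + 1), (c + t + 1))
        = (∏ t ∈ Finset.range n, (c + t + 1)) * (c + n + 1) :=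
      Finset.prod_range_succ _ _
    have ecast : ((((n + 1 : ℕ)) : ℤ) : ℂ) = (n : ℂ) + 1 := by push_cast; ring
    rw [ecast, eprod]
    have hxc : ((fun t : Fin (n + 1) => (c + (t : ℕ) + 1)⁻¹) ∘ Fin.castSucc)
        = fun t : Fin n => (c + (t : ℕ) + 1)⁻¹ := by
      funext t
      simp
    have hxl : (((Fin.last n : Fin (n + 1)) : ℕ) : ℂ) = (n : ℂ) := by
      simp
    cases s with
    | zero =>
      rw [if_pos rfl, Hh_zero, Hh_zero]
      field_simp
      ring
    | succ s' =>
      rw [if_neg (Nat.succ_ne_zero s'), Nat.succ_sub_one, Mls_pos', eprod,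
        Hh_last n (fun t : Fin (n + 1) => (c + (t : ℕ) + 1)⁻¹) s', hxc, hxl]
      generalize Hh n (fun t : Fin n => (c + (t : ℕ) + 1)⁻¹) (s' + 1) = A
      generalize Hh (n + 1) (fun t : Fin (n + 1) => (c + (t : ℕ) + 1)⁻¹) s' = B
      field_simp
      ring
  · -- nonpositive case
    obtain ⟨n, rfl⟩ : ∃ n : ℕ, l = -(n : ℤ) := ⟨(-l).toNat, by omega⟩
    have e1 : (-(n : ℤ) - 1) = -(((n + 1 : ℕ)) : ℤ) := by push_cast; ring
    rw [e1, Mls_neg', Mls_neg']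
    have ecast : ((-(n : ℤ) : ℤ) : ℂ) = -(n : ℂ) := by push_cast; ring
    rw [ecast]
    cases s with
    | zero =>
      rw [if_pos rfl, if_pos (Nat.zero_le _), if_pos (Nat.zero_le _)]
      rw [Nat.sub_zero, Nat.sub_zero, Ee_succ, Ee_big c n (n + 1) (by omega)]
      ring
    | succ s' =>
      rw [if_neg (Nat.succ_ne_zero s'), Nat.succ_sub_one, Mls_neg']
      by_cases h1 : s' + 1 ≤ n
      · rw [if_pos (show s' + 1 ≤ n + 1 by omega), if_pos h1,
          if_pos (show s' ≤ n by omega)]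
        have h2 : n + 1 - (s' + 1) = (n - (s' + 1)) + 1 := by omega
        rw [h2, Ee_succ]
        have h3 : n - (s' + 1) + 1 = n - s' := by omega
        rw [h3]
        ring
      · by_cases h2 : s' + 1 = n + 1
        · rw [if_pos (show s' + 1 ≤ n + 1 by omega), if_neg h1,
            if_pos (show s' ≤ n by omega)]
          have h3 : n + 1 - (s' + 1) = 0 := by omega
          have h4 : n - s' = 0 := by omega
          rw [h3, h4, Ee_zero, Ee_zero]
          ring
        · rw [if_neg (show ¬ (s' + 1 ≤ n + 1) by omega), if_neg h1,
            if_neg (show ¬ (s' ≤ n) by omega)]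
          ring

lemma key_sum (c : ℂ) (l : ℤ) (r : ℕ)
    (hc : ∀ j : ℤ, 1 ≤ j → j ≤ l → c + (j : ℂ) ≠ 0) (X : ℂ) :
    ∑ s ∈ Finset.range (r + 1),
        Mls c (l - 1) s * (r.descFactorial s : ℂ) * X ^ (r - s)
    = (c + (l : ℂ)) * ∑ s ∈ Finset.range (r + 1),
          Mls c l s * (r.descFactorial s : ℂ) * X ^ (r - s)
      + ∑ s ∈ Finset.range (r + 1),
          Mls c l s * (r.descFactorial s : ℂ) *
            (((r - s : ℕ) : ℂ) * X ^ (r - s - 1)) := by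
  have step : ∀ s ∈ Finset.range (r + 1),
      Mls c (l - 1) s * (r.descFactorial s : ℂ) * X ^ (r - s)
      = (c + (l : ℂ)) * (Mls c l s * (r.descFactorial s : ℂ) * X ^ (r - s))
        + (if s = 0 then 0 else Mls c l (s - 1)) * (r.descFactorial s : ℂ) *
            X ^ (r - s) := by
    intro s _
    rw [Mls_rec c l s hc]
    ring
  rw [Finset.sum_congr rfl step, Finset.sum_add_distrib, ← Finset.mul_sum]
  congr 1
  rw [Finset.sum_range_succ' _ r, Finset.sum_range_succ _ r]
  rw [if_pos rfl, Nat.sub_self]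
  simp only [Nat.cast_zero, zero_mul, mul_zero, add_zero, zero_add]
  refine Finset.sum_congr rfl fun s hs => ?_
  rw [Finset.mem_range] at hs
  rw [if_neg (Nat.succ_ne_zero s), Nat.succ_sub_one]
  have hd : ((r.descFactorial (s + 1) : ℕ) : ℂ)
      = ((r - s : ℕ) : ℂ) * (r.descFactorial s : ℂ) := by
    rw [Nat.descFactorial_succ]
    push_cast
    ring
  have he : r - (s + 1) = r - s - 1 := by omega
  rw [hd, he]
  ring

/-- Lemma 4.4: the explicit family g_l given by formula (4.5) satisfies
g_0(t) = t^v (log t)^r and g_l' = g_{l-1} whenever v is not a negative integer,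
or v + l < 0. -/
theorem stmt_11 (v : ℂ) (r : ℕ)
    (g : ℤ → ℝ → ℂ)
    (hg : ∀ (l : ℤ) (t : ℝ), g l t =
      Complex.exp ((v + (l : ℂ)) * (Real.log t : ℂ)) *
        ∑ s ∈ Finset.range (r + 1),
          Mls v l s * (r.descFactorial s : ℂ) * ((Real.log t : ℂ)) ^ (r - s)) :
    (∀ t : ℝ, 0 < t →
        g 0 t = Complex.exp (v * (Real.log t : ℂ)) * ((Real.log t : ℂ)) ^ r) ∧
    (∀ l : ℤ,
        ((∀ m : ℤ, m < 0 → v ≠ (m : ℂ)) ∨ (∃ m : ℤ, v = (m : ℂ) ∧ m + l < 0)) →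
        ∀ t : ℝ, 0 < t → HasDerivAt (g l) (g (l - 1) t) t) := by
  constructor
  · intro t ht
    rw [hg]
    congr 1
    · norm_num
    · have hterm : ∀ s ∈ Finset.range (r + 1),
          Mls v 0 s * (r.descFactorial s : ℂ) * ((Real.log t : ℂ)) ^ (r - s)
          = if s = 0 then ((Real.log t : ℂ)) ^ r else 0 := by
        intro s _
        by_cases h : s = 0
        · subst h
          simp [Mls]
        · simp [Mls, h]
      rw [Finset.sum_congr rfl hterm, Finset.sum_ite_eq' (Finset.range (r + 1)) 0]
      simp
  · intro l hyp t ht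
    have hc : ∀ j : ℤ, 1 ≤ j → j ≤ l → v + (j : ℂ) ≠ 0 := by
      intro j h1 h2 hvj
      rcases hyp with h | ⟨m, hm, hml⟩
      · refine h (-j) (by omega) ?_
        push_cast
        linear_combination hvj
      · rw [hm] at hvj
        have hmj : ((m + j : ℤ) : ℂ) = 0 := by
          push_cast
          linear_combination hvj
        have : m + j = 0 := by exact_mod_cast hmj
        omega
    have htne : (t : ℂ) ≠ 0 := Complex.ofReal_ne_zero.mpr ht.ne'
    have hlog : HasDerivAt (fun u : ℝ => ((Real.log u : ℂ)))
        (((t⁻¹ : ℝ) : ℂ)) t := (Real.hasDerivAt_log ht.ne').ofReal_comp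
    have hexp : HasDerivAt
        (fun u : ℝ => Complex.exp ((v + (l : ℂ)) * (Real.log u : ℂ)))
        (Complex.exp ((v + (l : ℂ)) * (Real.log t : ℂ)) *
          ((v + (l : ℂ)) * ((t⁻¹ : ℝ) : ℂ))) t :=
      (hlog.const_mul ((v : ℂ) + (l : ℂ))).cexp
    have hpowlog : ∀ n : ℕ, HasDerivAt (fun u : ℝ => ((Real.log u : ℂ)) ^ n)
        ((n : ℂ) * ((Real.log t : ℂ)) ^ (n - 1) * ((t⁻¹ : ℝ) : ℂ)) t := by
      intro n
      induction n with
      | zero => simpa using hasDerivAt_const t (1 : ℂ)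
      | succ m ih =>
        have e : (fun u : ℝ => ((Real.log u : ℂ)) ^ (m + 1))
            = fun u => ((Real.log u : ℂ)) ^ m * ((Real.log u : ℂ)) := by
          funext u
          rw [pow_succ]
        rw [e]
        convert ih.fun_mul hlog using 1
        · rfl
        cases m with
        | zero => simp
        | succ k =>
          simp only [Nat.succ_sub_one]
          push_cast
          ring
    have hsum : HasDerivAt
        (fun u : ℝ => ∑ s ∈ Finset.range (r + 1),
          Mls v l s * (r.descFactorial s : ℂ) * ((Real.log u : ℂ)) ^ (r - s))
        (∑ s ∈ Finset.range (r + 1),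
          Mls v l s * (r.descFactorial s : ℂ) *
            ((((r - s : ℕ)) : ℂ) * ((Real.log t : ℂ)) ^ (r - s - 1) *
              ((t⁻¹ : ℝ) : ℂ))) t :=
      HasDerivAt.fun_sum fun s _ => ((hpowlog (r - s)).const_mul _)
    have hgl : g l = fun u : ℝ =>
        Complex.exp ((v + (l : ℂ)) * (Real.log u : ℂ)) *
          ∑ s ∈ Finset.range (r + 1),
            Mls v l s * (r.descFactorial s : ℂ) * ((Real.log u : ℂ)) ^ (r - s) :=
      funext fun u => hg l u
    rw [hgl]
    convert hexp.fun_mul hsum using 1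
    · rfl
    -- value equality
    rw [hg]
    set X : ℂ := ((Real.log t : ℝ) : ℂ) with hX
    have hcast : ((l - 1 : ℤ) : ℂ) = (l : ℂ) - 1 := by push_cast; ring
    rw [hcast, key_sum v l r hc X]
    have hexpkey : Complex.exp ((v + (l : ℂ)) * X)
        = Complex.exp ((v + ((l : ℂ) - 1)) * X) * (t : ℂ) := by
      have h1 : (v + (l : ℂ)) * X = (v + ((l : ℂ) - 1)) * X + X := by ring
      rw [h1, Complex.exp_add, hX, ← Complex.ofReal_exp, Real.exp_log ht]
    rw [hexpkey, Complex.ofReal_inv]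
    have hpull : ∑ s ∈ Finset.range (r + 1),
        Mls v l s * (r.descFactorial s : ℂ) *
          ((((r - s : ℕ)) : ℂ) * X ^ (r - s - 1) * ((t : ℂ))⁻¹)
        = (∑ s ∈ Finset.range (r + 1),
            Mls v l s * (r.descFactorial s : ℂ) *
              ((((r - s : ℕ)) : ℂ) * X ^ (r - s - 1))) * ((t : ℂ))⁻¹ := by
      rw [Finset.sum_mul]
      exact Finset.sum_congr rfl fun s _ => by ring
    rw [hpull]
    field_simp
end

section
/- Let v ∈ E'_β and put Z = {z ∈ ℤ : nsupp(v + z·ℓ) = nsupp(v)}. Then 0 ∈ Z and Z ⊆ ℤ_{≥0}, i.e. every z ∈ Z satisfies z ≥ 0. (The claim established in the Example of Section 6, showing that the canonical logarithm-free solution attached to v ∈ E'_β lies in ℂ[[x_0]][x^v] and has nonzero coefficient of x^v.) -/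
/-- Example of Section 6: for v ∈ E'_β, the set Z = {z : nsupp(v+zℓ) = nsupp(v)} contains 0 and consists of nonnegative integers. -/
theorem stmt_13 (d n k : ℕ) (hd : 1 ≤ d) (hn : 2 ≤ n) (hk1 : 1 ≤ k) (hkn : k ≤ n)
    (a : Fin n → Fin d → ℤ)
    (aR : Fin n → Fin d → ℝ) (haR : ∀ μ i, aR μ i = (a μ i : ℝ))
    (hdim : Module.finrank ℝ (Submodule.span ℝ (Set.range aR)) = n - 1)
    (hindep : ∀ μ₀ : Fin n,
      LinearIndependent ℝ (fun ν : {ν : Fin n // ν ≠ μ₀} => aR ν.1))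
    (ℓ : Fin n → ℤ) (hℓpos : ∀ μ, 0 < ℓ μ)
    (ℓs : Fin n → ℤ) (hℓs : ∀ μ : Fin n, ℓs μ = if (μ : ℕ) < k then ℓ μ else -ℓ μ)
    (hlat : ∀ l : Fin n → ℤ, (∑ μ, l μ • a μ) = 0 ↔ ∃ z : ℤ, l = z • ℓs)
    (aC : Fin n → Fin d → ℂ) (haC : ∀ μ i, aC μ i = (a μ i : ℂ))
    (E E' : (Fin d → ℂ) → Set (Fin n → ℂ))
    (hE : ∀ (γ : Fin d → ℂ) (v : Fin n → ℂ), v ∈ E γ ↔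
      (∑ μ, v μ • aC μ) = γ ∧
        ∃ i : Fin n, (i : ℕ) < k ∧ ∃ b : ℕ, (b : ℤ) < ℓ i ∧ v i = (b : ℂ))
    (hE' : ∀ (γ : Fin d → ℂ) (v : Fin n → ℂ), v ∈ E' γ ↔
      v ∈ E γ ∧ ∀ i : Fin n, (i : ℕ) < k → ∀ m : ℤ, m < 0 → v i ≠ (m : ℂ))
    (β : Fin d → ℂ) (hβ : β ∈ Submodule.span ℂ (Set.range aC))
    (v : Fin n → ℂ) (hv : v ∈ E' β) :
    (0 : ℤ) ∈ {z : ℤ |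
        {μ : Fin n | ∃ m : ℤ, m < 0 ∧ v μ + ((z * ℓs μ : ℤ) : ℂ) = (m : ℂ)} =
          {μ : Fin n | ∃ m : ℤ, m < 0 ∧ v μ = (m : ℂ)}} ∧
    ∀ z ∈ {z : ℤ |
        {μ : Fin n | ∃ m : ℤ, m < 0 ∧ v μ + ((z * ℓs μ : ℤ) : ℂ) = (m : ℂ)} =
          {μ : Fin n | ∃ m : ℤ, m < 0 ∧ v μ = (m : ℂ)}}, 0 ≤ z := by
  constructor
  · show _ = _
    ext μ
    simp
  · intro z hz
    by_contra hneg
    push_neg at hneg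
    obtain ⟨hvE, _⟩ := (hE' β v).mp hv
    obtain ⟨_, i, hik, b, hb, hvi⟩ := (hE β v).mp hvE
    have hi : i ∈ {μ : Fin n | ∃ m : ℤ, m < 0 ∧ v μ + ((z * ℓs μ : ℤ) : ℂ) = (m : ℂ)} := by
      refine ⟨(b : ℤ) + z * ℓ i, ?_, ?_⟩
      · have hz1 : z ≤ -1 := by omega
        nlinarith [hℓpos i, hb]
      · rw [hℓs i, if_pos hik, hvi]
        push_cast
        ring
    rw [hz] at hi
    obtain ⟨m, hm, hvm⟩ := hi
    rw [hvi] at hvm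
    have hbm : (b : ℤ) = m := by exact_mod_cast hvm
    omega
end

section
/- Suppose β is nonresonant and v ∈ E'_β. Then v_j is not an integer for any j ∈ {k+1,…,n}; consequently no coordinate of v is a negative integer. (Proposition 7.1.) -/
/-- Proposition 7.1: β nonresonant, v ∈ E'_β ⟹ v_j ∉ ℤ for j > k, and no coordinate of v is a negative integer. -/
theorem stmt_14 (d n k : ℕ) (hd : 1 ≤ d) (hn : 2 ≤ n) (hk1 : 1 ≤ k) (hkn : k ≤ n)
    (a : Fin n → Fin d → ℤ)
    (aR : Fin n → Fin d → ℝ) (haR : ∀ μ i, aR μ i = (a μ i : ℝ))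
    (hdim : Module.finrank ℝ (Submodule.span ℝ (Set.range aR)) = n - 1)
    (hindep : ∀ μ₀ : Fin n,
      LinearIndependent ℝ (fun ν : {ν : Fin n // ν ≠ μ₀} => aR ν.1))
    (ℓ : Fin n → ℤ) (hℓpos : ∀ μ, 0 < ℓ μ)
    (ℓs : Fin n → ℤ) (hℓs : ∀ μ : Fin n, ℓs μ = if (μ : ℕ) < k then ℓ μ else -ℓ μ)
    (hlat : ∀ l : Fin n → ℤ, (∑ μ, l μ • a μ) = 0 ↔ ∃ z : ℤ, l = z • ℓs)
    (aC : Fin n → Fin d → ℂ) (haC : ∀ μ i, aC μ i = (a μ i : ℂ))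
    (E E' : (Fin d → ℂ) → Set (Fin n → ℂ))
    (hE : ∀ (γ : Fin d → ℂ) (v : Fin n → ℂ), v ∈ E γ ↔
      (∑ μ, v μ • aC μ) = γ ∧
        ∃ i : Fin n, (i : ℕ) < k ∧ ∃ b : ℕ, (b : ℤ) < ℓ i ∧ v i = (b : ℂ))
    (hE' : ∀ (γ : Fin d → ℂ) (v : Fin n → ℂ), v ∈ E' γ ↔
      v ∈ E γ ∧ ∀ i : Fin n, (i : ℕ) < k → ∀ m : ℤ, m < 0 → v i ≠ (m : ℂ))
    (β : Fin d → ℂ) (hβ : β ∈ Submodule.span ℂ (Set.range aC))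
    (hnr : ∀ i j : Fin n, (i : ℕ) < k → k ≤ (j : ℕ) → ∀ c : Fin n → ℤ,
      β + ∑ μ, (c μ : ℂ) • aC μ ∉
        Submodule.span ℂ (aC '' {μ : Fin n | μ ≠ i ∧ μ ≠ j}))
    (v : Fin n → ℂ) (hv : v ∈ E' β) :
    (∀ j : Fin n, k ≤ (j : ℕ) → ¬ ∃ m : ℤ, v j = (m : ℂ)) ∧
    (∀ μ : Fin n, ¬ ∃ m : ℤ, m < 0 ∧ v μ = (m : ℂ)) := by
  rw [hE' β v] at hv
  obtain ⟨hvE, hneg⟩ := hv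
  rw [hE β v] at hvE
  obtain ⟨hsum, i, hik, b, hbℓ, hvi⟩ := hvE
  have key : ∀ j : Fin n, k ≤ (j : ℕ) → ¬ ∃ m : ℤ, v j = (m : ℂ) := by
    rintro j hkj ⟨m, hm⟩
    have hij : i ≠ j := Fin.ne_of_val_ne (by omega)
    set c : Fin n → ℤ := fun μ => if μ = i then -(b : ℤ) else if μ = j then -m else 0
      with hc
    apply hnr i j hik hkj c
    have heq : β + ∑ μ, (c μ : ℂ) • aC μ
        = ∑ μ ∈ Finset.univ \ ({i, j} : Finset (Fin n)), v μ • aC μ := by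
      rw [← hsum, ← Finset.sum_add_distrib,
        ← Finset.sum_subset (Finset.subset_univ (Finset.univ \ ({i, j} : Finset (Fin n))))]
      · apply Finset.sum_congr rfl
        intro μ hμ
        simp only [Finset.mem_sdiff, Finset.mem_univ, Finset.mem_insert,
          Finset.mem_singleton, true_and] at hμ
        push_neg at hμ
        simp [hc, hμ.1, hμ.2]
      · intro μ _ hμ
        simp only [Finset.mem_sdiff, Finset.mem_univ, Finset.mem_insert,
          Finset.mem_singleton, true_and, not_not] at hμ
        rcases hμ with rfl | rfl
        · rw [← add_smul, hvi]
          simp [hc]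
        · rw [← add_smul, hm]
          simp [hc, hij.symm]
    rw [heq]
    apply Submodule.sum_mem
    intro μ hμ
    simp only [Finset.mem_sdiff, Finset.mem_univ, Finset.mem_insert,
      Finset.mem_singleton, true_and] at hμ
    push_neg at hμ
    exact Submodule.smul_mem _ _ (Submodule.subset_span ⟨μ, ⟨hμ.1, hμ.2⟩, rfl⟩)
  refine ⟨key, ?_⟩
  rintro μ ⟨m, hm0, hvm⟩
  by_cases hμk : (μ : ℕ) < k
  · exact hneg μ hμk m hm0 hvm
  · exact key μ (le_of_not_gt hμk) ⟨m, hvm⟩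
end

section
/- Suppose β is nonresonant, let v ∈ E'_β, let w ∈ ℤ^n, and let z ∈ ℤ be such that v_i + w_i + z·ℓ_i ≥ 0 for every i ∈ {1,…,k} for which v_i is an integer. Then ∏_{i=1}^k M_{w_i + zℓ_i, 0}(v_i) · ∏_{j=k+1}^n M_{w_j − zℓ_j, 0}(v_j) ≠ 0. (The nonvanishing of all coefficients of the logarithm-free series Φ^∅_{v,β+u}(x) in Equation (7.3), the key computation in the proof of Theorem 7.2 that nonresonant parameters satisfy the hypothesis of Corollary 6.6.) -/
/-- The coefficients M_{e,0}(c) of Section 4. -/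
noncomputable def Mzero (c : ℂ) (e : ℤ) : ℂ :=
  if 0 ≤ e then (∏ t ∈ Finset.range e.toNat, (c + t + 1))⁻¹
  else ∏ t ∈ Finset.range (-e).toNat, (c - t)


lemma Mzero_ne_zero (c : ℂ) (e : ℤ)
    (h : ∀ m : ℤ, c = (m : ℂ) → 0 ≤ m ∧ 0 ≤ m + e) : Mzero c e ≠ 0 := by
  unfold Mzero
  split_ifs with he
  · apply inv_ne_zero
    rw [Finset.prod_ne_zero_iff]
    intro t _ h0
    have hc : c = ((-(t + 1) : ℤ) : ℂ) := by push_cast; linear_combination h0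
    have := (h _ hc).1
    omega
  · rw [Finset.prod_ne_zero_iff]
    intro t ht h0
    have hc : c = ((t : ℤ) : ℂ) := by push_cast; linear_combination h0
    have h2 := (h _ hc).2
    rw [Finset.mem_range] at ht
    have : (t : ℤ) < (-e).toNat := by exact_mod_cast ht
    omega

/-- Key computation in Theorem 7.2: nonvanishing of the coefficients of the
logarithm-free series Φ^∅_{v,β+u}(x) in Equation (7.3), for nonresonant β. -/
theorem stmt_15 (d n k : ℕ) (hd : 1 ≤ d) (hn : 2 ≤ n) (hk1 : 1 ≤ k) (hkn : k ≤ n)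
    (a : Fin n → Fin d → ℤ)
    (aR : Fin n → Fin d → ℝ) (haR : ∀ μ i, aR μ i = (a μ i : ℝ))
    (hdim : Module.finrank ℝ (Submodule.span ℝ (Set.range aR)) = n - 1)
    (hindep : ∀ μ₀ : Fin n,
      LinearIndependent ℝ (fun ν : {ν : Fin n // ν ≠ μ₀} => aR ν.1))
    (ℓ : Fin n → ℤ) (hℓpos : ∀ μ, 0 < ℓ μ)
    (ℓs : Fin n → ℤ) (hℓs : ∀ μ : Fin n, ℓs μ = if (μ : ℕ) < k then ℓ μ else -ℓ μ)
    (hlat : ∀ l : Fin n → ℤ, (∑ μ, l μ • a μ) = 0 ↔ ∃ z : ℤ, l = z • ℓs)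
    (aC : Fin n → Fin d → ℂ) (haC : ∀ μ i, aC μ i = (a μ i : ℂ))
    (E E' : (Fin d → ℂ) → Set (Fin n → ℂ))
    (hE : ∀ (γ : Fin d → ℂ) (v : Fin n → ℂ), v ∈ E γ ↔
      (∑ μ, v μ • aC μ) = γ ∧
        ∃ i : Fin n, (i : ℕ) < k ∧ ∃ b : ℕ, (b : ℤ) < ℓ i ∧ v i = (b : ℂ))
    (hE' : ∀ (γ : Fin d → ℂ) (v : Fin n → ℂ), v ∈ E' γ ↔
      v ∈ E γ ∧ ∀ i : Fin n, (i : ℕ) < k → ∀ m : ℤ, m < 0 → v i ≠ (m : ℂ))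
    (β : Fin d → ℂ) (hβ : β ∈ Submodule.span ℂ (Set.range aC))
    (hnr : ∀ i j : Fin n, (i : ℕ) < k → k ≤ (j : ℕ) → ∀ c : Fin n → ℤ,
      β + ∑ μ, (c μ : ℂ) • aC μ ∉
        Submodule.span ℂ (aC '' {μ : Fin n | μ ≠ i ∧ μ ≠ j}))
    (v : Fin n → ℂ) (hv : v ∈ E' β) (w : Fin n → ℤ) (z : ℤ)
    (hz : ∀ i : Fin n, (i : ℕ) < k → ∀ m : ℤ, v i = (m : ℂ) → 0 ≤ m + w i + z * ℓ i) :
    (∏ i ∈ Finset.univ.filter (fun i : Fin n => (i : ℕ) < k),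
        Mzero (v i) (w i + z * ℓ i)) *
      (∏ j ∈ Finset.univ.filter (fun j : Fin n => ¬ (j : ℕ) < k),
        Mzero (v j) (w j - z * ℓ j)) ≠ 0 := by
  obtain ⟨hvE, hneg⟩ := (hE' β v).mp hv
  obtain ⟨hsum, i₀, hi₀k, b, hbℓ, hvi₀⟩ := (hE β v).mp hvE
  have hclaim : ∀ j : Fin n, k ≤ (j : ℕ) → ∀ m : ℤ, v j ≠ (m : ℂ) := by
    intro j hj m hm
    have hij : i₀ ≠ j := by
      intro h; rw [h] at hi₀k; omega
    set c : Fin n → ℤ := fun μ => if μ = i₀ then -(b : ℤ) else if μ = j then -m else 0 with hc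
    refine hnr i₀ j hi₀k hj c ?_
    have heq : β + ∑ μ, (c μ : ℂ) • aC μ = ∑ μ, (v μ + (c μ : ℂ)) • aC μ := by
      rw [← hsum, ← Finset.sum_add_distrib]
      simp [add_smul]
    rw [heq]
    apply Submodule.sum_mem
    intro μ _
    by_cases h1 : μ = i₀
    · have : v μ + (c μ : ℂ) = 0 := by
        subst h1; simp [hc, hvi₀]
      rw [this, zero_smul]; exact Submodule.zero_mem _
    by_cases h2 : μ = j
    · have : v μ + (c μ : ℂ) = 0 := by
        subst h2; simp [hc, h1, hm]
      rw [this, zero_smul]; exact Submodule.zero_mem _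
    · exact Submodule.smul_mem _ _ (Submodule.subset_span ⟨μ, ⟨h1, h2⟩, rfl⟩)
  apply mul_ne_zero
  · rw [Finset.prod_ne_zero_iff]
    intro i hi
    rw [Finset.mem_filter] at hi
    apply Mzero_ne_zero
    intro m hm
    constructor
    · by_contra h
      exact hneg i hi.2 m (by omega) hm
    · have := hz i hi.2 m hm
      linarith
  · rw [Finset.prod_ne_zero_iff]
    intro j hj
    rw [Finset.mem_filter] at hj
    apply Mzero_ne_zero
    intro m hm
    exact absurd hm (hclaim j (by omega) m)
end

section
/- Suppose β is nonresonant, let u ∈ ℤA (viewed in ℂ^d), and set γ = β + u. Then for every v ∈ E'_β there exists a unique v' ∈ E'_γ such that v' − v ∈ ℤ^n; moreover {i ∈ {1,…,k} : v_i is a nonnegative integer} = {i ∈ {1,…,k} : v'_i is a nonnegative integer}. (Proposition 8.1.) -/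
lemma aux1 (L m z : ℤ) (hL : 0 < L) : 0 ≤ m + z * L ↔ -(m / L) ≤ z := by
  have h := Int.mul_ediv_add_emod m L
  have h0 := Int.emod_nonneg m hL.ne'
  have h1 := Int.emod_lt_of_pos m hL
  constructor
  · intro hz
    by_contra hc
    push_neg at hc
    have h2 : z ≤ -(m / L) - 1 := by omega
    nlinarith [mul_le_mul_of_nonneg_left h2 hL.le]
  · intro hz
    nlinarith [mul_le_mul_of_nonneg_left hz hL.le]

lemma aux2 (L m z : ℤ) (hL : 0 < L) : m + z * L < L ↔ z ≤ -(m / L) := by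
  have h := Int.mul_ediv_add_emod m L
  have h0 := Int.emod_nonneg m hL.ne'
  have h1 := Int.emod_lt_of_pos m hL
  constructor
  · intro hz
    by_contra hc
    push_neg at hc
    have h2 : -(m / L) + 1 ≤ z := by omega
    nlinarith [mul_le_mul_of_nonneg_left h2 hL.le]
  · intro hz
    nlinarith [mul_le_mul_of_nonneg_left hz hL.le]

lemma keyz {I : Type*} (S : Finset I) (hS : S.Nonempty) (L m : I → ℤ)
    (hL : ∀ i ∈ S, 0 < L i) :
    ∃! z : ℤ, (∀ i ∈ S, 0 ≤ m i + z * L i) ∧ (∃ i ∈ S, m i + z * L i < L i) := by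
  refine ⟨S.sup' hS (fun i => -(m i / L i)), ⟨?_, ?_⟩, ?_⟩
  · intro i hi
    exact (aux1 _ _ _ (hL i hi)).mpr (Finset.le_sup' (fun i => -(m i / L i)) hi)
  · obtain ⟨i, hi, hival⟩ := Finset.exists_mem_eq_sup' hS (fun i => -(m i / L i))
    exact ⟨i, hi, (aux2 _ _ _ (hL i hi)).mpr hival.le⟩
  · rintro y ⟨hy1, hy2⟩
    obtain ⟨i, hi, hival⟩ := hy2
    refine le_antisymm (le_trans ((aux2 _ _ _ (hL i hi)).mp hival) (Finset.le_sup' (fun i => -(m i / L i)) hi)) ?_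
    exact Finset.sup'_le _ _ fun j hj => (aux1 _ _ _ (hL j hj)).mp (hy1 j hj)

/-- Proposition 8.1: for nonresonant β and γ = β + u with u ∈ ℤA, each v ∈ E'_β has a unique integral translate v' ∈ E'_γ, and M_v = M_{v'}. -/
theorem stmt_16 (d n k : ℕ) (hd : 1 ≤ d) (hn : 2 ≤ n) (hk1 : 1 ≤ k) (hkn : k ≤ n)
    (a : Fin n → Fin d → ℤ)
    (aR : Fin n → Fin d → ℝ) (haR : ∀ μ i, aR μ i = (a μ i : ℝ))
    (hdim : Module.finrank ℝ (Submodule.span ℝ (Set.range aR)) = n - 1)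
    (hindep : ∀ μ₀ : Fin n,
      LinearIndependent ℝ (fun ν : {ν : Fin n // ν ≠ μ₀} => aR ν.1))
    (ℓ : Fin n → ℤ) (hℓpos : ∀ μ, 0 < ℓ μ)
    (ℓs : Fin n → ℤ) (hℓs : ∀ μ : Fin n, ℓs μ = if (μ : ℕ) < k then ℓ μ else -ℓ μ)
    (hlat : ∀ l : Fin n → ℤ, (∑ μ, l μ • a μ) = 0 ↔ ∃ z : ℤ, l = z • ℓs)
    (aC : Fin n → Fin d → ℂ) (haC : ∀ μ i, aC μ i = (a μ i : ℂ))
    (E E' : (Fin d → ℂ) → Set (Fin n → ℂ))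
    (hE : ∀ (γ : Fin d → ℂ) (v : Fin n → ℂ), v ∈ E γ ↔
      (∑ μ, v μ • aC μ) = γ ∧
        ∃ i : Fin n, (i : ℕ) < k ∧ ∃ b : ℕ, (b : ℤ) < ℓ i ∧ v i = (b : ℂ))
    (hE' : ∀ (γ : Fin d → ℂ) (v : Fin n → ℂ), v ∈ E' γ ↔
      v ∈ E γ ∧ ∀ i : Fin n, (i : ℕ) < k → ∀ m : ℤ, m < 0 → v i ≠ (m : ℂ))
    (β : Fin d → ℂ) (hβ : β ∈ Submodule.span ℂ (Set.range aC))
    (hnr : ∀ i j : Fin n, (i : ℕ) < k → k ≤ (j : ℕ) → ∀ c : Fin n → ℤ,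
      β + ∑ μ, (c μ : ℂ) • aC μ ∉
        Submodule.span ℂ (aC '' {μ : Fin n | μ ≠ i ∧ μ ≠ j}))
    (cu : Fin n → ℤ) (γ : Fin d → ℂ) (hγ : γ = β + ∑ μ, (cu μ : ℂ) • aC μ)
    (v : Fin n → ℂ) (hv : v ∈ E' β) :
    (∃! v' : Fin n → ℂ, v' ∈ E' γ ∧ ∀ μ : Fin n, ∃ m : ℤ, v' μ - v μ = (m : ℂ)) ∧
    (∀ v' : Fin n → ℂ, v' ∈ E' γ → (∀ μ : Fin n, ∃ m : ℤ, v' μ - v μ = (m : ℂ)) →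
      {i : Fin n | (i : ℕ) < k ∧ ∃ b : ℕ, v i = (b : ℂ)} =
        {i : Fin n | (i : ℕ) < k ∧ ∃ b : ℕ, v' i = (b : ℂ)}) := by
  classical
  obtain ⟨hvE, hvneg⟩ := (hE' β v).mp hv
  obtain ⟨hsum, i0, hi0, b0, hb0, hvi0⟩ := (hE β v).mp hvE
  -- coordinatewise sum identities
  have hsum' : ∀ x, (∑ μ, v μ * aC μ x) = β x := by
    intro x
    have := congrFun hsum x
    simpa [Finset.sum_apply] using this
  have hγx : ∀ x, γ x = β x + ∑ μ, (cu μ : ℂ) * aC μ x := by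
    intro x
    rw [hγ]
    simp [Finset.sum_apply]
  have hrel : ∀ x, (∑ μ, (ℓs μ : ℂ) * aC μ x) = 0 := by
    intro x
    have h0 : (∑ μ, ℓs μ • a μ) = 0 := (hlat ℓs).mpr ⟨1, (one_smul _ _).symm⟩
    have h1 : (∑ μ, ℓs μ * a μ x) = 0 := by
      have := congrFun h0 x
      simpa [Finset.sum_apply] using this
    simp only [haC]
    exact_mod_cast h1
  -- the integer-part function
  set mfun : Fin n → ℤ := fun i => if h : ∃ m : ℤ, v i = (m : ℂ) then h.choose else 0 with hmfun
  have hmspec : ∀ i, (∃ m : ℤ, v i = (m : ℂ)) → v i = ((mfun i : ℤ) : ℂ) := by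
    intro i h
    simp only [hmfun, dif_pos h]
    exact h.choose_spec
  set S : Finset (Fin n) := Finset.univ.filter (fun i => (i : ℕ) < k ∧ ∃ m : ℤ, v i = (m : ℂ)) with hSdef
  have hSmem : ∀ i, i ∈ S ↔ (i : ℕ) < k ∧ ∃ m : ℤ, v i = (m : ℂ) := by
    intro i; simp [hSdef]
  have hSne : S.Nonempty := ⟨i0, (hSmem i0).mpr ⟨hi0, ⟨(b0 : ℤ), by exact_mod_cast hvi0⟩⟩⟩
  have hℓsS : ∀ i ∈ S, ℓs i = ℓ i := by
    intro i hi
    rw [hℓs i, if_pos ((hSmem i).mp hi).1]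
  -- coordinate values of translates
  have hwS : ∀ (z' : ℤ) (i : Fin n), i ∈ S →
      v i + ((cu i + z' * ℓs i : ℤ) : ℂ) = (((mfun i + cu i) + z' * ℓ i : ℤ) : ℂ) := by
    intro z' i hi
    rw [hmspec i ((hSmem i).mp hi).2, hℓsS i hi]
    push_cast
    ring
  have hwnotS : ∀ (z' : ℤ) (i : Fin n), i ∉ S → (i : ℕ) < k →
      ∀ m : ℤ, v i + ((cu i + z' * ℓs i : ℤ) : ℂ) ≠ (m : ℂ) := by
    intro z' i hi hik m hm
    apply hi
    refine (hSmem i).mpr ⟨hik, ⟨m - (cu i + z' * ℓs i), ?_⟩⟩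
    push_cast
    push_cast at hm
    linear_combination hm
  -- sums of translates
  have hwsum : ∀ z' : ℤ, (∑ μ, (v μ + ((cu μ + z' * ℓs μ : ℤ) : ℂ)) • aC μ) = γ := by
    intro z'
    funext x
    simp only [Finset.sum_apply, Pi.smul_apply, smul_eq_mul]
    have expand : ∀ μ : Fin n, (v μ + ((cu μ + z' * ℓs μ : ℤ) : ℂ)) * aC μ x
        = v μ * aC μ x + (cu μ : ℂ) * aC μ x + (z' : ℂ) * ((ℓs μ : ℂ) * aC μ x) := by
      intro μ; push_cast; ring
    rw [Finset.sum_congr rfl (fun μ _ => expand μ), Finset.sum_add_distrib,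
      Finset.sum_add_distrib, ← Finset.mul_sum, hrel x, hsum' x, hγx x]
    ring
  -- characterization of membership of translates in E' γ
  have hB : ∀ z' : ℤ, (fun μ => v μ + ((cu μ + z' * ℓs μ : ℤ) : ℂ)) ∈ E' γ ↔
      ((∀ i ∈ S, 0 ≤ (mfun i + cu i) + z' * ℓ i) ∧
        (∃ i ∈ S, (mfun i + cu i) + z' * ℓ i < ℓ i)) := by
    intro z'
    constructor
    · rintro hw
      obtain ⟨hwE, hwneg⟩ := (hE' γ _).mp hw
      obtain ⟨-, j, hjk, b, hbℓ, hwj⟩ := (hE γ _).mp hwE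
      constructor
      · intro i hi
        by_contra hc
        push_neg at hc
        exact hwneg i ((hSmem i).mp hi).1 _ hc (hwS z' i hi)
      · have hjS : j ∈ S := by
          refine (hSmem j).mpr ⟨hjk, ⟨(b : ℤ) - (cu j + z' * ℓs j), ?_⟩⟩
          push_cast
          push_cast at hwj
          linear_combination hwj
        refine ⟨j, hjS, ?_⟩
        have : (((mfun j + cu j) + z' * ℓ j : ℤ) : ℂ) = ((b : ℤ) : ℂ) := by
          rw [← hwS z' j hjS, hwj]; push_cast; ring
        have h2 : (mfun j + cu j) + z' * ℓ j = (b : ℤ) := by exact_mod_cast this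
        omega
    · rintro ⟨hz1, hz2⟩
      rw [hE' γ _]
      constructor
      · rw [hE γ _]
        refine ⟨hwsum z', ?_⟩
        obtain ⟨i1, hi1, hi1lt⟩ := hz2
        refine ⟨i1, ((hSmem i1).mp hi1).1, ((mfun i1 + cu i1) + z' * ℓ i1).toNat, ?_, ?_⟩
        · rw [Int.toNat_of_nonneg (hz1 i1 hi1)]; exact hi1lt
        · rw [hwS z' i1 hi1]
          exact_mod_cast congrArg (fun t : ℤ => (t : ℂ)) (Int.toNat_of_nonneg (hz1 i1 hi1)).symm
      · intro i hik m hm hvm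
        by_cases hiS : i ∈ S
        · rw [hwS z' i hiS] at hvm
          have : (mfun i + cu i) + z' * ℓ i = m := by exact_mod_cast hvm
          have := hz1 i hiS
          omega
        · exact hwnotS z' i hiS hik m hvm
  -- apply the key lemma
  obtain ⟨z, hzcond, hzu⟩ := keyz S hSne ℓ (fun i => mfun i + cu i) (fun i _ => hℓpos i)
  -- part 2
  have part2 : ∀ v' : Fin n → ℂ, v' ∈ E' γ → (∀ μ : Fin n, ∃ m : ℤ, v' μ - v μ = (m : ℂ)) →
      {i : Fin n | (i : ℕ) < k ∧ ∃ b : ℕ, v i = (b : ℂ)} =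
        {i : Fin n | (i : ℕ) < k ∧ ∃ b : ℕ, v' i = (b : ℂ)} := by
    intro v' hv' hdiff
    obtain ⟨hv'E, hv'neg⟩ := (hE' γ v').mp hv'
    ext i
    simp only [Set.mem_setOf_eq]
    constructor
    · rintro ⟨hik, b, hb⟩
      refine ⟨hik, ?_⟩
      obtain ⟨m, hm⟩ := hdiff i
      have hvi' : v' i = (((b : ℤ) + m : ℤ) : ℂ) := by
        push_cast
        linear_combination hm + hb
      have h0 : 0 ≤ (b : ℤ) + m := by
        by_contra hc
        push_neg at hc
        exact hv'neg i hik _ hc hvi'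
      refine ⟨((b : ℤ) + m).toNat, ?_⟩
      rw [hvi']
      exact_mod_cast congrArg (fun t : ℤ => (t : ℂ)) (Int.toNat_of_nonneg h0).symm
    · rintro ⟨hik, b, hb⟩
      refine ⟨hik, ?_⟩
      obtain ⟨m, hm⟩ := hdiff i
      have hvi' : v i = (((b : ℤ) - m : ℤ) : ℂ) := by
        push_cast
        linear_combination hb - hm
      have h0 : 0 ≤ (b : ℤ) - m := by
        by_contra hc
        push_neg at hc
        exact hvneg i hik _ hc hvi'
      refine ⟨((b : ℤ) - m).toNat, ?_⟩
      rw [hvi']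
      exact_mod_cast congrArg (fun t : ℤ => (t : ℂ)) (Int.toNat_of_nonneg h0).symm
  refine ⟨⟨fun μ => v μ + ((cu μ + z * ℓs μ : ℤ) : ℂ), ⟨(hB z).mpr hzcond, ?_⟩, ?_⟩, part2⟩
  · intro μ
    exact ⟨cu μ + z * ℓs μ, by ring⟩
  · -- uniqueness
    rintro v'' ⟨hv''E', hdiff⟩
    choose c hc using hdiff
    obtain ⟨hv''E, hv''neg⟩ := (hE' γ v'').mp hv''E'
    obtain ⟨hsum'', -⟩ := (hE γ v'').mp hv''E
    have hsum''x : ∀ x, (∑ μ, v'' μ * aC μ x) = γ x := by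
      intro x
      have := congrFun hsum'' x
      simpa [Finset.sum_apply] using this
    have hcx : ∀ x, (∑ μ, ((c μ - cu μ : ℤ) : ℂ) * aC μ x) = 0 := by
      intro x
      have e2 : (∑ μ, v'' μ * aC μ x) = ∑ μ, (v μ + (c μ : ℂ)) * aC μ x :=
        Finset.sum_congr rfl fun μ _ => by
          have hv2 : v'' μ = v μ + (c μ : ℂ) := by linear_combination hc μ
          rw [hv2]
      have e3 : (∑ μ, ((c μ - cu μ : ℤ) : ℂ) * aC μ x)
          = ∑ μ, ((v μ + (c μ : ℂ)) * aC μ x - v μ * aC μ x - (cu μ : ℂ) * aC μ x) :=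
        Finset.sum_congr rfl fun μ _ => by push_cast; ring
      rw [e3, Finset.sum_sub_distrib, Finset.sum_sub_distrib, ← e2, hsum''x x, hγx x, hsum' x]
      ring
    have h4 : (∑ μ, (fun μ => c μ - cu μ) μ • a μ) = 0 := by
      funext x
      have h3 : (∑ μ, (c μ - cu μ) * a μ x) = 0 := by
        have h5 := hcx x
        simp only [haC] at h5
        exact_mod_cast h5
      simpa [Finset.sum_apply] using h3
    obtain ⟨z'', hz''⟩ := (hlat _).mp h4
    have hcz : ∀ μ, c μ = cu μ + z'' * ℓs μ := by
      intro μ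
      have h6 := congrFun hz'' μ
      simp only [Pi.smul_apply, smul_eq_mul] at h6
      omega
    have hv''w : v'' = fun μ => v μ + ((cu μ + z'' * ℓs μ : ℤ) : ℂ) := by
      funext μ
      rw [← hcz μ]
      push_cast
      linear_combination hc μ
    have hz''cond := (hB z'').mp (hv''w ▸ hv''E')
    have hzz : z'' = z := hzu z'' hz''cond
    rw [hv''w, hzz]
end

section
/- Suppose β is nonresonant, let v ∈ E'_β, let γ ∈ V_ℂ, and let v' ∈ E'_γ be such that w := v' − v ∈ ℤ^n. Then for every integer z < 0 one has ∏_{i=1}^k M_{w_i + zℓ_i, 0}(v_i) · ∏_{j=k+1}^n M_{w_j − zℓ_j, 0}(v_j) = 0, and for every integer z ≥ 0 one has ∏_{i=1}^k M_{w_i + zℓ_i, 0}(v_i) · ∏_{j=k+1}^n M_{w_j − zℓ_j, 0}(v_j) = (∏_{μ=1}^n M_{w_μ, 0}(v_μ)) · ∏_{i=1}^k M_{zℓ_i, 0}(v'_i) · ∏_{j=k+1}^n M_{−zℓ_j, 0}(v'_j). (The coefficientwise form of Equation (8.5): Φ^∅_{v,β+u}(x) = (∏_{μ=1}^n M_{ℓ^{(u)}_μ,0}(v_μ))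 · Φ^∅_{v',γ}(x) with ℓ^{(u)} = v' − v.) -/
lemma cast_toNatC (u : ℤ) (hu : 0 ≤ u) : ((u.toNat : ℕ) : ℂ) = (u : ℂ) := by
  exact_mod_cast Int.toNat_of_nonneg hu

lemma Mzero_succ (c : ℂ) (u : ℤ) (h : c + u + 1 ≠ 0 ∨ 0 ≤ u) :
    Mzero c (u + 1) = Mzero c u * (c + u + 1)⁻¹ := by
  rcases le_or_gt 0 u with hu | hu
  · rw [Mzero, Mzero, if_pos (by omega), if_pos hu]
    have h1 : (u + 1).toNat = u.toNat + 1 := by omega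
    rw [h1, Finset.prod_range_succ, mul_inv, cast_toNatC u hu]
  · have hne : c + u + 1 ≠ 0 := h.resolve_right (by omega)
    rcases eq_or_lt_of_le (by omega : u + 1 ≤ 0) with he | hlt
    · have hu1 : u = -1 := by omega
      subst hu1
      have hc : c ≠ 0 := by
        intro h0; apply hne; rw [h0]; push_cast; ring
      have l1 : Mzero c (-1 + 1) = 1 := by norm_num [Mzero]
      have l2 : Mzero c (-1) = c := by norm_num [Mzero]
      rw [l1, l2, show c + ((-1:ℤ):ℂ) + 1 = c by push_cast; ring,
        mul_inv_cancel₀ hc]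
    · rw [Mzero, Mzero, if_neg (by omega), if_neg (by omega)]
      have h1 : (-u).toNat = (-(u+1)).toNat + 1 := by omega
      rw [h1, Finset.prod_range_succ, cast_toNatC _ (by omega : (0:ℤ) ≤ -(u+1))]
      rw [show c - ((-(u+1) : ℤ) : ℂ) = c + u + 1 by push_cast; ring]
      rw [mul_assoc, mul_inv_cancel₀ hne, mul_one]

lemma Mzero_pred (c : ℂ) (u : ℤ) (h : c + u ≠ 0 ∨ u ≤ 0) :
    Mzero c (u - 1) = Mzero c u * (c + u) := by
  rcases lt_trichotomy u 0 with hu | hu | hu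
  · rw [Mzero, Mzero, if_neg (by omega), if_neg (by omega)]
    have h1 : (-(u-1)).toNat = (-u).toNat + 1 := by omega
    rw [h1, Finset.prod_range_succ, cast_toNatC _ (by omega : (0:ℤ) ≤ -u)]
    rw [show c - ((-u : ℤ) : ℂ) = c + u by push_cast; ring]
  · subst hu
    have l1 : Mzero c (0 - 1) = c := by
      rw [Mzero, if_neg (by omega)]
      norm_num
    have l2 : Mzero c 0 = 1 := by
      rw [Mzero, if_pos le_rfl]; simp
    rw [l1, l2]; push_cast; ring
  · have hne : c + u ≠ 0 := h.resolve_right (by omega)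
    rw [Mzero, Mzero, if_pos (by omega), if_pos (by omega)]
    have h1 : u.toNat = (u-1).toNat + 1 := by omega
    rw [h1, Finset.prod_range_succ, mul_inv, mul_assoc,
      cast_toNatC _ (by omega : (0:ℤ) ≤ u - 1),
      show c + ((u - 1 : ℤ) : ℂ) + 1 = c + u by push_cast; ring,
      inv_mul_cancel₀ hne, mul_one]

lemma Mzero_split_pos (c : ℂ) (w : ℤ) (h : ∀ m : ℤ, m < 0 → c + w ≠ (m:ℂ)) (e : ℕ) :
    Mzero c (w + e) = Mzero c w * Mzero (c + w) e := by
  induction e with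
  | zero => simp [Mzero]
  | succ e ih =>
    have h1 : c + ((w + (e:ℤ) : ℤ) : ℂ) + 1 ≠ 0 := by
      push_cast
      intro h0
      exact h (-(e+1)) (by omega) (by push_cast; linear_combination h0)
    rw [show w + ((e+1:ℕ):ℤ) = (w + (e:ℤ)) + 1 by push_cast; ring,
      Mzero_succ c (w + e) (Or.inl h1),
      show ((e+1:ℕ):ℤ) = ((e:ℕ):ℤ) + 1 by push_cast; ring,
      Mzero_succ (c+w) e (Or.inr (Int.natCast_nonneg e)), ih]
    push_cast
    ring

lemma Mzero_split_neg (c : ℂ) (w : ℤ) (h : ∀ m : ℤ, c ≠ (m:ℂ)) (e : ℕ) :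
    Mzero c (w - e) = Mzero c w * Mzero (c + w) (-e) := by
  induction e with
  | zero => simp [Mzero]
  | succ e ih =>
    have h1 : c + ((w - (e:ℤ) : ℤ) : ℂ) ≠ 0 := by
      push_cast
      intro h0
      exact h (e - w) (by push_cast; linear_combination h0)
    rw [show w - ((e+1:ℕ):ℤ) = (w - (e:ℤ)) - 1 by push_cast; ring,
      Mzero_pred c (w - e) (Or.inl h1),
      show -((e+1:ℕ):ℤ) = (-(e:ℤ)) - 1 by push_cast; ring,
      Mzero_pred (c+w) (-e) (Or.inr (by omega)), ih]
    push_cast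
    ring

/-- Coefficientwise form of Equation (8.5): with w = v' − v ∈ ℤ^n, the coefficients of
Φ^∅_{v,β+u} vanish for z < 0 and for z ≥ 0 equal ∏_μ M_{w_μ,0}(v_μ) times the
corresponding coefficients of Φ^∅_{v',γ}. -/
theorem stmt_17 (d n k : ℕ) (hd : 1 ≤ d) (hn : 2 ≤ n) (hk1 : 1 ≤ k) (hkn : k ≤ n)
    (a : Fin n → Fin d → ℤ)
    (aR : Fin n → Fin d → ℝ) (haR : ∀ μ i, aR μ i = (a μ i : ℝ))
    (hdim : Module.finrank ℝ (Submodule.span ℝ (Set.range aR)) = n - 1)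
    (hindep : ∀ μ₀ : Fin n,
      LinearIndependent ℝ (fun ν : {ν : Fin n // ν ≠ μ₀} => aR ν.1))
    (ℓ : Fin n → ℤ) (hℓpos : ∀ μ, 0 < ℓ μ)
    (ℓs : Fin n → ℤ) (hℓs : ∀ μ : Fin n, ℓs μ = if (μ : ℕ) < k then ℓ μ else -ℓ μ)
    (hlat : ∀ l : Fin n → ℤ, (∑ μ, l μ • a μ) = 0 ↔ ∃ z : ℤ, l = z • ℓs)
    (aC : Fin n → Fin d → ℂ) (haC : ∀ μ i, aC μ i = (a μ i : ℂ))
    (E E' : (Fin d → ℂ) → Set (Fin n → ℂ))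
    (hE : ∀ (γ : Fin d → ℂ) (v : Fin n → ℂ), v ∈ E γ ↔
      (∑ μ, v μ • aC μ) = γ ∧
        ∃ i : Fin n, (i : ℕ) < k ∧ ∃ b : ℕ, (b : ℤ) < ℓ i ∧ v i = (b : ℂ))
    (hE' : ∀ (γ : Fin d → ℂ) (v : Fin n → ℂ), v ∈ E' γ ↔
      v ∈ E γ ∧ ∀ i : Fin n, (i : ℕ) < k → ∀ m : ℤ, m < 0 → v i ≠ (m : ℂ))
    (β : Fin d → ℂ) (hβ : β ∈ Submodule.span ℂ (Set.range aC))
    (hnr : ∀ i j : Fin n, (i : ℕ) < k → k ≤ (j : ℕ) → ∀ c : Fin n → ℤ,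
      β + ∑ μ, (c μ : ℂ) • aC μ ∉
        Submodule.span ℂ (aC '' {μ : Fin n | μ ≠ i ∧ μ ≠ j}))
    (v : Fin n → ℂ) (hv : v ∈ E' β)
    (γ : Fin d → ℂ) (hγ : γ ∈ Submodule.span ℂ (Set.range aC))
    (v' : Fin n → ℂ) (hv' : v' ∈ E' γ)
    (w : Fin n → ℤ) (hw : ∀ μ : Fin n, v' μ = v μ + (w μ : ℂ)) :
    (∀ z : ℤ, z < 0 →
      (∏ i ∈ Finset.univ.filter (fun i : Fin n => (i : ℕ) < k),
          Mzero (v i) (w i + z * ℓ i)) *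
        (∏ j ∈ Finset.univ.filter (fun j : Fin n => ¬ (j : ℕ) < k),
          Mzero (v j) (w j - z * ℓ j)) = 0) ∧
    (∀ z : ℤ, 0 ≤ z →
      (∏ i ∈ Finset.univ.filter (fun i : Fin n => (i : ℕ) < k),
          Mzero (v i) (w i + z * ℓ i)) *
        (∏ j ∈ Finset.univ.filter (fun j : Fin n => ¬ (j : ℕ) < k),
          Mzero (v j) (w j - z * ℓ j)) =
      (∏ μ : Fin n, Mzero (v μ) (w μ)) *
        ((∏ i ∈ Finset.univ.filter (fun i : Fin n => (i : ℕ) < k),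
            Mzero (v' i) (z * ℓ i)) *
          (∏ j ∈ Finset.univ.filter (fun j : Fin n => ¬ (j : ℕ) < k),
            Mzero (v' j) (-(z * ℓ j))))) := by
  obtain ⟨hvE, hvneg⟩ := (hE' β v).1 hv
  obtain ⟨hvsum, i₀, hi₀k, b, hbℓ, hvi₀⟩ := (hE β v).1 hvE
  obtain ⟨hv'E, hv'neg⟩ := (hE' γ v').1 hv'
  constructor
  · -- z < 0 : the factor at the witness index of v' ∈ E γ vanishes
    intro z hz
    obtain ⟨hv'sum, i₁, hi₁k, b', hb'ℓ, hv'i₁⟩ := (hE γ v').1 hv'E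
    have hwv := hw i₁
    rw [hv'i₁] at hwv
    have hvi₁ : v i₁ = (((b' : ℤ) - w i₁ : ℤ) : ℂ) := by
      push_cast
      linear_combination -hwv
    have hmnn : 0 ≤ (b' : ℤ) - w i₁ := by
      by_contra hc
      exact hvneg i₁ hi₁k ((b' : ℤ) - w i₁) (by omega) hvi₁
    have hzl : z * ℓ i₁ ≤ -ℓ i₁ := by nlinarith [hℓpos i₁]
    apply mul_eq_zero_of_left
    apply Finset.prod_eq_zero (Finset.mem_filter.2 ⟨Finset.mem_univ i₁, hi₁k⟩)
    rw [Mzero, if_neg (by omega)]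
    apply Finset.prod_eq_zero (i := ((b' : ℤ) - w i₁).toNat)
      (Finset.mem_range.2 (by omega))
    rw [hvi₁, cast_toNatC _ hmnn, sub_self]
  · intro z hz
    -- for j ≥ k, v j is not an integer, by nonresonance
    have hnotint : ∀ j : Fin n, ¬ (j : ℕ) < k → ∀ m : ℤ, v j ≠ (m : ℂ) := by
      intro j hjk m hm
      refine hnr i₀ j hi₀k (not_lt.1 hjk)
        (fun μ => if μ = i₀ then -(b : ℤ) else if μ = j then -m else 0) ?_
      have key : β + ∑ μ, (((if μ = i₀ then -(b : ℤ) else if μ = j then -m else 0) : ℤ) : ℂ) • aC μ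
          = ∑ μ, ((v μ + ((if μ = i₀ then -(b : ℤ) else if μ = j then -m else 0 : ℤ) : ℂ)) • aC μ) := by
        rw [← hvsum, ← Finset.sum_add_distrib]
        exact Finset.sum_congr rfl fun μ _ => (add_smul _ _ _).symm
      rw [key]
      apply Submodule.sum_mem
      intro μ _
      by_cases h1 : μ = i₀
      · rw [if_pos h1,
          show v μ + ((-(b : ℤ) : ℤ) : ℂ) = 0 by rw [h1, hvi₀]; push_cast; ring, zero_smul]
        exact Submodule.zero_mem _
      · by_cases h2 : μ = j
        · rw [if_neg h1, if_pos h2,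
            show v μ + ((-m : ℤ) : ℂ) = 0 by rw [h2, hm]; push_cast; ring, zero_smul]
          exact Submodule.zero_mem _
        · exact Submodule.smul_mem _ _ (Submodule.subset_span ⟨μ, ⟨h1, h2⟩, rfl⟩)
    have hIfac : ∀ i ∈ Finset.univ.filter (fun i : Fin n => (i : ℕ) < k),
        Mzero (v i) (w i + z * ℓ i) = Mzero (v i) (w i) * Mzero (v' i) (z * ℓ i) := by
      intro i hi
      have hik : (i : ℕ) < k := (Finset.mem_filter.1 hi).2
      have hnn : 0 ≤ z * ℓ i := mul_nonneg hz (le_of_lt (hℓpos i))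
      have hcw : ∀ m : ℤ, m < 0 → v i + (w i : ℂ) ≠ (m : ℂ) := by
        intro m hm0
        rw [← hw i]
        exact hv'neg i hik m hm0
      have hsp := Mzero_split_pos (v i) (w i) hcw (z * ℓ i).toNat
      rw [Int.toNat_of_nonneg hnn] at hsp
      rw [hsp, ← hw i]
    have hJfac : ∀ j ∈ Finset.univ.filter (fun j : Fin n => ¬ (j : ℕ) < k),
        Mzero (v j) (w j - z * ℓ j) = Mzero (v j) (w j) * Mzero (v' j) (-(z * ℓ j)) := by
      intro j hj
      have hjk : ¬ (j : ℕ) < k := (Finset.mem_filter.1 hj).2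
      have hnn : 0 ≤ z * ℓ j := mul_nonneg hz (le_of_lt (hℓpos j))
      have hsn := Mzero_split_neg (v j) (w j) (hnotint j hjk) (z * ℓ j).toNat
      rw [Int.toNat_of_nonneg hnn] at hsn
      rw [hsn, ← hw j]
    rw [Finset.prod_congr rfl hIfac, Finset.prod_congr rfl hJfac,
      Finset.prod_mul_distrib, Finset.prod_mul_distrib,
      ← Finset.prod_filter_mul_prod_filter_not Finset.univ
        (fun μ : Fin n => (μ : ℕ) < k) (fun μ => Mzero (v μ) (w μ))]
    ring
end

section
/- For β ∈ V_ℂ, the set E'_β has exactly one element if and only if both of the following hold: (a) β = ∑_{i=1}^k c_i a_i + ∑_{j=k+1}^n c_j a_j for some nonnegative integers c_1,…,c_k and some complex numbers c_{k+1},…,c_n; and (b) ℓ_i = 1 for every i ∈ {1,…,k}. (Proposition 9.2, characterizing when the system can have maximal unipotent monodromy at the origin.) -/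
lemma aux_kerR (n d : ℕ) (hn : 2 ≤ n) (aR : Fin n → Fin d → ℝ)
    (hdim : Module.finrank ℝ (Submodule.span ℝ (Set.range aR)) = n - 1)
    (w : Fin n → ℝ) (hw : w ≠ 0) (hwk : (∑ μ, w μ • aR μ) = 0)
    (x : Fin n → ℝ) (hx : (∑ μ, x μ • aR μ) = 0) :
    ∃ s : ℝ, x = s • w := by
  classical
  let f : (Fin n → ℝ) →ₗ[ℝ] (Fin d → ℝ) :=
    { toFun := fun y => ∑ μ, y μ • aR μ
      map_add' := by
        intro y z
        simp [add_smul, Finset.sum_add_distrib]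
      map_smul' := by
        intro c y
        simp [smul_smul, Finset.smul_sum] }
  have hf : ∀ y : Fin n → ℝ, f y = ∑ μ, y μ • aR μ := fun y => rfl
  have hrange : LinearMap.range f = Submodule.span ℝ (Set.range aR) := by
    apply le_antisymm
    · rintro p hp
      obtain ⟨y, rfl⟩ := LinearMap.mem_range.mp hp
      rw [hf]
      exact Submodule.sum_mem _ fun μ _ =>
        Submodule.smul_mem _ _ (Submodule.subset_span (Set.mem_range_self μ))
    · rw [Submodule.span_le]
      rintro _ ⟨μ, rfl⟩
      refine ⟨Pi.single μ 1, ?_⟩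
      rw [hf]
      simp [Pi.single_apply, ite_smul]
  have hker : Module.finrank ℝ (LinearMap.ker f) = 1 := by
    have h1 := f.finrank_range_add_finrank_ker
    rw [hrange, hdim] at h1
    have h2 : Module.finrank ℝ (Fin n → ℝ) = n := by simp
    rw [h2] at h1
    omega
  have hwmem : w ∈ LinearMap.ker f := by
    rw [LinearMap.mem_ker, hf]; exact hwk
  have hsp : (ℝ ∙ w) = LinearMap.ker f := by
    apply Submodule.eq_of_le_of_finrank_le
    · rwa [Submodule.span_singleton_le_iff_mem]
    · rw [hker, finrank_span_singleton hw]
  have hxm : x ∈ (ℝ ∙ w) := by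
    rw [hsp, LinearMap.mem_ker, hf]; exact hx
  obtain ⟨s, hs⟩ := Submodule.mem_span_singleton.mp hxm
  exact ⟨s, hs.symm⟩

lemma aux_core (n k : ℕ) (hn : 2 ≤ n) (hk1 : 1 ≤ k) (hkn : k ≤ n)
    (v : Fin n → ℂ) (ℓ : Fin n → ℤ) (hℓpos : ∀ μ, 0 < ℓ μ) :
    (∃! t : ℂ,
      (∃ i : Fin n, (i : ℕ) < k ∧ ∃ b : ℕ, (b : ℤ) < ℓ i ∧ v i + t * ℓ i = (b : ℂ)) ∧
      (∀ j : Fin n, (j : ℕ) < k → ∀ m : ℤ, m < 0 → v j + t * ℓ j ≠ (m : ℂ))) ↔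
    ((∃ t : ℂ, ∀ i : Fin n, (i : ℕ) < k → ∃ b : ℕ, v i + t * ℓ i = (b : ℂ)) ∧
      ∀ i : Fin n, (i : ℕ) < k → ℓ i = 1) := by
  classical
  have hn0 : 0 < n := by omega
  set i0 : Fin n := ⟨0, hn0⟩ with hi0
  have hi0k : (i0 : ℕ) < k := hk1
  have hLne : ∀ i : Fin n, ((ℓ i : ℂ)) ≠ 0 := fun i => by
    exact_mod_cast (hℓpos i).ne'
  have hLQpos : ∀ i : Fin n, (0 : ℚ) < (ℓ i : ℚ) := fun i => by exact_mod_cast hℓpos i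
  have hLQ1 : ∀ i : Fin n, (1 : ℚ) ≤ (ℓ i : ℚ) := fun i => by exact_mod_cast hℓpos i
  constructor
  · -- hard direction
    rintro ⟨t0, ht0, huniq⟩
    set α : Fin n → ℂ := fun i => -(v i) / (ℓ i : ℂ) with hαdef
    have hα : ∀ (i : Fin n) (t : ℂ), v i + t * ℓ i = (t - α i) * ℓ i := by
      intro i t
      have h := hLne i
      rw [hαdef]
      field_simp
      ring
    -- Step 1
    have step1 : ∀ x : Fin n, (x : ℕ) < k →
        ∃ Qx : ℚ, ((Qx : ℂ) = t0 - α x ∧ 1 - 1/(ℓ x : ℚ) ≤ Qx) := by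
      intro x hxk
      set Scl : Finset (Fin n) :=
        Finset.univ.filter (fun y => (y : ℕ) < k ∧ ∃ q : ℚ, α y - α x = (q : ℂ)) with hScl
      have hxScl : x ∈ Scl := by
        simp only [hScl, Finset.mem_filter, Finset.mem_univ, true_and]
        exact ⟨hxk, 0, by simp⟩
      set g : Fin n → ℚ := fun y =>
        (if h : ∃ q : ℚ, α y - α x = (q : ℂ) then Classical.choose h else 0)
          + 1 - 1/(ℓ y : ℚ) with hg
      have hgcast : ∀ y ∈ Scl, ((g y : ℚ) : ℂ) = (α y - α x) + 1 - 1/(ℓ y : ℂ) := by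
        intro y hy
        have hq : ∃ q : ℚ, α y - α x = (q : ℂ) := by
          have := Finset.mem_filter.mp hy
          exact this.2.2
        have hcs := Classical.choose_spec hq
        simp only [hg]
        rw [dif_pos hq]
        push_cast
        rw [← hcs]
      have hTne : (Scl.image g).Nonempty := ⟨g x, Finset.mem_image_of_mem g hxScl⟩
      set σmax : ℚ := (Scl.image g).max' hTne with hσ
      obtain ⟨ys, hysScl, hgys⟩ := Finset.mem_image.mp ((Scl.image g).max'_mem hTne)
      have hle : ∀ y ∈ Scl, g y ≤ σmax := fun y hy =>
        Finset.le_max' _ (g y) (Finset.mem_image_of_mem g hy)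
      have hysk : (ys : ℕ) < k := (Finset.mem_filter.mp hysScl).2.1
      set t : ℂ := α x + (σmax : ℂ) with htdef
      have hbnn : (((ℓ ys - 1).toNat : ℕ) : ℂ) = (ℓ ys : ℂ) - 1 := by
        have h0 : ((ℓ ys - 1).toNat : ℤ) = ℓ ys - 1 :=
          Int.toNat_of_nonneg (by have := hℓpos ys; omega)
        exact_mod_cast h0
      have hwit : v ys + t * ℓ ys = (((ℓ ys - 1).toNat : ℕ) : ℂ) := by
        rw [hα ys t, hbnn]
        have hgys' : g ys = σmax := by rw [hσ]; exact hgys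
        have h1 : t - α ys = 1 - 1/(ℓ ys : ℂ) := by
          rw [htdef, ← hgys']
          have h2 := hgcast ys hysScl
          linear_combination h2
        rw [h1]
        have h := hLne ys
        field_simp
      have hnoneg : ∀ j : Fin n, (j : ℕ) < k → ∀ m : ℤ, m < 0 →
          v j + t * ℓ j ≠ (m : ℂ) := by
        intro z hzk m hm heq
        rw [hα z t] at heq
        have hLz := hLne z
        have hdiv : t - α z = (m : ℂ)/(ℓ z : ℂ) := by
          field_simp
          linear_combination heq
        rw [htdef] at hdiv
        have hαz : α z - α x = (((σmax - (m : ℚ)/(ℓ z : ℚ)) : ℚ) : ℂ) := by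
          push_cast
          linear_combination -hdiv
        have hzScl : z ∈ Scl := by
          simp only [hScl, Finset.mem_filter, Finset.mem_univ, true_and]
          exact ⟨hzk, _, hαz⟩
        have hgz := hgcast z hzScl
        have hgzQ : g z = σmax - (m : ℚ)/(ℓ z : ℚ) + 1 - 1/(ℓ z : ℚ) := by
          have h3 : ((g z : ℚ) : ℂ) = (((σmax - (m : ℚ)/(ℓ z : ℚ) + 1 - 1/(ℓ z : ℚ)) : ℚ) : ℂ) := by
            rw [hgz, hαz]
            push_cast
            ring
          exact_mod_cast h3
        have hlez := hle z hzScl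
        rw [hgzQ] at hlez
        have hL := hLQpos z
        have hL1' := hLQ1 z
        have hm' : (m : ℚ) ≤ -1 := by exact_mod_cast (by omega : m ≤ -1)
        have h3 : (-(m : ℚ)) / (ℓ z : ℚ) + 1 - 1/(ℓ z : ℚ) ≤ 0 := by
          have : (-(m : ℚ))/(ℓ z : ℚ) = -((m : ℚ)/(ℓ z : ℚ)) := by ring
          rw [this]; linarith
        have h4 : ((-(m : ℚ)) - 1) / (ℓ z : ℚ) ≤ -1 := by
          rw [sub_div]; linarith
        rw [div_le_iff₀ hL] at h4
        have h5 : (0:ℚ) ≤ -(m:ℚ) - 1 := by linarith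
        nlinarith
      have hgoodt := huniq t ⟨⟨ys, hysk, (ℓ ys - 1).toNat,
        (by have := hℓpos ys; omega), hwit⟩, hnoneg⟩
      rw [htdef] at hgoodt
      refine ⟨σmax, by linear_combination hgoodt, ?_⟩
      have hgx : g x = 1 - 1/(ℓ x : ℚ) := by
        have h := hgcast x hxScl
        have h2 : (((1 - 1/(ℓ x : ℚ)) : ℚ) : ℂ) = (α x - α x) + 1 - 1/(ℓ x : ℂ) := by
          push_cast; ring
        exact_mod_cast h.trans h2.symm
      have := hle x hxScl
      rw [hgx] at this
      exact this
    -- choose Q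
    have step1' : ∀ x : Fin n, ∃ Qx : ℚ, (x : ℕ) < k →
        ((Qx : ℂ) = t0 - α x ∧ 1 - 1/(ℓ x : ℚ) ≤ Qx) := by
      intro x
      by_cases h : (x : ℕ) < k
      · exact (step1 x h).imp fun q hq => fun _ => hq
      · exact ⟨0, fun hc => absurd hc h⟩
    choose Q hQ using step1'
    -- candidate set
    set Cand : Finset ℚ := (Finset.univ.filter (fun i : Fin n => (i : ℕ) < k)).biUnion
      (fun i => (Finset.range (ℓ i).toNat).image (fun b : ℕ => Q i - (b : ℚ)/(ℓ i : ℚ))) with hCand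
    have hmem : ∀ r : ℚ, r ∈ Cand ↔
        ∃ i : Fin n, (i : ℕ) < k ∧ ∃ b : ℕ, (b : ℤ) < ℓ i ∧ r = Q i - (b : ℚ)/(ℓ i : ℚ) := by
      intro r
      simp only [hCand, Finset.mem_biUnion, Finset.mem_filter, Finset.mem_univ, true_and,
        Finset.mem_image, Finset.mem_range]
      constructor
      · rintro ⟨i, hi, b, hb, he⟩
        exact ⟨i, hi, b, by omega, he.symm⟩
      · rintro ⟨i, hi, b, hb, he⟩
        exact ⟨i, hi, b, by omega, he.symm⟩
    have hQCand : ∀ i : Fin n, (i : ℕ) < k → Q i ∈ Cand := by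
      intro i hi
      exact (hmem _).mpr ⟨i, hi, 0, hℓpos i, by norm_num⟩
    have hQs : ∀ i : Fin n, (i : ℕ) < k → 2 ≤ ℓ i → Q i - 1/(ℓ i : ℚ) ∈ Cand := by
      intro i hi h2
      exact (hmem _).mpr ⟨i, hi, 1, by omega, by norm_num⟩
    have hK3 : ∀ r ∈ Cand, (0:ℚ) ≤ r := by
      intro r hr
      obtain ⟨i, hik, b, hb, rfl⟩ := (hmem r).mp hr
      have hQi := (hQ i hik).2
      have hL := hLQpos i
      have hb' : (b : ℚ) ≤ (ℓ i : ℚ) - 1 := by exact_mod_cast (by omega : (b:ℤ) ≤ ℓ i - 1)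
      have e : (1 - 1/(ℓ i : ℚ)) * (ℓ i : ℚ) = (ℓ i : ℚ) - 1 := by
        field_simp
      have hdle : (b : ℚ)/(ℓ i : ℚ) ≤ 1 - 1/(ℓ i : ℚ) := by
        rw [div_le_iff₀ hL, e]; exact hb'
      linarith
    have hK1 : ∀ r ∈ Cand, r ≠ 0 →
        ∃ z : Fin n, (z : ℕ) < k ∧ ∃ w : ℤ, 1 ≤ w ∧ (w : ℚ) = (r - Q z) * (ℓ z : ℚ) := by
      intro r hr hr0
      obtain ⟨i, hik, b, hb, hre⟩ := (hmem r).mp hr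
      set t : ℂ := t0 - (r : ℂ) with ht
      have hQi := (hQ i hik).1
      have hLi := hLne i
      have hwit : v i + t * ℓ i = (b : ℂ) := by
        rw [hα i t]
        have hrC : (r : ℂ) = (Q i : ℂ) - (b : ℂ)/(ℓ i : ℂ) := by
          rw [hre]; push_cast; ring
        have h1 : t - α i = (b : ℂ)/(ℓ i : ℂ) := by
          rw [ht, hrC]; linear_combination -hQi
        rw [h1]
        field_simp
      have hneq : t ≠ t0 := by
        rw [ht]
        intro h
        apply hr0
        have h2 : ((r : ℚ) : ℂ) = 0 := by linear_combination -h
        exact_mod_cast h2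
      have hbad : ∃ z : Fin n, (z : ℕ) < k ∧ ∃ m : ℤ, m < 0 ∧ v z + t * ℓ z = (m : ℂ) := by
        by_contra hno
        exact hneq (huniq t ⟨⟨i, hik, b, hb, hwit⟩,
          fun j hj m hm he => hno ⟨j, hj, m, hm, he⟩⟩)
      obtain ⟨z, hzk, m, hm, heq⟩ := hbad
      refine ⟨z, hzk, -m, by omega, ?_⟩
      have hQz := (hQ z hzk).1
      rw [hα z t, ht] at heq
      have h3 : (((r - Q z) * (ℓ z : ℚ) : ℚ) : ℂ) = ((-m : ℤ) : ℂ) := by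
        push_cast
        linear_combination -heq - (ℓ z : ℂ) * hQz
      exact_mod_cast h3.symm
    -- gap helper
    have hgap : ∀ z : Fin n, 2 ≤ ℓ z → ∀ mz m' : ℕ, (1:ℚ)/(ℓ z : ℚ) ≠ (mz : ℚ) - (m' : ℚ) := by
      intro z hz mz m' h
      have hL := hLQpos z
      have hL2 : (2:ℚ) ≤ (ℓ z : ℚ) := by exact_mod_cast hz
      have h0 : (0:ℚ) < 1/(ℓ z : ℚ) := by positivity
      have h1 : (1:ℚ)/(ℓ z : ℚ) < 1 := by rw [div_lt_one hL]; linarith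
      rcases le_or_gt mz m' with hc | hc
      · have : (mz : ℚ) ≤ (m' : ℚ) := by exact_mod_cast hc
        linarith
      · have : (m' : ℚ) + 1 ≤ (mz : ℚ) := by exact_mod_cast hc
        linarith
    -- integer-case helper
    have hintcase : ∀ r : ℚ, 0 ≤ r → ∀ (mz : ℕ) (w : ℤ), r = (mz : ℚ) + (w : ℚ) →
        ∃ m : ℕ, (m : ℚ) = r := by
      intro r hr mz w hre
      have h0 : (0:ℤ) ≤ (mz : ℤ) + w := by
        have h1 : (0:ℚ) ≤ (((mz : ℤ) + w : ℤ) : ℚ) := by push_cast; linarith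
        exact_mod_cast h1
      refine ⟨((mz : ℤ) + w).toNat, ?_⟩
      have h2 : ((((mz : ℤ) + w).toNat : ℤ) : ℚ) = ((mz : ℤ) : ℚ) + (w : ℚ) := by
        rw [Int.toNat_of_nonneg h0]; push_cast; ring
      rw [hre]
      push_cast at h2 ⊢
      linarith
    -- main induction
    have hS : ∀ N : ℕ, ∀ r ∈ Cand, r < (N : ℚ) → ∃ m : ℕ, (m : ℚ) = r := by
      intro N
      induction N with
      | zero =>
        intro r hr hrN
        exact absurd (hK3 r hr) (not_le.mpr (by simpa using hrN))
      | succ N ih =>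
        intro r hr hrN
        by_contra hno
        set Bad : Finset ℚ := Cand.filter
          (fun s => s < ((N+1 : ℕ) : ℚ) ∧ ¬ ∃ m : ℕ, (m : ℚ) = s) with hBad
        have hrBad : r ∈ Bad := Finset.mem_filter.mpr ⟨hr, hrN, hno⟩
        have hBne : Bad.Nonempty := ⟨r, hrBad⟩
        set r0 : ℚ := Bad.min' hBne with hr0def
        have hr0Bad : r0 ∈ Bad := Bad.min'_mem hBne
        have hr0C : r0 ∈ Cand := (Finset.mem_filter.mp hr0Bad).1
        have hr0N : r0 < ((N+1 : ℕ) : ℚ) := (Finset.mem_filter.mp hr0Bad).2.1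
        have hr0no : ¬ ∃ m : ℕ, (m : ℚ) = r0 := (Finset.mem_filter.mp hr0Bad).2.2
        have hr0min : ∀ s ∈ Bad, r0 ≤ s := fun s hs => Bad.min'_le s hs
        have hr0pos : r0 ≠ 0 := fun h => hr0no ⟨0, by simp [h]⟩
        obtain ⟨z, hzk, w, hw1, hweq⟩ := hK1 r0 hr0C hr0pos
        have hL := hLQpos z
        have hQzval : Q z = r0 - (w : ℚ)/(ℓ z : ℚ) := by
          field_simp
          linear_combination hweq
        have hwpos : (0:ℚ) < (w : ℚ) := by exact_mod_cast hw1
        have hQzlt : Q z < r0 := by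
          have hd : (0:ℚ) < (w : ℚ)/(ℓ z : ℚ) := div_pos hwpos hL
          linarith [hQzval]
        have hQzC : Q z ∈ Cand := hQCand z hzk
        have hQzInt : ∃ mz : ℕ, (mz : ℚ) = Q z := by
          rcases lt_or_ge (Q z) (N : ℚ) with hc | hc
          · exact ih (Q z) hQzC hc
          · by_contra hnoz
            have hQzBad : Q z ∈ Bad :=
              Finset.mem_filter.mpr ⟨hQzC, lt_trans hQzlt hr0N, hnoz⟩
            have := hr0min _ hQzBad
            linarith
        obtain ⟨mz, hmz⟩ := hQzInt
        by_cases h1 : ℓ z = 1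
        · have hLz1 : (ℓ z : ℚ) = 1 := by rw [h1]; norm_num
          rw [hLz1, div_one] at hQzval
          have hre : r0 = (mz : ℚ) + (w : ℚ) := by rw [← hmz] at hQzval; linarith
          exact hr0no (hintcase r0 (hK3 r0 hr0C) mz w hre)
        · have h2 : 2 ≤ ℓ z := by have := hℓpos z; omega
          have hcC : Q z - 1/(ℓ z : ℚ) ∈ Cand := hQs z hzk h2
          have hinv : (0:ℚ) < 1/(ℓ z : ℚ) := by positivity
          have hcltN : Q z - 1/(ℓ z : ℚ) < (N : ℚ) := by
            rcases lt_or_ge (Q z) (N : ℚ) with hc | hc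
            · linarith
            · have hmzN : mz = N := by
                have hu : (mz : ℚ) < ((N+1 : ℕ) : ℚ) := by
                  rw [hmz]; exact lt_trans hQzlt hr0N
                have hl : (N : ℚ) ≤ (mz : ℚ) := by rw [hmz]; exact hc
                have h5 : mz < N+1 := by exact_mod_cast hu
                have h6 : N ≤ mz := by exact_mod_cast hl
                omega
              rw [← hmz, hmzN]
              linarith
          obtain ⟨m', hm'⟩ := ih _ hcC hcltN
          exact hgap z h2 mz m' (by linear_combination hm' - hmz)
    have hQnat : ∀ i : Fin n, (i : ℕ) < k → ∃ m : ℕ, (m : ℚ) = Q i := by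
      intro i hi
      obtain ⟨N, hN⟩ := exists_nat_gt (Q i)
      exact hS N (Q i) (hQCand i hi) hN
    have honeall : ∀ i : Fin n, (i : ℕ) < k → ℓ i = 1 := by
      intro i hi
      by_contra h1
      have h2 : 2 ≤ ℓ i := by have := hℓpos i; omega
      obtain ⟨mz, hmz⟩ := hQnat i hi
      obtain ⟨N, hN⟩ := exists_nat_gt (Q i)
      have hinv : (0:ℚ) < 1/(ℓ i : ℚ) := by positivity
      obtain ⟨m', hm'⟩ := hS N _ (hQs i hi h2) (by linarith)
      exact hgap i h2 mz m' (by linear_combination hm' - hmz)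
    refine ⟨⟨t0, ?_⟩, honeall⟩
    intro i hi
    obtain ⟨m, hm⟩ := hQnat i hi
    refine ⟨m, ?_⟩
    rw [hα i t0]
    have hQi := (hQ i hi).1
    have hL1c : (ℓ i : ℂ) = 1 := by rw [honeall i hi]; norm_num
    rw [hL1c, mul_one]
    have hmC : ((m : ℕ) : ℂ) = ((Q i : ℚ) : ℂ) := by exact_mod_cast hm
    rw [hmC, hQi]
  · -- easy direction
    rintro ⟨⟨t0, hall⟩, hone⟩
    have hL1 : ∀ i : Fin n, (i : ℕ) < k → (ℓ i : ℂ) = 1 := fun i hi => by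
      rw [hone i hi]; norm_num
    have hex : ∀ i : Fin n, ∃ b : ℕ, (i : ℕ) < k → v i + t0 = (b : ℂ) := by
      intro i
      by_cases h : (i : ℕ) < k
      · obtain ⟨b, hb⟩ := hall i h
        rw [hL1 i h, mul_one] at hb
        exact ⟨b, fun _ => hb⟩
      · exact ⟨0, fun hc => absurd hc h⟩
    choose B hB using hex
    obtain ⟨im, him, hmin'⟩ := Finset.exists_min_image
      (Finset.univ.filter (fun i : Fin n => (i : ℕ) < k)) B ⟨i0, by simp [hi0k]⟩
    have himk : (im : ℕ) < k := by simpa using him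
    have hmin : ∀ j : Fin n, (j : ℕ) < k → B im ≤ B j := fun j hj => hmin' j (by simp [hj])
    refine ⟨t0 - (B im : ℂ), ⟨⟨im, himk, 0, by rw [hone im himk]; norm_num, ?_⟩, ?_⟩, ?_⟩
    · rw [hL1 im himk, mul_one]
      have h := hB im himk
      push_cast
      linear_combination h
    · intro j hj m hm heq
      rw [hL1 j hj, mul_one] at heq
      have hBj := hB j hj
      have key : (((B j : ℤ) - (B im : ℤ) : ℤ) : ℂ) = (m : ℂ) := by
        push_cast
        linear_combination heq - hBj
      have key2 : (B j : ℤ) - (B im : ℤ) = m := by exact_mod_cast key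
      have := hmin j hj
      omega
    · rintro t ⟨⟨i, hik, b, hbl, heq⟩, hneg⟩
      rw [hone i hik] at hbl
      have hb0 : b = 0 := by omega
      rw [hL1 i hik, mul_one, hb0] at heq
      have hBi := hB i hik
      have ht : t = t0 - (B i : ℂ) := by
        push_cast at heq
        linear_combination heq - hBi
      set m : ℤ := (B im : ℤ) - (B i : ℤ) with hm
      have hnotlt : ¬ m < 0 := by
        intro hmlt
        refine hneg im himk m hmlt ?_
        rw [hL1 im himk, mul_one, ht]
        have hBim := hB im himk
        have hmC : (m : ℂ) = (B im : ℂ) - (B i : ℂ) := by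
          rw [hm]; push_cast; ring
        linear_combination hBim - hmC
      have : B i = B im := le_antisymm (by omega) (hmin i hik)
      rw [ht, this]

/-- Proposition 9.2: E'_β is a singleton iff β ∈ ∑_{i≤k} ℤ_{≥0} a_i + ∑_{j>k} ℂ a_j and ℓ_i = 1 for all i ≤ k. -/
theorem stmt_18 (d n k : ℕ) (hd : 1 ≤ d) (hn : 2 ≤ n) (hk1 : 1 ≤ k) (hkn : k ≤ n)
    (a : Fin n → Fin d → ℤ)
    (aR : Fin n → Fin d → ℝ) (haR : ∀ μ i, aR μ i = (a μ i : ℝ))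
    (hdim : Module.finrank ℝ (Submodule.span ℝ (Set.range aR)) = n - 1)
    (hindep : ∀ μ₀ : Fin n,
      LinearIndependent ℝ (fun ν : {ν : Fin n // ν ≠ μ₀} => aR ν.1))
    (ℓ : Fin n → ℤ) (hℓpos : ∀ μ, 0 < ℓ μ)
    (ℓs : Fin n → ℤ) (hℓs : ∀ μ : Fin n, ℓs μ = if (μ : ℕ) < k then ℓ μ else -ℓ μ)
    (hlat : ∀ l : Fin n → ℤ, (∑ μ, l μ • a μ) = 0 ↔ ∃ z : ℤ, l = z • ℓs)
    (aC : Fin n → Fin d → ℂ) (haC : ∀ μ i, aC μ i = (a μ i : ℂ))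
    (E E' : (Fin d → ℂ) → Set (Fin n → ℂ))
    (hE : ∀ (γ : Fin d → ℂ) (v : Fin n → ℂ), v ∈ E γ ↔
      (∑ μ, v μ • aC μ) = γ ∧
        ∃ i : Fin n, (i : ℕ) < k ∧ ∃ b : ℕ, (b : ℤ) < ℓ i ∧ v i = (b : ℂ))
    (hE' : ∀ (γ : Fin d → ℂ) (v : Fin n → ℂ), v ∈ E' γ ↔
      v ∈ E γ ∧ ∀ i : Fin n, (i : ℕ) < k → ∀ m : ℤ, m < 0 → v i ≠ (m : ℂ))
    (β : Fin d → ℂ) (hβ : β ∈ Submodule.span ℂ (Set.range aC))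
    : (∃! v : Fin n → ℂ, v ∈ E' β) ↔
      ((∃ c : Fin n → ℂ, β = (∑ μ, c μ • aC μ) ∧
          ∀ i : Fin n, (i : ℕ) < k → ∃ b : ℕ, c i = (b : ℂ)) ∧
        ∀ i : Fin n, (i : ℕ) < k → ℓ i = 1) := by
  classical
  have hn0 : 0 < n := by omega
  set i0 : Fin n := ⟨0, hn0⟩ with hi0
  have hi0k : (i0 : ℕ) < k := hk1
  -- ℓs casts
  have hℓsC : ∀ i : Fin n, (i : ℕ) < k → ((ℓs i : ℤ) : ℂ) = ((ℓ i : ℤ) : ℂ) := by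
    intro i hi; rw [hℓs i, if_pos hi]
  -- kernel over ℤ
  have hker0 : (∑ μ, ℓs μ • a μ) = 0 := (hlat ℓs).mpr ⟨1, (one_smul _ _).symm⟩
  have hker0' : ∀ i : Fin d, (∑ μ, ℓs μ * a μ i) = 0 := by
    intro i
    have h := congrFun hker0 i
    simpa [Finset.sum_apply] using h
  -- kernel sum over ℂ
  have hkerCsum : (∑ μ, (ℓs μ : ℂ) • aC μ) = 0 := by
    funext i
    show (∑ μ, (ℓs μ : ℂ) • aC μ) i = (0 : ℂ)
    rw [Finset.sum_apply]
    have h2 : ((∑ μ, ℓs μ * a μ i : ℤ) : ℂ) = 0 := by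
      rw [hker0' i]; norm_num
    calc ∑ μ, ((ℓs μ : ℂ) • aC μ) i = ∑ μ, ((ℓs μ * a μ i : ℤ) : ℂ) := by
          refine Finset.sum_congr rfl fun μ _ => ?_
          rw [Pi.smul_apply, smul_eq_mul, haC]; push_cast; ring
      _ = ((∑ μ, ℓs μ * a μ i : ℤ) : ℂ) := by push_cast; rfl
      _ = 0 := h2
  -- real kernel data
  set wR : Fin n → ℝ := fun μ => (ℓs μ : ℝ) with hwR
  have hwk : (∑ μ, wR μ • aR μ) = 0 := by
    funext i
    show (∑ μ, wR μ • aR μ) i = (0 : ℝ)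
    rw [Finset.sum_apply]
    have h2 : ((∑ μ, ℓs μ * a μ i : ℤ) : ℝ) = 0 := by
      rw [hker0' i]; norm_num
    calc ∑ μ, (wR μ • aR μ) i = ∑ μ, ((ℓs μ * a μ i : ℤ) : ℝ) := by
          refine Finset.sum_congr rfl fun μ _ => ?_
          rw [Pi.smul_apply, smul_eq_mul, haR, hwR]; push_cast; ring
      _ = ((∑ μ, ℓs μ * a μ i : ℤ) : ℝ) := by push_cast; rfl
      _ = 0 := h2
  have hwne : wR ≠ 0 := by
    intro h
    have h0 : ((ℓs i0 : ℤ) : ℝ) = 0 := by simpa [hwR] using congrFun h i0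
    have : ℓs i0 = 0 := by exact_mod_cast h0
    rw [hℓs i0, if_pos hi0k] at this
    exact absurd this (hℓpos i0).ne'
  -- complex kernel
  have hker : ∀ x : Fin n → ℂ, (∑ μ, x μ • aC μ) = 0 → ∃ t : ℂ, ∀ μ, x μ = t * (ℓs μ : ℂ) := by
    intro x hx
    have hxi : ∀ i : Fin d, (∑ μ, x μ * ((a μ i : ℤ) : ℂ)) = 0 := by
      intro i
      have h := congrFun hx i
      simpa [Finset.sum_apply, haC] using h
    have hre : (∑ μ, (fun μ => (x μ).re) μ • aR μ) = 0 := by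
      funext i
      show (∑ μ, (fun μ => (x μ).re) μ • aR μ) i = (0 : ℝ)
      rw [Finset.sum_apply]
      have h := congrArg Complex.re (hxi i)
      rw [Complex.re_sum] at h
      simp only [Complex.mul_re, Complex.intCast_re, Complex.intCast_im, mul_zero,
        sub_zero, Complex.zero_re] at h
      calc ∑ μ, ((fun μ => (x μ).re) μ • aR μ) i = ∑ μ, (x μ).re * (a μ i : ℝ) := by
            refine Finset.sum_congr rfl fun μ _ => ?_
            rw [Pi.smul_apply, smul_eq_mul, haR]
        _ = 0 := h
    have him : (∑ μ, (fun μ => (x μ).im) μ • aR μ) = 0 := by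
      funext i
      show (∑ μ, (fun μ => (x μ).im) μ • aR μ) i = (0 : ℝ)
      rw [Finset.sum_apply]
      have h := congrArg Complex.im (hxi i)
      rw [Complex.im_sum] at h
      simp only [Complex.mul_im, Complex.intCast_re, Complex.intCast_im, mul_zero,
        zero_add, Complex.zero_im] at h
      calc ∑ μ, ((fun μ => (x μ).im) μ • aR μ) i = ∑ μ, (x μ).im * (a μ i : ℝ) := by
            refine Finset.sum_congr rfl fun μ _ => ?_
            rw [Pi.smul_apply, smul_eq_mul, haR]
        _ = 0 := h
    obtain ⟨s, hs⟩ := aux_kerR n d hn aR hdim wR hwne hwk _ hre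
    obtain ⟨s', hs'⟩ := aux_kerR n d hn aR hdim wR hwne hwk _ him
    refine ⟨(s : ℂ) + (s' : ℂ) * Complex.I, fun μ => ?_⟩
    have h1 : (x μ).re = s * (ℓs μ : ℝ) := by
      have := congrFun hs μ
      simpa [hwR] using this
    have h2 : (x μ).im = s' * (ℓs μ : ℝ) := by
      have := congrFun hs' μ
      simpa [hwR] using this
    have h3 : ((s : ℂ) + (s' : ℂ) * Complex.I) * (ℓs μ : ℂ) =
        ((s * (ℓs μ : ℝ) : ℝ) : ℂ) + ((s' * (ℓs μ : ℝ) : ℝ) : ℂ) * Complex.I := by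
      push_cast; ring
    rw [h3, ← h1, ← h2]
    exact (Complex.re_add_im (x μ)).symm
  -- fix a base solution
  obtain ⟨v0, hv0⟩ := (Submodule.mem_span_range_iff_exists_fun ℂ).mp hβ
  -- sum along the line
  have hWsum : ∀ t : ℂ, (∑ μ, (v0 μ + t * (ℓs μ : ℂ)) • aC μ) = β := by
    intro t
    have e1 : (∑ μ, (v0 μ + t * (ℓs μ : ℂ)) • aC μ) =
        (∑ μ, v0 μ • aC μ) + ∑ μ, (t * (ℓs μ : ℂ)) • aC μ := by
      rw [← Finset.sum_add_distrib]
      exact Finset.sum_congr rfl fun μ _ => by rw [← add_smul]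
    have e2 : (∑ μ, (t * (ℓs μ : ℂ)) • aC μ) = t • ∑ μ, (ℓs μ : ℂ) • aC μ := by
      rw [Finset.smul_sum]
      exact Finset.sum_congr rfl fun μ _ => (smul_smul t _ _).symm
    rw [e1, e2, hkerCsum, smul_zero, add_zero, hv0]
  -- membership characterization
  have hE'char : ∀ vv : Fin n → ℂ, vv ∈ E' β ↔ ∃ t : ℂ,
      (∀ μ, vv μ = v0 μ + t * (ℓs μ : ℂ)) ∧
      ((∃ i : Fin n, (i : ℕ) < k ∧ ∃ b : ℕ, (b : ℤ) < ℓ i ∧ v0 i + t * (ℓ i : ℂ) = (b : ℂ)) ∧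
       (∀ j : Fin n, (j : ℕ) < k → ∀ m : ℤ, m < 0 → v0 j + t * (ℓ j : ℂ) ≠ (m : ℂ))) := by
    intro vv
    constructor
    · intro hv
      obtain ⟨hvE, hvneg⟩ := (hE' β vv).mp hv
      obtain ⟨hsum, i, hik, b, hbl, hvi⟩ := (hE β vv).mp hvE
      have hdiff : (∑ μ, (vv μ - v0 μ) • aC μ) = 0 := by
        have e : (∑ μ, (vv μ - v0 μ) • aC μ) =
            (∑ μ, vv μ • aC μ) - ∑ μ, v0 μ • aC μ := by
          rw [← Finset.sum_sub_distrib]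
          exact Finset.sum_congr rfl fun μ _ => sub_smul _ _ _
        rw [e, hsum, hv0, sub_self]
      obtain ⟨t, ht⟩ := hker _ hdiff
      have hvall : ∀ μ, vv μ = v0 μ + t * (ℓs μ : ℂ) := fun μ => by
        linear_combination ht μ
      refine ⟨t, hvall, ⟨i, hik, b, hbl, ?_⟩, ?_⟩
      · rw [← hℓsC i hik, ← hvall i]
        exact hvi
      · intro j hj m hm
        rw [← hℓsC j hj, ← hvall j]
        exact hvneg j hj m hm
    · rintro ⟨t, hvall, ⟨i, hik, b, hbl, hwit⟩, hneg⟩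
      refine (hE' β vv).mpr ⟨(hE β vv).mpr ⟨?_, i, hik, b, hbl, ?_⟩, ?_⟩
      · have e : (∑ μ, vv μ • aC μ) = ∑ μ, (v0 μ + t * (ℓs μ : ℂ)) • aC μ :=
          Finset.sum_congr rfl fun μ _ => by rw [hvall μ]
        rw [e, hWsum t]
      · rw [hvall i, hℓsC i hik]
        exact hwit
      · intro j hj m hm
        rw [hvall j, hℓsC j hj]
        exact hneg j hj m hm
  have hl0C : ((ℓs i0 : ℤ) : ℂ) ≠ 0 := by
    rw [hℓsC i0 hi0k]
    exact_mod_cast (hℓpos i0).ne'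
  have hcore := aux_core n k hn hk1 hkn v0 ℓ hℓpos
  constructor
  · rintro ⟨vv, hvv, hvuniq⟩
    obtain ⟨t1, hvall1, hgood1⟩ := (hE'char vv).mp hvv
    have huniqT : ∃! t : ℂ,
        (∃ i : Fin n, (i : ℕ) < k ∧ ∃ b : ℕ, (b : ℤ) < ℓ i ∧ v0 i + t * (ℓ i : ℂ) = (b : ℂ)) ∧
        (∀ j : Fin n, (j : ℕ) < k → ∀ m : ℤ, m < 0 → v0 j + t * (ℓ j : ℂ) ≠ (m : ℂ)) := by
      refine ⟨t1, hgood1, ?_⟩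
      intro t' hgood'
      have hmem' : (fun μ => v0 μ + t' * (ℓs μ : ℂ)) ∈ E' β :=
        (hE'char _).mpr ⟨t', fun μ => rfl, hgood'⟩
      have heqv := hvuniq _ hmem'
      have h0 := congrFun heqv i0
      rw [hvall1 i0] at h0
      have h1 : t' * ((ℓs i0 : ℤ) : ℂ) = t1 * ((ℓs i0 : ℤ) : ℂ) := by
        linear_combination h0
      exact mul_right_cancel₀ hl0C h1
    obtain ⟨⟨t, hall⟩, hone⟩ := hcore.mp huniqT
    refine ⟨⟨fun μ => v0 μ + t * (ℓs μ : ℂ), (hWsum t).symm, ?_⟩, hone⟩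
    intro i hi
    obtain ⟨b, hb⟩ := hall i hi
    refine ⟨b, ?_⟩
    show v0 i + t * ((ℓs i : ℤ) : ℂ) = (b : ℂ)
    rw [hℓsC i hi]
    exact hb
  · rintro ⟨⟨c, hc, hcnat⟩, hone⟩
    have hdiff : (∑ μ, (c μ - v0 μ) • aC μ) = 0 := by
      have e : (∑ μ, (c μ - v0 μ) • aC μ) =
          (∑ μ, c μ • aC μ) - ∑ μ, v0 μ • aC μ := by
        rw [← Finset.sum_sub_distrib]
        exact Finset.sum_congr rfl fun μ _ => sub_smul _ _ _
      rw [e, ← hc, hv0, sub_self]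
    obtain ⟨t, ht⟩ := hker _ hdiff
    have hallt : ∀ i : Fin n, (i : ℕ) < k → ∃ b : ℕ, v0 i + t * (ℓ i : ℂ) = (b : ℂ) := by
      intro i hi
      obtain ⟨b, hb⟩ := hcnat i hi
      refine ⟨b, ?_⟩
      rw [← hℓsC i hi]
      have := ht i
      linear_combination hb - this
    obtain ⟨t2, hgood2, htuniq⟩ := hcore.mpr ⟨⟨t, hallt⟩, hone⟩
    refine ⟨fun μ => v0 μ + t2 * (ℓs μ : ℂ), (hE'char _).mpr ⟨t2, fun μ => rfl, hgood2⟩, ?_⟩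
    intro vv hvv
    obtain ⟨t3, hvall3, hgood3⟩ := (hE'char vv).mp hvv
    have ht32 : t3 = t2 := htuniq t3 hgood3
    funext μ
    rw [hvall3 μ, ht32]
end

section
/- Suppose β is nonresonant, suppose ℓ_i = 1 for every i ∈ {1,…,k}, and let v ∈ E'_β be such that v_i is a nonnegative integer for every i ∈ {1,…,k}. Then the following are equivalent: (i) for every subset T ⊆ {1,…,n} whose complement in {1,…,n} has at most k−1 elements, every integer z with T-nsupp(v + z·ℓ) = T-nsupp(v) satisfies z ≥ 0; (ii) v_i = 0 for every i ∈ {1,…,k}. (Lemma 9.4, determining when the coefficients of powers of log x_0 contain only nonnegative powers of x_0.) -/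
/-- Lemma 9.4: with ℓ_i = 1 for i ≤ k and v ∈ E'_β having v_i ∈ ℤ_{≥0} for all i ≤ k, the sets ℤ_{v,T}(0,0) are all contained in ℤ_{≥0} (over T with complement of size ≤ k−1) iff v_i = 0 for all i ≤ k. -/
theorem stmt_19 (d n k : ℕ) (hd : 1 ≤ d) (hn : 2 ≤ n) (hk1 : 1 ≤ k) (hkn : k ≤ n)
    (a : Fin n → Fin d → ℤ)
    (aR : Fin n → Fin d → ℝ) (haR : ∀ μ i, aR μ i = (a μ i : ℝ))
    (hdim : Module.finrank ℝ (Submodule.span ℝ (Set.range aR)) = n - 1)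
    (hindep : ∀ μ₀ : Fin n,
      LinearIndependent ℝ (fun ν : {ν : Fin n // ν ≠ μ₀} => aR ν.1))
    (ℓ : Fin n → ℤ) (hℓpos : ∀ μ, 0 < ℓ μ)
    (ℓs : Fin n → ℤ) (hℓs : ∀ μ : Fin n, ℓs μ = if (μ : ℕ) < k then ℓ μ else -ℓ μ)
    (hlat : ∀ l : Fin n → ℤ, (∑ μ, l μ • a μ) = 0 ↔ ∃ z : ℤ, l = z • ℓs)
    (aC : Fin n → Fin d → ℂ) (haC : ∀ μ i, aC μ i = (a μ i : ℂ))
    (E E' : (Fin d → ℂ) → Set (Fin n → ℂ))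
    (hE : ∀ (γ : Fin d → ℂ) (v : Fin n → ℂ), v ∈ E γ ↔
      (∑ μ, v μ • aC μ) = γ ∧
        ∃ i : Fin n, (i : ℕ) < k ∧ ∃ b : ℕ, (b : ℤ) < ℓ i ∧ v i = (b : ℂ))
    (hE' : ∀ (γ : Fin d → ℂ) (v : Fin n → ℂ), v ∈ E' γ ↔
      v ∈ E γ ∧ ∀ i : Fin n, (i : ℕ) < k → ∀ m : ℤ, m < 0 → v i ≠ (m : ℂ))
    (β : Fin d → ℂ) (hβ : β ∈ Submodule.span ℂ (Set.range aC))
    (hnr : ∀ i j : Fin n, (i : ℕ) < k → k ≤ (j : ℕ) → ∀ c : Fin n → ℤ,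
      β + ∑ μ, (c μ : ℂ) • aC μ ∉
        Submodule.span ℂ (aC '' {μ : Fin n | μ ≠ i ∧ μ ≠ j}))
    (hℓ1 : ∀ i : Fin n, (i : ℕ) < k → ℓ i = 1)
    (v : Fin n → ℂ) (hv : v ∈ E' β)
    (hvint : ∀ i : Fin n, (i : ℕ) < k → ∃ b : ℕ, v i = (b : ℂ)) :
    (∀ T : Finset (Fin n), Tᶜ.card ≤ k - 1 →
        ∀ z : ℤ,
          ({μ : Fin n | μ ∈ T ∧ ∃ m : ℤ, m < 0 ∧ v μ + ((z * ℓs μ : ℤ) : ℂ) = (m : ℂ)} =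
            {μ : Fin n | μ ∈ T ∧ ∃ m : ℤ, m < 0 ∧ v μ = (m : ℂ)}) → 0 ≤ z) ↔
      (∀ i : Fin n, (i : ℕ) < k → v i = 0) := by
  classical
  have hsum : ∑ μ, v μ • aC μ = β := ((hE β v).mp ((hE' β v).mp hv).1).1
  -- v j is not an integer for j ≥ k
  have hnint : ∀ j : Fin n, k ≤ (j : ℕ) → ∀ m : ℤ, v j ≠ (m : ℂ) := by
    intro j hj m hm
    have h0n : 0 < n := by omega
    have hik : ((⟨0, h0n⟩ : Fin n) : ℕ) < k := by show 0 < k; omega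
    obtain ⟨bf, hbf⟩ : ∃ bf : Fin n → ℕ, ∀ μ : Fin n, (μ : ℕ) < k → v μ = (bf μ : ℂ) :=
      ⟨fun μ => if h : (μ : ℕ) < k then (hvint μ h).choose else 0,
        fun μ h => by simp only [dif_pos h]; exact (hvint μ h).choose_spec⟩
    apply hnr ⟨0, h0n⟩ j hik hj
      (fun μ => if (μ : ℕ) < k then -(bf μ : ℤ) else if μ = j then -m else 0)
    have key : β + ∑ μ : Fin n, (((if (μ : ℕ) < k then -(bf μ : ℤ) else if μ = j then -m else 0) : ℤ) : ℂ) • aC μ =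
        ∑ μ : Fin n, (v μ + (((if (μ : ℕ) < k then -(bf μ : ℤ) else if μ = j then -m else 0) : ℤ) : ℂ)) • aC μ := by
      rw [← hsum]
      simp [add_smul, Finset.sum_add_distrib]
    rw [key]
    apply Submodule.sum_mem
    intro μ _
    by_cases hμk : (μ : ℕ) < k
    · have hcc : v μ + (((if (μ : ℕ) < k then -(bf μ : ℤ) else if μ = j then -m else 0) : ℤ) : ℂ) = 0 := by
        rw [if_pos hμk, hbf μ hμk]
        push_cast
        ring
      rw [hcc, zero_smul]
      exact Submodule.zero_mem _
    · by_cases hμj : μ = j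
      · subst hμj
        have hcc : v μ + (((if (μ : ℕ) < k then -(bf μ : ℤ) else if μ = μ then -m else 0) : ℤ) : ℂ) = 0 := by
          rw [if_neg hμk, if_pos rfl, hm]
          push_cast
          ring
        rw [hcc, zero_smul]
        exact Submodule.zero_mem _
      · have hμi : μ ≠ (⟨0, h0n⟩ : Fin n) := by
          intro h; rw [h] at hμk; exact hμk hik
        exact Submodule.smul_mem _ _
          (Submodule.subset_span (Set.mem_image_of_mem aC ⟨hμi, hμj⟩))
  have hfk : (Finset.univ.filter (fun μ : Fin n => (μ : ℕ) < k)) =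
      Finset.univ.image (Fin.castLE hkn) := by
    ext μ
    simp only [Finset.mem_filter, Finset.mem_univ, Finset.mem_image, true_and]
    constructor
    · intro h; exact ⟨⟨(μ : ℕ), h⟩, Fin.ext rfl⟩
    · rintro ⟨ν, -, rfl⟩; exact ν.isLt
  have hcardimg : (Finset.univ.image (Fin.castLE hkn) : Finset (Fin n)).card = k := by
    rw [Finset.card_image_of_injective _ (Fin.castLE_injective hkn), Finset.card_univ,
      Fintype.card_fin]
  constructor
  · -- (i) → (ii)
    intro H i hik
    obtain ⟨b, hbv⟩ := hvint i hik
    suffices hb0 : b = 0 by rw [hbv, hb0]; norm_num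
    by_contra hb0
    set T : Finset (Fin n) := Finset.univ.filter (fun μ => (μ : ℕ) < k → μ = i) with hT
    have hcard : Tᶜ.card ≤ k - 1 := by
      have hsub : Tᶜ ⊆ (Finset.univ.image (Fin.castLE hkn)).erase i := by
        intro μ hμ
        simp only [hT, Finset.mem_compl, Finset.mem_filter, Finset.mem_univ, true_and,
          not_forall] at hμ
        obtain ⟨hμk, hμi⟩ := hμ
        rw [Finset.mem_erase]
        exact ⟨hμi, Finset.mem_image.mpr ⟨⟨(μ : ℕ), hμk⟩, Finset.mem_univ _, Fin.ext rfl⟩⟩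
      have hmem : i ∈ Finset.univ.image (Fin.castLE hkn) :=
        Finset.mem_image.mpr ⟨⟨(i : ℕ), hik⟩, Finset.mem_univ _, Fin.ext rfl⟩
      calc Tᶜ.card ≤ ((Finset.univ.image (Fin.castLE hkn)).erase i).card :=
            Finset.card_le_card hsub
        _ = k - 1 := by rw [Finset.card_erase_of_mem hmem, hcardimg]
    have hsets : ({μ : Fin n | μ ∈ T ∧ ∃ m : ℤ, m < 0 ∧
          v μ + (((-1 : ℤ) * ℓs μ : ℤ) : ℂ) = (m : ℂ)} =
        {μ : Fin n | μ ∈ T ∧ ∃ m : ℤ, m < 0 ∧ v μ = (m : ℂ)}) := by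
      ext μ
      simp only [Set.mem_setOf_eq]
      constructor
      · rintro ⟨hμT, m, hm, heq⟩
        exfalso
        by_cases hμk : (μ : ℕ) < k
        · have hμi : μ = i := by
            simp only [hT, Finset.mem_filter, Finset.mem_univ, true_and] at hμT
            exact hμT hμk
          subst hμi
          have hℓsμ : ℓs μ = 1 := by rw [hℓs, if_pos hμk, hℓ1 μ hμk]
          rw [hbv, hℓsμ] at heq
          have : ((b : ℤ) - 1 : ℤ) = m := by
            have h2 : (((b : ℤ) - 1 : ℤ) : ℂ) = (m : ℂ) := by
              push_cast
              push_cast at heq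
              linear_combination heq
            exact_mod_cast h2
          omega
        · have hμk' : k ≤ (μ : ℕ) := by omega
          apply hnint μ hμk' (m - (-1) * ℓs μ)
          push_cast
          push_cast at heq
          linear_combination heq
      · rintro ⟨hμT, m, hm, heq⟩
        exfalso
        by_cases hμk : (μ : ℕ) < k
        · have hμi : μ = i := by
            simp only [hT, Finset.mem_filter, Finset.mem_univ, true_and] at hμT
            exact hμT hμk
          subst hμi
          rw [hbv] at heq
          have : ((b : ℤ) : ℂ) = (m : ℂ) := by push_cast; push_cast at heq; exact heq
          have : (b : ℤ) = m := by exact_mod_cast this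
          omega
        · exact hnint μ (by omega) m heq
    have := H T hcard (-1) hsets
    omega
  · -- (ii) → (i)
    intro hv0 T hcard z hsets
    by_contra hz
    push_neg at hz
    have hex : ∃ i : Fin n, (i : ℕ) < k ∧ i ∈ T := by
      by_contra hno
      push_neg at hno
      have hsub : Finset.univ.filter (fun μ : Fin n => (μ : ℕ) < k) ⊆ Tᶜ := by
        intro μ hμ
        simp only [Finset.mem_filter, Finset.mem_univ, true_and] at hμ
        exact Finset.mem_compl.mpr (hno μ hμ)
      have := Finset.card_le_card hsub
      rw [hfk, hcardimg] at this
      omega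
    obtain ⟨i, hik, hiT⟩ := hex
    have hℓsi : ℓs i = 1 := by rw [hℓs, if_pos hik, hℓ1 i hik]
    have hvi : v i = 0 := hv0 i hik
    have hmemL : i ∈ {μ : Fin n | μ ∈ T ∧ ∃ m : ℤ, m < 0 ∧
        v μ + ((z * ℓs μ : ℤ) : ℂ) = (m : ℂ)} := by
      refine ⟨hiT, z, hz, ?_⟩
      rw [hvi, hℓsi]
      push_cast
      ring
    rw [hsets] at hmemL
    obtain ⟨-, m, hm, heq⟩ := hmemL
    rw [hvi] at heq
    have : m = 0 := by exact_mod_cast heq.symm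
    omega
end
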